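/- arXiv:1707.04726 — 13 statements merged into one kernel-verified Lean document; each statement's English description precedes it below -/
import Mathlib

section
/- Let v and w be weights. There exists a continuous linear operator T : ℓ¹ → ℓ¹ satisfying (T x)(n) = (w(n)/n) · ∑_{k=1}^{n} x(k)/v(k) for every x ∈ ℓ¹ and every n ≥ 1 (equivalently, the Cesàro operator (𝒞x)_n = (1/n)∑_{k=1}^n x_k maps ℓ¹(v) continuously into ℓ¹(w)) if and only if M_{v,w} := sup_{n≥1} (1/v(n)) ∑_{m=n}^∞ w(m)/m < ∞. Moreover, in that case the operator norm of any such T equals M_{v,w}. -/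
/- STATEMENT 0: The Cesàro operator maps ℓ¹(v) continuously into ℓ¹(w) (equivalently, the
transferred operator T exists on ℓ¹) iff M_{v,w} := sup_n (1/v(n)) ∑_{m=n}^∞ w(m)/m < ∞,
and in that case ‖T‖ = M_{v,w}.  Sequences are indexed by `ℕ`, with index `n : ℕ`
corresponding to the paper's index `n+1`. -/

open Filter Topology

noncomputable section

/-- `ℓ¹`, the space of absolutely summable complex sequences. -/
abbrev ellOne : Type := lp (fun _ : ℕ => ℂ) 1

/-- `T` realizes the Cesàro operator from `ℓ¹(v)` to `ℓ¹(w)` in the coordinates of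
`Φ_v`, `Φ_w`:  `(T x)(n) = (w(n)/n) ∑_{k=1}^n x(k)/v(k)` (paper indexing). -/
def IsCesaroOp (v w : ℕ → ℝ) (T : ellOne →L[ℂ] ellOne) : Prop :=
  ∀ (x : ellOne) (n : ℕ),
    (T x : ∀ _ : ℕ, ℂ) n
      = ((w n / (n + 1) : ℝ) : ℂ) * ∑ k ∈ Finset.range (n + 1), (x : ∀ _ : ℕ, ℂ) k / ((v k : ℝ) : ℂ)

/-- `M_{v,w} = sup_n (1/v(n)) ∑_{m=n}^∞ w(m)/m`, computed in `ℝ≥0∞` (paper indexing: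
index `n : ℕ` is the paper's `n+1`). -/
def Mvw (v w : ℕ → ℝ) : ENNReal :=
  ⨆ n : ℕ, ENNReal.ofReal (1 / v n) * ∑' k : ℕ, ENNReal.ofReal (w (n + k) / (n + k + 1))

open scoped ENNReal NNReal

namespace CesaroAux

lemma tsum_ite_ge (g : ℕ → ℝ≥0∞) (k : ℕ) :
    ∑' n, (if k ≤ n then g n else 0) = ∑' j, g (k + j) := by
  have hinj : Function.Injective (fun j : ℕ => k + j) := fun a b h => by simpa using h
  have hsupp : Function.support (fun n => if k ≤ n then g n else 0)
      ⊆ Set.range (fun j : ℕ => k + j) := by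
    intro n hn
    simp only [Function.mem_support, ne_eq, ite_eq_right_iff, not_forall] at hn
    obtain ⟨hkn, -⟩ := hn
    exact ⟨n - k, by simp only []; omega⟩
  rw [← hinj.tsum_eq hsupp]
  exact tsum_congr fun j => if_pos (by omega)

/-- the `k`-th column sum of the matrix, as it appears in `Mvw`. -/
def col (v w : ℕ → ℝ) (k : ℕ) : ℝ≥0∞ :=
  ENNReal.ofReal (1 / v k) * ∑' j : ℕ, ENNReal.ofReal (w (k + j) / (k + j + 1))

lemma col_le_Mvw (v w : ℕ → ℝ) (k : ℕ) : col v w k ≤ Mvw v w :=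
  le_iSup (fun n => ENNReal.ofReal (1 / v n)
    * ∑' j : ℕ, ENNReal.ofReal (w (n + j) / (n + j + 1))) k

lemma col_eq (v w : ℕ → ℝ) (k : ℕ) :
    col v w k
      = (∑' n : ℕ, if k ≤ n then ENNReal.ofReal (w n / (n + 1)) else 0)
          * ENNReal.ofReal (1 / v k) := by
  rw [col, tsum_ite_ge (fun n => ENNReal.ofReal (w n / (n + 1))) k, mul_comm]
  congr 1
  exact tsum_congr fun j => by push_cast; ring_nf

/-- norm of an ℓ¹ element as a tsum. -/
lemma norm_lp_eq (f : ellOne) : ‖f‖ = ∑' n, ‖(f : ∀ _ : ℕ, ℂ) n‖ := by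
  have := lp.norm_eq_tsum_rpow (p := 1) (by norm_num) f
  simpa using this

lemma summable_norm (f : ellOne) : Summable fun n => ‖(f : ∀ _ : ℕ, ℂ) n‖ := by
  have := (lp.memℓp f).summable (p := 1) (by norm_num)
  simpa using this

lemma ofReal_norm_lp (f : ellOne) :
    ENNReal.ofReal ‖f‖ = ∑' n, ENNReal.ofReal ‖(f : ∀ _ : ℕ, ℂ) n‖ := by
  rw [norm_lp_eq]
  exact ENNReal.ofReal_tsum_of_nonneg (fun n => norm_nonneg _) (summable_norm f)

/-- Tonelli bound: the ℓ¹-sum of the Cesàro image is at most `Mvw` times the ℓ¹-sum. -/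
lemma key_bound (v w : ℕ → ℝ) (hv : ∀ n, 0 < v n) (hw : ∀ n, 0 < w n) (x : ℕ → ℂ) :
    (∑' n : ℕ, ENNReal.ofReal
        ‖((w n / (n + 1) : ℝ) : ℂ) * ∑ k ∈ Finset.range (n + 1), x k / ((v k : ℝ) : ℂ)‖)
      ≤ Mvw v w * ∑' k : ℕ, ENNReal.ofReal ‖x k‖ := by
  set A : ℕ → ℕ → ℝ≥0∞ := fun n k =>
    (if k ≤ n then ENNReal.ofReal (w n / (n + 1)) else 0) * ENNReal.ofReal (1 / v k) with hA
  have step1 : ∀ n : ℕ,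
      ENNReal.ofReal ‖((w n / (n + 1) : ℝ) : ℂ)
          * ∑ k ∈ Finset.range (n + 1), x k / ((v k : ℝ) : ℂ)‖
        ≤ ∑' k : ℕ, A n k * ENNReal.ofReal ‖x k‖ := by
    intro n
    have hn : (0:ℝ) ≤ w n / (n + 1) := div_nonneg (hw n).le (by positivity)
    have hterm : ∀ k, (0:ℝ) ≤ w n / (n + 1) * (1 / v k) * ‖x k‖ := fun k =>
      mul_nonneg (mul_nonneg hn (one_div_nonneg.mpr (hv k).le)) (norm_nonneg _)
    have h1 : ‖((w n / (n + 1) : ℝ) : ℂ) * ∑ k ∈ Finset.range (n + 1), x k / ((v k : ℝ) : ℂ)‖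
        ≤ ∑ k ∈ Finset.range (n + 1), (w n / (n + 1)) * (1 / v k) * ‖x k‖ := by
      rw [norm_mul, Complex.norm_real, Real.norm_of_nonneg hn]
      calc (w n / (n + 1)) * ‖∑ k ∈ Finset.range (n + 1), x k / ((v k : ℝ) : ℂ)‖
          ≤ (w n / (n + 1)) * ∑ k ∈ Finset.range (n + 1), (1 / v k) * ‖x k‖ := by
            apply mul_le_mul_of_nonneg_left _ hn
            refine (norm_sum_le _ _).trans ?_
            apply Finset.sum_le_sum
            intro k _
            rw [norm_div, Complex.norm_real, Real.norm_of_nonneg (hv k).le, div_eq_mul_inv,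
              one_div, mul_comm]
        _ = _ := by rw [Finset.mul_sum]; exact Finset.sum_congr rfl fun k _ => by ring
    calc ENNReal.ofReal ‖_‖ ≤ ENNReal.ofReal
          (∑ k ∈ Finset.range (n + 1), (w n / (n + 1)) * (1 / v k) * ‖x k‖) :=
          ENNReal.ofReal_le_ofReal h1
      _ = ∑ k ∈ Finset.range (n + 1), ENNReal.ofReal ((w n / (n + 1)) * (1 / v k) * ‖x k‖) :=
          ENNReal.ofReal_sum_of_nonneg fun k _ => hterm k
      _ = ∑ k ∈ Finset.range (n + 1), A n k * ENNReal.ofReal ‖x k‖ := by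
          refine Finset.sum_congr rfl fun k hk => ?_
          rw [hA]
          simp only [if_pos (by simp at hk; omega : k ≤ n)]
          rw [ENNReal.ofReal_mul (mul_nonneg hn (one_div_nonneg.mpr (hv k).le)),
            ENNReal.ofReal_mul hn]
      _ ≤ ∑' k : ℕ, A n k * ENNReal.ofReal ‖x k‖ := ENNReal.sum_le_tsum _
  calc (∑' n : ℕ, ENNReal.ofReal ‖((w n / (n + 1) : ℝ) : ℂ)
          * ∑ k ∈ Finset.range (n + 1), x k / ((v k : ℝ) : ℂ)‖)
      ≤ ∑' n : ℕ, ∑' k : ℕ, A n k * ENNReal.ofReal ‖x k‖ := ENNReal.tsum_le_tsum step1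
    _ = ∑' k : ℕ, ∑' n : ℕ, A n k * ENNReal.ofReal ‖x k‖ := ENNReal.tsum_comm
    _ = ∑' k : ℕ, (∑' n : ℕ, A n k) * ENNReal.ofReal ‖x k‖ :=
        tsum_congr fun k => by rw [ENNReal.tsum_mul_right]
    _ ≤ ∑' k : ℕ, Mvw v w * ENNReal.ofReal ‖x k‖ := by
        refine ENNReal.tsum_le_tsum fun k => ?_
        refine mul_le_mul_left ?_ _
        have : (∑' n : ℕ, A n k) = col v w k := by
          rw [col_eq, hA, ENNReal.tsum_mul_right]
        rw [this]
        exact col_le_Mvw v w k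
    _ = Mvw v w * ∑' k : ℕ, ENNReal.ofReal ‖x k‖ := ENNReal.tsum_mul_left


lemma lower_bound (v w : ℕ → ℝ) (hv : ∀ n, 0 < v n) (hw : ∀ n, 0 < w n)
    (T : ellOne →L[ℂ] ellOne) (hT : IsCesaroOp v w T) :
    Mvw v w ≤ ENNReal.ofReal ‖T‖ := by
  refine iSup_le fun k => ?_
  set e : ellOne := lp.single 1 k (1 : ℂ) with he
  have hek : ∀ j, (e : ∀ _ : ℕ, ℂ) j = if j = k then 1 else 0 := by
    intro j; rw [he, lp.single_apply]; by_cases h : j = k <;> simp [h]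
  have hnorme : ‖e‖ = 1 := by
    have := lp.norm_single (E := fun _ : ℕ => ℂ) (p := 1) (by norm_num) k (1:ℂ)
    simpa [he] using this
  have hcoord : ∀ n, ‖(T e : ∀ _ : ℕ, ℂ) n‖
      = if k ≤ n then (w n / (n + 1)) * (1 / v k) else 0 := by
    intro n
    rw [hT e n]
    have hsum : ∑ j ∈ Finset.range (n + 1), (e : ∀ _ : ℕ, ℂ) j / ((v j : ℝ) : ℂ)
        = if k ≤ n then (1 : ℂ) / ((v k : ℝ) : ℂ) else 0 := by
      have : ∀ j, (e : ∀ _ : ℕ, ℂ) j / ((v j : ℝ) : ℂ)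
          = if j = k then (1 : ℂ) / ((v k : ℝ) : ℂ) else 0 := by
        intro j; rw [hek j]; by_cases h : j = k <;> simp [h]
      rw [Finset.sum_congr rfl fun j _ => this j, Finset.sum_ite_eq' (Finset.range (n + 1)) k
        (fun _ => (1 : ℂ) / ((v k : ℝ) : ℂ))]
      simp [Nat.lt_succ_iff]
    rw [hsum]
    by_cases h : k ≤ n
    · rw [if_pos h, if_pos h, norm_mul, Complex.norm_real,
        Real.norm_of_nonneg (div_nonneg (hw n).le (by positivity)), norm_div, norm_one,
        Complex.norm_real, Real.norm_of_nonneg (hv k).le]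
    · rw [if_neg h, if_neg h, mul_zero, norm_zero]
  have h1 : ENNReal.ofReal ‖T e‖ = CesaroAux.col v w k := by
    rw [CesaroAux.ofReal_norm_lp, CesaroAux.col_eq]
    rw [← ENNReal.tsum_mul_right]
    refine tsum_congr fun n => ?_
    rw [hcoord n]
    by_cases h : k ≤ n
    · rw [if_pos h, if_pos h,
        ENNReal.ofReal_mul (div_nonneg (hw n).le (by positivity))]
    · rw [if_neg h, if_neg h, ENNReal.ofReal_zero, zero_mul]
  have h2 : ‖T e‖ ≤ ‖T‖ := by
    calc ‖T e‖ ≤ ‖T‖ * ‖e‖ := T.le_opNorm e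
      _ = ‖T‖ := by rw [hnorme, mul_one]
  calc ENNReal.ofReal (1 / v k) * ∑' j : ℕ, ENNReal.ofReal (w (k + j) / (k + j + 1))
      = CesaroAux.col v w k := rfl
    _ = ENNReal.ofReal ‖T e‖ := h1.symm
    _ ≤ ENNReal.ofReal ‖T‖ := ENNReal.ofReal_le_ofReal h2

lemma norm_le_of_coords (v w : ℕ → ℝ) (hv : ∀ n, 0 < v n) (hw : ∀ n, 0 < w n)
    (h : Mvw v w ≠ ⊤) (x z : ellOne)
    (hz : ∀ n, (z : ∀ _ : ℕ, ℂ) n = ((w n / (n + 1) : ℝ) : ℂ)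
        * ∑ k ∈ Finset.range (n + 1), (x : ∀ _ : ℕ, ℂ) k / ((v k : ℝ) : ℂ)) :
    ‖z‖ ≤ (Mvw v w).toReal * ‖x‖ := by
  have hb : ENNReal.ofReal ‖z‖ ≤ ENNReal.ofReal ((Mvw v w).toReal * ‖x‖) := by
    rw [CesaroAux.ofReal_norm_lp]
    calc (∑' n, ENNReal.ofReal ‖(z : ∀ _ : ℕ, ℂ) n‖)
        = ∑' n : ℕ, ENNReal.ofReal ‖((w n / (n + 1) : ℝ) : ℂ)
            * ∑ k ∈ Finset.range (n + 1), (x : ∀ _ : ℕ, ℂ) k / ((v k : ℝ) : ℂ)‖ :=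
          tsum_congr fun n => by rw [hz n]
      _ ≤ Mvw v w * ∑' k : ℕ, ENNReal.ofReal ‖(x : ∀ _ : ℕ, ℂ) k‖ :=
          CesaroAux.key_bound v w hv hw _
      _ = Mvw v w * ENNReal.ofReal ‖x‖ := by rw [← CesaroAux.ofReal_norm_lp]
      _ = ENNReal.ofReal ((Mvw v w).toReal * ‖x‖) := by
          rw [ENNReal.ofReal_mul ENNReal.toReal_nonneg, ENNReal.ofReal_toReal h]
  have hpos : (0:ℝ) ≤ (Mvw v w).toReal * ‖x‖ :=
    mul_nonneg ENNReal.toReal_nonneg (norm_nonneg _)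
  exact (ENNReal.ofReal_le_ofReal_iff hpos).mp hb

lemma exists_T (v w : ℕ → ℝ) (hv : ∀ n, 0 < v n) (hw : ∀ n, 0 < w n) (h : Mvw v w ≠ ⊤) :
    ∃ T : ellOne →L[ℂ] ellOne, IsCesaroOp v w T := by
  set y : ellOne → ℕ → ℂ := fun x n => ((w n / (n + 1) : ℝ) : ℂ)
      * ∑ k ∈ Finset.range (n + 1), (x : ∀ _ : ℕ, ℂ) k / ((v k : ℝ) : ℂ) with hy
  have hmem : ∀ x : ellOne, Memℓp (y x) 1 := by
    intro x
    have hb := CesaroAux.key_bound v w hv hw (x : ∀ _ : ℕ, ℂ)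
    have hfin : (∑' n, ENNReal.ofReal ‖y x n‖) ≠ ⊤ := by
      refine ne_top_of_le_ne_top ?_ hb
      rw [← CesaroAux.ofReal_norm_lp]
      exact ENNReal.mul_ne_top h ENNReal.ofReal_ne_top
    have hs : Summable fun n => ‖y x n‖ := by
      have := ENNReal.summable_toReal hfin
      simpa [ENNReal.toReal_ofReal (norm_nonneg _)] using this
    exact memℓp_gen (by simpa using hs)
  set L : ellOne →ₗ[ℂ] ellOne :=
    { toFun := fun x => ⟨y x, hmem x⟩
      map_add' := by
        intro x z
        ext n
        simp only [hy, lp.coeFn_add, Pi.add_apply]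
        rw [← mul_add, ← Finset.sum_add_distrib]
        congr 1
        exact Finset.sum_congr rfl fun k _ => by rw [add_div]
      map_smul' := by
        intro c x
        ext n
        simp only [hy, lp.coeFn_smul, Pi.smul_apply, RingHom.id_apply, smul_eq_mul]
        have hsum : ∑ k ∈ Finset.range (n + 1), (c * (x : ∀ _ : ℕ, ℂ) k) / ((v k : ℝ) : ℂ)
            = c * ∑ k ∈ Finset.range (n + 1), (x : ∀ _ : ℕ, ℂ) k / ((v k : ℝ) : ℂ) := by
          rw [Finset.mul_sum]
          exact Finset.sum_congr rfl fun k _ => mul_div_assoc c _ _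
        rw [hsum]
        ring } with hL
  have hbound : ∀ x : ellOne, ‖L x‖ ≤ (Mvw v w).toReal * ‖x‖ := by
    intro x
    exact norm_le_of_coords v w hv hw h x (L x) (fun n => rfl)
  refine ⟨L.mkContinuous ((Mvw v w).toReal) hbound, ?_⟩
  intro x n
  rfl

end CesaroAux

theorem cesaro_continuous_iff (v w : ℕ → ℝ)
    (hv : ∀ n, 0 < v n) (hvb : ∃ C, ∀ n, v n ≤ C)
    (hw : ∀ n, 0 < w n) (hwb : ∃ C, ∀ n, w n ≤ C) :
    ((∃ T : ellOne →L[ℂ] ellOne, IsCesaroOp v w T) ↔ Mvw v w ≠ ⊤) ∧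
      ∀ T : ellOne →L[ℂ] ellOne, IsCesaroOp v w T → ‖T‖ = (Mvw v w).toReal := by
  constructor
  · constructor
    · rintro ⟨T, hT⟩
      exact ne_top_of_le_ne_top ENNReal.ofReal_ne_top (CesaroAux.lower_bound v w hv hw T hT)
    · exact fun h => CesaroAux.exists_T v w hv hw h
  · intro T hT
    have h : Mvw v w ≠ ⊤ :=
      ne_top_of_le_ne_top ENNReal.ofReal_ne_top (CesaroAux.lower_bound v w hv hw T hT)
    refine le_antisymm ?_ ?_
    · exact T.opNorm_le_bound ENNReal.toReal_nonneg fun x =>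
        CesaroAux.norm_le_of_coords v w hv hw h x (T x) (hT x)
    · exact ENNReal.toReal_le_of_le_ofReal (norm_nonneg T)
        (CesaroAux.lower_bound v w hv hw T hT)
end
end

section
/- Let v and w be weights with M_{v,w} := sup_{n≥1} (1/v(n)) ∑_{m=n}^∞ w(m)/m < ∞, and let T : ℓ¹ → ℓ¹ be the continuous linear operator satisfying (T x)(n) = (w(n)/n) · ∑_{k=1}^{n} x(k)/v(k) for all x ∈ ℓ¹ and n ≥ 1. Then T is a compact operator if and only if (1/v(n)) ∑_{m=n}^∞ w(m)/m → 0 as n → ∞. -/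
/- STATEMENT 1: If M_{v,w} < ∞ and T is the transferred Cesàro operator on ℓ¹, then T is
compact iff (1/v(n)) ∑_{m=n}^∞ w(m)/m → 0 as n → ∞.  Index `n : ℕ` corresponds to the
paper's `n+1`. -/

open Filter Topology

noncomputable section

namespace CesaroAux

def e (n : ℕ) : ellOne := lp.single 1 n 1

lemma e_apply (n k : ℕ) : (e n : ∀ _ : ℕ, ℂ) k = if k = n then 1 else 0 := by
  by_cases h : k = n
  · subst h; simp [e, lp.single_apply_self]
  · simp [e, lp.single_apply_ne _ _ _ h, h]

lemma norm_e (n : ℕ) : ‖e n‖ = 1 := by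
  have := lp.norm_single (E := fun _ : ℕ => ℂ) (p := 1) (by norm_num) n (1 : ℂ)
  simpa [e] using this

variable {v w : ℕ → ℝ} {T : ellOne →L[ℂ] ellOne}

/-- the real-valued column entries -/
def colR (v w : ℕ → ℝ) (n m : ℕ) : ℝ :=
  if n ≤ m then (1 / v n) * (w m / (m + 1)) else 0

lemma col_apply (hT : IsCesaroOp v w T) (n m : ℕ) :
    (T (e n) : ∀ _ : ℕ, ℂ) m = ((colR v w n m : ℝ) : ℂ) := by
  rw [hT]
  have h1 : ∀ k, (e n : ∀ _ : ℕ, ℂ) k / ((v k : ℝ) : ℂ)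
      = if k = n then 1 / ((v n : ℝ) : ℂ) else 0 := by
    intro k
    rw [e_apply]
    split <;> simp_all
  simp only [h1, Finset.sum_ite_eq' (Finset.range (m + 1)) n, Finset.mem_range,
    Nat.lt_succ_iff]
  unfold colR
  split
  · push_cast; ring
  · simp

lemma hasSum_colR (hv : ∀ n, 0 < v n) (hw : ∀ n, 0 < w n) (hT : IsCesaroOp v w T) (n : ℕ) :
    HasSum (colR v w n) ‖T (e n)‖ := by
  have h := lp.hasSum_norm (p := 1) (by norm_num) (T (e n))
  simp only [ENNReal.toReal_one, Real.rpow_one] at h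
  convert h using 2 with m
  rw [col_apply hT, Complex.norm_real, Real.norm_eq_abs, abs_of_nonneg]
  unfold colR
  split
  · have := (hv n).le
    have := (hw m).le
    positivity
  · exact le_refl 0

end CesaroAux

namespace CesaroAux2
open CesaroAux

variable {v w : ℕ → ℝ} {T : ellOne →L[ℂ] ellOne}

lemma colR_nonneg (hv : ∀ n, 0 < v n) (hw : ∀ n, 0 < w n) (n m : ℕ) :
    0 ≤ colR v w n m := by
  unfold colR
  split
  · have := (hv n).le; have := (hw m).le; positivity
  · exact le_refl 0

lemma ofReal_norm_col (hv : ∀ n, 0 < v n) (hw : ∀ n, 0 < w n) (hT : IsCesaroOp v w T)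
    (n : ℕ) :
    ENNReal.ofReal (1 / v n) * ∑' k : ℕ, ENNReal.ofReal (w (n + k) / (n + k + 1))
      = ENNReal.ofReal ‖T (e n)‖ := by
  have hs := hasSum_colR hv hw hT n
  rw [← hs.tsum_eq, ENNReal.ofReal_tsum_of_nonneg (colR_nonneg hv hw n) hs.summable]
  rw [← Function.Injective.tsum_eq (g := fun k : ℕ => n + k)
      (f := fun m => ENNReal.ofReal (colR v w n m)) (add_right_injective n) ?_]
  · have hc : ∀ k : ℕ, ENNReal.ofReal (colR v w n (n + k))
        = ENNReal.ofReal (1 / v n) * ENNReal.ofReal (w (n + k) / (n + k + 1)) := by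
      intro k
      rw [← ENNReal.ofReal_mul (one_div_nonneg.mpr (hv n).le)]
      congr 1
      unfold colR
      rw [if_pos (Nat.le_add_right n k)]
      push_cast
      ring
    rw [tsum_congr hc, ENNReal.tsum_mul_left]
  · intro m hm
    have hnm : n ≤ m := by
      by_contra h
      simp only [Function.mem_support] at hm
      exact hm (by unfold colR; rw [if_neg h]; simp)
    exact ⟨m - n, show n + (m - n) = m by omega⟩

end CesaroAux2

namespace CesaroAux3
open CesaroAux

variable {v w : ℕ → ℝ} {T : ellOne →L[ℂ] ellOne}

def coordCLM (k : ℕ) : ellOne →L[ℂ] ℂ :=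
  LinearMap.mkContinuous
    { toFun := fun x => (x : ∀ _ : ℕ, ℂ) k
      map_add' := fun x y => by simp [lp.coeFn_add]
      map_smul' := fun c x => by simp [lp.coeFn_smul] }
    1 (fun x => by rw [one_mul]; exact lp.norm_apply_le_norm (p := 1) one_ne_zero x k)

@[simp] lemma coordCLM_apply (k : ℕ) (x : ellOne) :
    coordCLM k x = (x : ∀ _ : ℕ, ℂ) k := rfl

lemma isCompactOperator_smulRight (c : ellOne →L[ℂ] ℂ) (y : ellOne) :
    IsCompactOperator (c.smulRight y) := by
  have h1 : IsCompactOperator (fun t : ℂ => t • y) :=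
    ⟨(fun t : ℂ => t • y) '' Metric.closedBall 0 1,
      (isCompact_closedBall 0 1).image (by fun_prop),
      Filter.mem_of_superset (Metric.closedBall_mem_nhds 0 one_pos)
        (fun t ht => Set.mem_image_of_mem _ ht)⟩
  have h2 := h1.comp_clm c
  exact h2

lemma isCompactOperator_sum {ι : Type*} (s : Finset ι) (f : ι → (ellOne →L[ℂ] ellOne))
    (hf : ∀ i ∈ s, IsCompactOperator (f i)) : IsCompactOperator (∑ i ∈ s, f i) := by
  classical
  induction s using Finset.induction_on with
  | empty =>
      rw [Finset.sum_empty]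
      exact isCompactOperator_zero
  | @insert a s ha ih =>
      rw [Finset.sum_insert ha]
      have h1 := hf a (Finset.mem_insert_self a s)
      have h2 := ih (fun i hi => hf i (Finset.mem_insert_of_mem hi))
      exact h1.add h2

lemma hasSum_T (x : ellOne) :
    HasSum (fun k => (x : ∀ _ : ℕ, ℂ) k • T (e k)) (T x) := by
  have hs : HasSum (fun k => lp.single 1 k ((x : ∀ _ : ℕ, ℂ) k)) x :=
    lp.hasSum_single (by norm_num) x
  have hsingle : ∀ k : ℕ, lp.single 1 k ((x : ∀ _ : ℕ, ℂ) k) = (x : ∀ _ : ℕ, ℂ) k • e k := by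
    intro k
    rw [e, ← lp.single_smul, smul_eq_mul, mul_one]
  have h2 := hs.mapL T
  convert h2 using 2 with k
  rw [hsingle k, map_smul]

end CesaroAux3

namespace CesaroAux4
open CesaroAux CesaroAux3

variable {v w : ℕ → ℝ} {T : ellOne →L[ℂ] ellOne}

lemma compact_of_tendsto (hb : Tendsto (fun n => ‖T (e n)‖) atTop (𝓝 0)) :
    IsCompactOperator T := by
  set S : ℕ → (ellOne →L[ℂ] ellOne) :=
    fun N => ∑ k ∈ Finset.range N, (coordCLM k).smulRight (T (e k)) with hS
  have hScompact : ∀ N, IsCompactOperator (S N) := by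
    intro N
    have h1 := isCompactOperator_sum (Finset.range N)
      (fun k => (coordCLM k).smulRight (T (e k)))
      (fun k _ => isCompactOperator_smulRight _ _)
    have h2 : (⇑(S N) : ellOne → ellOne)
        = ∑ k ∈ Finset.range N, ⇑((coordCLM k).smulRight (T (e k))) :=
      ContinuousLinearMap.coe_sum' _ _
    rw [show (⇑(S N) : ellOne → ellOne)
        = ∑ k ∈ Finset.range N, ⇑((coordCLM k).smulRight (T (e k))) from h2]
    exact h1
  have hSapp : ∀ (N : ℕ) (x : ellOne),
      S N x = ∑ k ∈ Finset.range N, (x : ∀ _ : ℕ, ℂ) k • T (e k) := by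
    intro N x
    simp [hS, ContinuousLinearMap.sum_apply, ContinuousLinearMap.smulRight_apply]
  have key : ∀ (N : ℕ) (ε : ℝ), 0 ≤ ε → (∀ k, N ≤ k → ‖T (e k)‖ ≤ ε) →
      ‖S N - T‖ ≤ ε := by
    intro N ε hε hcol
    refine ContinuousLinearMap.opNorm_le_bound _ hε (fun x => ?_)
    have hxnorm : HasSum (fun k => ‖(x : ∀ _ : ℕ, ℂ) k‖) ‖x‖ := by
      have := lp.hasSum_norm (p := 1) (by norm_num) x
      simpa using this
    have hfx := hasSum_T (T := T) x
    have hfin : HasSum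
        (fun k => if k ∈ Finset.range N then (x : ∀ _ : ℕ, ℂ) k • T (e k) else 0) (S N x) := by
      rw [hSapp]
      have h := hasSum_sum_of_ne_finset_zero (L := SummationFilter.unconditional ℕ) (s := Finset.range N)
        (f := fun k => if k ∈ Finset.range N then (x : ∀ _ : ℕ, ℂ) k • T (e k) else 0)
        (fun b hb => if_neg hb)
      rwa [Finset.sum_congr rfl (fun k hk => if_pos hk)] at h
    have hdiff := hfx.sub hfin
    set g := fun k => (x : ∀ _ : ℕ, ℂ) k • T (e k)
      - (if k ∈ Finset.range N then (x : ∀ _ : ℕ, ℂ) k • T (e k) else 0) with hg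
    have hgle : ∀ k, ‖g k‖ ≤ ε * ‖(x : ∀ _ : ℕ, ℂ) k‖ := by
      intro k
      by_cases hk : k ∈ Finset.range N
      · simp only [hg, if_pos hk, sub_self, norm_zero]
        positivity
      · have hNk : N ≤ k := by simpa [Finset.mem_range, not_lt] using hk
        simp only [hg, if_neg hk, sub_zero, norm_smul]
        calc ‖(x : ∀ _ : ℕ, ℂ) k‖ * ‖T (e k)‖
            ≤ ‖(x : ∀ _ : ℕ, ℂ) k‖ * ε :=
              mul_le_mul_of_nonneg_left (hcol k hNk) (norm_nonneg _)
          _ = ε * ‖(x : ∀ _ : ℕ, ℂ) k‖ := mul_comm _ _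
    have hmaj : Summable (fun k => ε * ‖(x : ∀ _ : ℕ, ℂ) k‖) := hxnorm.summable.mul_left ε
    have hgsum : Summable (fun k => ‖g k‖) :=
      hmaj.of_nonneg_of_le (fun k => norm_nonneg _) hgle
    have h1 : ‖T x - S N x‖ ≤ ∑' k, ‖g k‖ := by
      rw [← hdiff.tsum_eq]
      exact norm_tsum_le_tsum_norm hgsum
    have h2 : ∑' k, ‖g k‖ ≤ ∑' k, ε * ‖(x : ∀ _ : ℕ, ℂ) k‖ := Summable.tsum_le_tsum hgle hgsum hmaj
    have h3 : ∑' k, ε * ‖(x : ∀ _ : ℕ, ℂ) k‖ = ε * ‖x‖ := by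
      rw [tsum_mul_left, hxnorm.tsum_eq]
    calc ‖(S N - T) x‖ = ‖T x - S N x‖ := by
          rw [ContinuousLinearMap.sub_apply, norm_sub_rev]
      _ ≤ ε * ‖x‖ := by linarith
  have htend : Tendsto S atTop (𝓝 T) := by
    rw [Metric.tendsto_atTop]
    intro ε hε
    obtain ⟨N₀, hN₀⟩ := Metric.tendsto_atTop.mp hb (ε / 2) (by linarith)
    refine ⟨N₀, fun N hN => ?_⟩
    have hcol : ∀ k, N ≤ k → ‖T (e k)‖ ≤ ε / 2 := by
      intro k hk
      have h := hN₀ k (le_trans hN hk)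
      rw [dist_zero_right, Real.norm_eq_abs, abs_of_nonneg (norm_nonneg _)] at h
      linarith
    have hb2 := key N (ε / 2) (by linarith) hcol
    rw [dist_eq_norm]
    linarith
  exact isCompactOperator_of_tendsto htend (Filter.Eventually.of_forall hScompact)

lemma norm_col_tendsto_of_compact (hv : ∀ n, 0 < v n) (hw : ∀ n, 0 < w n)
    (hT : IsCesaroOp v w T) (hC : IsCompactOperator T) :
    Tendsto (fun n => ‖T (e n)‖) atTop (𝓝 0) := by
  obtain ⟨K, hK, hKmem⟩ := hC
  obtain ⟨ε, hε, hball⟩ := Metric.mem_nhds_iff.mp hKmem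
  set r : ℝ := ε / 2 with hr
  have hr0 : 0 < r := by positivity
  have hmem : ∀ n, T ((r : ℂ) • e n) ∈ K := by
    intro n
    apply hball
    rw [Metric.mem_ball, dist_zero_right]
    have : ‖(r : ℂ) • e n‖ = r := by
      rw [norm_smul, norm_e, Complex.norm_real, Real.norm_eq_abs, abs_of_pos hr0, mul_one]
    rw [this]
    linarith
  have hT0 : Tendsto (fun n => T ((r : ℂ) • e n)) atTop (𝓝 0) := by
    apply Filter.tendsto_of_subseq_tendsto
    intro ns hns
    obtain ⟨z, hzK, φ, hφ, hconv⟩ := hK.tendsto_subseq (fun j => hmem (ns j))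
    refine ⟨φ, ?_⟩
    suffices hz : z = 0 by rwa [hz] at hconv
    have hcoord : ∀ m : ℕ, Tendsto (fun j => (T ((r : ℂ) • e (ns (φ j))) : ∀ _ : ℕ, ℂ) m)
        atTop (𝓝 ((z : ∀ _ : ℕ, ℂ) m)) := by
      intro m
      rw [tendsto_iff_norm_sub_tendsto_zero]
      have h2 : Tendsto (fun j => ‖T ((r : ℂ) • e (ns (φ j))) - z‖) atTop (𝓝 0) := by
        exact tendsto_iff_norm_sub_tendsto_zero.mp hconv
      apply squeeze_zero (fun j => norm_nonneg _) (fun j => ?_) h2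
      have := lp.norm_apply_le_norm (p := 1) one_ne_zero (T ((r : ℂ) • e (ns (φ j))) - z) m
      exact this
    have hns' : Tendsto (fun j => ns (φ j)) atTop atTop := hns.comp hφ.tendsto_atTop
    have hzero : ∀ m, (z : ∀ _ : ℕ, ℂ) m = 0 := by
      intro m
      have hev : ∀ᶠ j in atTop, (T ((r : ℂ) • e (ns (φ j))) : ∀ _ : ℕ, ℂ) m = 0 := by
        filter_upwards [hns'.eventually_ge_atTop (m + 1)] with j hj
        have hmap : T ((r : ℂ) • e (ns (φ j))) = (r : ℂ) • T (e (ns (φ j))) := map_smul _ _ _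
        rw [hmap, lp.coeFn_smul, Pi.smul_apply, col_apply hT]
        have hnot : ¬ (ns (φ j) ≤ m) := by omega
        simp [colR, hnot]
      have h0 : Tendsto (fun j => (T ((r : ℂ) • e (ns (φ j))) : ∀ _ : ℕ, ℂ) m) atTop (𝓝 0) :=
        Tendsto.congr' (EventuallyEq.symm hev) tendsto_const_nhds
      exact tendsto_nhds_unique (hcoord m) h0
    apply lp.ext
    funext m
    rw [hzero m]
    simp
  have hnorm : Tendsto (fun n => ‖T ((r : ℂ) • e n)‖) atTop (𝓝 0) :=
    tendsto_zero_iff_norm_tendsto_zero.mp hT0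
  have heq : ∀ n, ‖T ((r : ℂ) • e n)‖ = r * ‖T (e n)‖ := by
    intro n
    rw [map_smul, norm_smul, Complex.norm_real, Real.norm_eq_abs, abs_of_pos hr0]
  have := hnorm.const_mul r⁻¹
  rw [mul_zero] at this
  refine this.congr (fun n => ?_)
  rw [heq n]
  field_simp

end CesaroAux4

theorem cesaro_compact_iff' (v w : ℕ → ℝ)
    (hv : ∀ n, 0 < v n) (hvb : ∃ C, ∀ n, v n ≤ C)
    (hw : ∀ n, 0 < w n) (hwb : ∃ C, ∀ n, w n ≤ C)
    (T : ellOne →L[ℂ] ellOne) (hT : IsCesaroOp v w T) :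
    IsCompactOperator T ↔
      Tendsto (fun n : ℕ =>
          ENNReal.ofReal (1 / v n) * ∑' k : ℕ, ENNReal.ofReal (w (n + k) / (n + k + 1)))
        atTop (nhds 0) := by
  have hA : ∀ n : ℕ,
      ENNReal.ofReal (1 / v n) * ∑' k : ℕ, ENNReal.ofReal (w (n + k) / (n + k + 1))
        = ENNReal.ofReal ‖T (CesaroAux.e n)‖ :=
    CesaroAux2.ofReal_norm_col hv hw hT
  constructor
  · intro hC
    have hb := CesaroAux4.norm_col_tendsto_of_compact hv hw hT hC
    have h2 := (ENNReal.continuous_ofReal.tendsto 0).comp hb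
    simp only [Function.comp_def, ENNReal.ofReal_zero] at h2
    simpa only [hA] using h2
  · intro hA0
    have h1 : Tendsto (fun n => ENNReal.ofReal ‖T (CesaroAux.e n)‖) atTop (𝓝 0) := by
      simpa only [hA] using hA0
    have h2 := (ENNReal.tendsto_toReal (a := 0) (by simp)).comp h1
    simp only [Function.comp_def, ENNReal.toReal_zero] at h2
    have hb : Tendsto (fun n => ‖T (CesaroAux.e n)‖) atTop (𝓝 0) := by
      refine h2.congr (fun n => ?_)
      rw [ENNReal.toReal_ofReal (norm_nonneg _)]
    exact CesaroAux4.compact_of_tendsto hb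

theorem cesaro_compact_iff (v w : ℕ → ℝ)
    (hv : ∀ n, 0 < v n) (hvb : ∃ C, ∀ n, v n ≤ C)
    (hw : ∀ n, 0 < w n) (hwb : ∃ C, ∀ n, w n ≤ C)
    (hM : Mvw v w ≠ ⊤)
    (T : ellOne →L[ℂ] ellOne) (hT : IsCesaroOp v w T) :
    IsCompactOperator T ↔
      Tendsto (fun n : ℕ =>
          ENNReal.ofReal (1 / v n) * ∑' k : ℕ, ENNReal.ofReal (w (n + k) / (n + k + 1)))
        atTop (nhds 0) := by
  exact cesaro_compact_iff' v w hv hvb hw hwb T hT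
end
end

section
/- Let v be a bounded real sequence with v(n) > 0 for all n ≥ 1 and inf_{n≥1} v(n) = 0. Then there exists a decreasing sequence w with 0 < w(n) ≤ v(n) for all n, with w(n) → 0 as n → ∞, such that sup_{n≥1} (1/w(n)) ∑_{m=n}^∞ w(m)/m = ∞ (so, by the continuity criterion, the Cesàro operator does not map ℓ¹(w) into itself). -/
/- STATEMENT 2: If v is a bounded strictly positive sequence with infimum 0, then there is a
decreasing strictly positive w ≤ v tending to 0 with
sup_n (1/w(n)) ∑_{m=n}^∞ w(m)/m = ∞ (so the Cesàro operator does not act in ℓ¹(w)).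
Index `n : ℕ` corresponds to the paper's `n+1`. -/

open Filter Topology

noncomputable section

/-- Partial sums of the harmonic series. -/
def Hsum (N : ℕ) : ℝ := ∑ i ∈ Finset.range N, (1 / (i + 1) : ℝ)

lemma Hsum_exists (a : ℕ) (x : ℝ) : ∃ N, a < N ∧ x ≤ Hsum N := by
  have h := Real.tendsto_sum_range_one_div_nat_succ_atTop
  have h1 : ∀ᶠ N in atTop, x ≤ Hsum N := h.eventually_ge_atTop x
  have h2 : ∀ᶠ N in atTop, a < N := eventually_gt_atTop a
  obtain ⟨N, hN1, hN2⟩ := (h2.and h1).exists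
  exact ⟨N, hN1, hN2⟩

theorem exists_decreasing_weight_cesaro_not_acting (v : ℕ → ℝ)
    (hv : ∀ n, 0 < v n) (hvb : ∃ C, ∀ n, v n ≤ C) (hinf : ⨅ n, v n = 0) :
    ∃ w : ℕ → ℝ, (∀ n, 0 < w n) ∧ (∀ n, w n ≤ v n) ∧ Antitone w ∧
      Tendsto w atTop (nhds 0) ∧ Mvw w w = ⊤ := by
  classical
  choose f hf1 hf2 using Hsum_exists
  -- the block boundaries
  set n : ℕ → ℕ := fun j => Nat.rec 0 (fun j nj => f nj (Hsum nj + (j + 1))) j with hn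
  have hn0 : n 0 = 0 := rfl
  have hnlt : ∀ j, n j < n (j + 1) := fun j => hf1 _ _
  have hnH : ∀ j, Hsum (n j) + (j + 1) ≤ Hsum (n (j + 1)) := fun j => hf2 _ _
  have hnmono : StrictMono n := strictMono_nat_of_lt_succ hnlt
  have hnpos : ∀ j, 0 < n (j + 1) := fun j => Nat.lt_of_le_of_lt (Nat.zero_le _) (hnlt j)
  have hne : ∀ j, (Finset.range (n (j + 1))).Nonempty :=
    fun j => Finset.nonempty_range_iff.mpr (hnpos j).ne'
  -- the block values
  set c : ℕ → ℝ := fun j => min ((Finset.range (n (j + 1))).inf' (hne j) v) (1 / (j + 1))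
    with hc
  have hcpos : ∀ j, 0 < c j := by
    intro j
    apply lt_min
    · obtain ⟨i, hi, hieq⟩ := Finset.exists_mem_eq_inf' (hne j) v
      rw [hieq]; exact hv i
    · positivity
  have hcanti : Antitone c := by
    intro a b hab
    apply min_le_min
    · exact Finset.inf'_mono v
        (Finset.range_subset_range.mpr (hnmono.monotone (Nat.add_le_add_right hab 1))) _
    · apply one_div_le_one_div_of_le
      · positivity
      · have : (a : ℝ) ≤ b := Nat.cast_le.mpr hab
        linarith
  have hcle : ∀ j m, m < n (j + 1) → c j ≤ v m := fun j m hm =>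
    le_trans (min_le_left _ _) (Finset.inf'_le v (Finset.mem_range.mpr hm))
  have hcbd : ∀ j, c j ≤ 1 / (j + 1) := fun j => min_le_right _ _
  -- the block index
  set idx : ℕ → ℕ := fun m => Nat.findGreatest (fun j => n j ≤ m) m with hidx
  have hjlen : ∀ j, j ≤ n j := fun j => hnmono.le_apply
  have hidx_le : ∀ m, n (idx m) ≤ m := fun m =>
    Nat.findGreatest_spec (P := fun j => n j ≤ m) (Nat.zero_le m)
      (hn0 ▸ Nat.zero_le m)
  have hidx_ge : ∀ j m, n j ≤ m → j ≤ idx m := fun j m h =>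
    Nat.le_findGreatest ((hjlen j).trans h) h
  have hidx_lt : ∀ m, m < n (idx m + 1) := by
    intro m
    by_contra h
    push_neg at h
    exact Nat.findGreatest_is_greatest (P := fun j => n j ≤ m) (Nat.lt_succ_self _)
      ((hjlen _).trans h) h
  have hidx_mono : Monotone idx := fun a b hab =>
    hidx_ge (idx a) b ((hidx_le a).trans hab)
  have hblock : ∀ j m, n j ≤ m → m < n (j + 1) → idx m = j := by
    intro j m h1 h2
    have l := hidx_ge j m h1
    have u : idx m ≤ j := by
      by_contra h
      push_neg at h
      have h' : j + 1 ≤ idx m := h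
      have h3 : n (j + 1) ≤ m := le_trans (hnmono.monotone h') (hidx_le m)
      omega
    omega
  -- the weight
  refine ⟨fun m => c (idx m), fun m => hcpos _, fun m => hcle _ m (hidx_lt m),
    fun a b hab => hcanti (hidx_mono hab), ?_, ?_⟩
  · -- tendsto 0
    have hidx_top : Tendsto idx atTop atTop := by
      apply tendsto_atTop_atTop.mpr
      intro b
      exact ⟨n b, fun m hm => hidx_ge b m hm⟩
    have hub : Tendsto (fun m => 1 / ((idx m : ℝ) + 1)) atTop (nhds 0) :=
      tendsto_one_div_add_atTop_nhds_zero_nat.comp hidx_top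
    refine squeeze_zero (fun m => (hcpos _).le) (fun m => hcbd _) hub
  · -- Mvw = ⊤
    rw [eq_top_iff, ← ENNReal.iSup_natCast]
    apply iSup_le
    intro j
    have hNj : idx (n j) = j := hblock j (n j) le_rfl (hnlt j)
    set N := n j with hN
    set L := n (j + 1) - N with hL
    have hNL : N + L = n (j + 1) := by
      have := (hnlt j).le; omega
    set T : ℝ := ∑ k ∈ Finset.range L, (1 / ((N : ℝ) + k + 1)) with hT
    have hTH : Hsum N + T = Hsum (n j + L) := by
      rw [Hsum, Hsum, Finset.sum_range_add]
      congr 1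
      apply Finset.sum_congr rfl
      intro k _
      push_cast
      rw [hN]
    have hTge : (j : ℝ) + 1 ≤ T := by
      have := hnH j
      rw [← hNL] at this
      have h2 := hTH
      nlinarith [h2]
    -- lower bound the tsum
    have hwkey : ∀ k < L, c (idx (N + k)) = c j := by
      intro k hk
      rw [hblock j (N + k) (Nat.le_add_right _ _) (by omega)]
    have hsum_le : ENNReal.ofReal (c j * T) ≤
        ∑' k : ℕ, ENNReal.ofReal (c (idx (N + k)) / (N + k + 1)) := by
      refine le_trans ?_ (ENNReal.sum_le_tsum (Finset.range L))
      rw [← ENNReal.ofReal_sum_of_nonneg (fun k _ => by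
        have := hcpos (idx (N + k)); positivity)]
      apply ENNReal.ofReal_le_ofReal
      rw [hT, Finset.mul_sum]
      apply le_of_eq
      apply Finset.sum_congr rfl
      intro k hk
      rw [hwkey k (Finset.mem_range.mp hk)]
      ring
    have key : ENNReal.ofReal T ≤ ENNReal.ofReal (1 / c (idx N)) *
        ∑' k : ℕ, ENNReal.ofReal (c (idx (N + k)) / (N + k + 1)) := by
      rw [hNj]
      calc ENNReal.ofReal T = ENNReal.ofReal ((1 / c j) * (c j * T)) := by
            rw [← mul_assoc, one_div_mul_cancel (hcpos j).ne', one_mul]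
        _ = ENNReal.ofReal (1 / c j) * ENNReal.ofReal (c j * T) := by
            rw [ENNReal.ofReal_mul (one_div_nonneg.mpr (hcpos j).le)]
        _ ≤ _ := by
            exact mul_le_mul_right hsum_le _
    calc (j : ENNReal) = ENNReal.ofReal (j : ℝ) := (ENNReal.ofReal_natCast j).symm
      _ ≤ ENNReal.ofReal T := ENNReal.ofReal_le_ofReal (by linarith)
      _ ≤ ENNReal.ofReal (1 / c (idx N)) *
            ∑' k : ℕ, ENNReal.ofReal (c (idx (N + k)) / (N + k + 1)) := key
      _ ≤ Mvw (fun m => c (idx m)) (fun m => c (idx m)) := le_iSup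
            (fun N => ENNReal.ofReal (1 / c (idx N)) *
              ∑' k : ℕ, ENNReal.ofReal (c (idx (N + k)) / (N + k + 1))) N
end
end

section
/- Let v be a bounded real sequence with v(n) > 0 for all n ≥ 1 and inf_{n≥1} v(n) = 0. Then there exists a decreasing sequence u with 0 < u(n) ≤ v(n) for all n such that lim_{n→∞} (1/u(n)) ∑_{m=n}^∞ u(m)/m = 0 (so, by the compactness criterion, the Cesàro operator is a compact operator on ℓ¹(u)). -/
/- STATEMENT 3: If v is a bounded strictly positive sequence with infimum 0, then there is a
decreasing strictly positive u ≤ v with (1/u(n)) ∑_{m=n}^∞ u(m)/m → 0 (so the Cesàro operator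
is compact on ℓ¹(u)).  Index `n : ℕ` corresponds to the paper's `n+1`. -/

open Filter Topology

noncomputable section

theorem exists_decreasing_weight_cesaro_compact (v : ℕ → ℝ)
    (hv : ∀ n, 0 < v n) (hvb : ∃ C, ∀ n, v n ≤ C) (hinf : ⨅ n, v n = 0) :
    ∃ u : ℕ → ℝ, (∀ n, 0 < u n) ∧ (∀ n, u n ≤ v n) ∧ Antitone u ∧
      Tendsto (fun n : ℕ =>
          ENNReal.ofReal (1 / u n) * ∑' k : ℕ, ENNReal.ofReal (u (n + k) / (n + k + 1)))
        atTop (nhds 0) := by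
  classical
  set u : ℕ → ℝ := fun n => ∏ k ∈ Finset.range (n + 1), (min (v k) 1 / 2) with hu
  have hfacpos : ∀ k, 0 < min (v k) 1 / 2 := fun k =>
    div_pos (lt_min (hv k) one_pos) two_pos
  have hfacle : ∀ k, min (v k) 1 / 2 ≤ 1 / 2 := fun k => by
    have := min_le_right (v k) 1
    linarith
  have hupos : ∀ n, 0 < u n := fun n =>
    Finset.prod_pos fun k _ => hfacpos k
  have hsucc : ∀ n, u (n + 1) = u n * (min (v (n + 1)) 1 / 2) := fun n =>
    Finset.prod_range_succ _ _
  have hanti : Antitone u := by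
    apply antitone_nat_of_succ_le
    intro n
    rw [hsucc]
    nlinarith [hupos n, hfacle (n + 1), hfacpos (n + 1)]
  have hule : ∀ n, u n ≤ v n := by
    intro n
    have h1 : u n = (∏ k ∈ Finset.range n, (min (v k) 1 / 2)) * (min (v n) 1 / 2) :=
      Finset.prod_range_succ _ _
    have h2 : (∏ k ∈ Finset.range n, (min (v k) 1 / 2)) ≤ 1 :=
      Finset.prod_le_one (fun k _ => (hfacpos k).le) (fun k _ => by linarith [hfacle k])
    have h3 : min (v n) 1 / 2 ≤ v n := by
      have := min_le_left (v n) 1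
      have := hv n
      linarith
    have h4 : 0 < min (v n) 1 / 2 := hfacpos n
    nlinarith
  have hkey : ∀ n k, u (n + k) ≤ u n * (1 / 2 : ℝ) ^ k := by
    intro n k
    induction k with
    | zero => simp
    | succ k ih =>
      have h1 : u (n + (k + 1)) = u (n + k) * (min (v (n + k + 1)) 1 / 2) := by
        rw [show n + (k + 1) = (n + k) + 1 by ring]; exact hsucc (n + k)
      rw [h1, pow_succ]
      have := hupos (n + k)
      have := hfacpos (n + k + 1)
      have := hfacle (n + k + 1)
      nlinarith [hupos n, pow_pos (by norm_num : (0:ℝ) < 1/2) k]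
  refine ⟨u, hupos, hule, hanti, ?_⟩
  -- Bound the whole expression by 2 / (n+1)
  have hbound : ∀ n : ℕ,
      ENNReal.ofReal (1 / u n) * ∑' k : ℕ, ENNReal.ofReal (u (n + k) / (n + k + 1))
        ≤ ENNReal.ofReal (1 / (n + 1 : ℝ)) * 2 := by
    intro n
    have hsum : (∑' k : ℕ, ENNReal.ofReal (u (n + k) / (n + k + 1)))
        ≤ ENNReal.ofReal (u n / (n + 1 : ℝ)) * 2 := by
      have hterm : ∀ k : ℕ, ENNReal.ofReal (u (n + k) / (n + k + 1))
          ≤ ENNReal.ofReal (u n / (n + 1 : ℝ)) * ENNReal.ofReal ((1 / 2 : ℝ) ^ k) := by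
        intro k
        rw [← ENNReal.ofReal_mul (div_nonneg (hupos n).le (by positivity))]
        apply ENNReal.ofReal_le_ofReal
        have hd1 : (0:ℝ) < (n : ℝ) + 1 := by positivity
        have hd2 : ((n : ℝ) + 1) ≤ (n : ℝ) + (k : ℝ) + 1 := by
          have : (0:ℝ) ≤ (k : ℝ) := Nat.cast_nonneg k
          linarith
        calc u (n + k) / ((n : ℝ) + (k : ℝ) + 1)
            ≤ (u n * (1/2:ℝ)^k) / ((n:ℝ) + 1) :=
              div_le_div₀ (mul_nonneg (hupos n).le (by positivity)) (hkey n k) hd1 hd2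
          _ = u n / ((n:ℝ) + 1) * (1/2:ℝ)^k := by ring
      calc (∑' k : ℕ, ENNReal.ofReal (u (n + k) / (n + k + 1)))
          ≤ ∑' k : ℕ, ENNReal.ofReal (u n / (n + 1 : ℝ)) * ENNReal.ofReal ((1 / 2 : ℝ) ^ k) :=
            ENNReal.tsum_le_tsum hterm
        _ = ENNReal.ofReal (u n / (n + 1 : ℝ)) * ∑' k : ℕ, ENNReal.ofReal ((1 / 2 : ℝ) ^ k) :=
            ENNReal.tsum_mul_left
        _ ≤ ENNReal.ofReal (u n / (n + 1 : ℝ)) * 2 := by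
            gcongr
            have : ∀ k : ℕ, ENNReal.ofReal ((1 / 2 : ℝ) ^ k) = (ENNReal.ofReal (1/2 : ℝ)) ^ k :=
              fun k => ENNReal.ofReal_pow (by norm_num) k
            simp_rw [this]
            rw [ENNReal.tsum_geometric]
            have h12 : ENNReal.ofReal (1/2 : ℝ) = 2⁻¹ := by
              rw [one_div, ENNReal.ofReal_inv_of_pos (by norm_num)]
              norm_num
            rw [h12]
            rw [ENNReal.one_sub_inv_two]
            simp
    calc ENNReal.ofReal (1 / u n) * ∑' k : ℕ, ENNReal.ofReal (u (n + k) / (n + k + 1))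
        ≤ ENNReal.ofReal (1 / u n) * (ENNReal.ofReal (u n / (n + 1 : ℝ)) * 2) := by gcongr
      _ = (ENNReal.ofReal (1 / u n) * ENNReal.ofReal (u n / (n + 1 : ℝ))) * 2 := by ring
      _ = ENNReal.ofReal (1 / (n + 1 : ℝ)) * 2 := by
          rw [← ENNReal.ofReal_mul (div_nonneg zero_le_one (hupos n).le)]
          congr 1
          have h := (hupos n).ne'
          field_simp
  have hg : Tendsto (fun n : ℕ => ENNReal.ofReal (1 / (n + 1 : ℝ)) * 2) atTop (nhds 0) := by
    have h1 : Tendsto (fun n : ℕ => (1 / (n + 1 : ℝ))) atTop (nhds 0) :=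
      tendsto_one_div_add_atTop_nhds_zero_nat
    have h2 : Tendsto (fun n : ℕ => ENNReal.ofReal (1 / (n + 1 : ℝ))) atTop (nhds 0) := by
      have := (ENNReal.tendsto_ofReal h1)
      simpa using this
    have := ENNReal.Tendsto.mul_const h2 (Or.inr (ENNReal.ofNat_ne_top (n := 2)))
    simpa using this
  exact tendsto_of_tendsto_of_tendsto_of_le_of_le tendsto_const_nhds hg
    (fun n => zero_le) hbound
end
end

section
/- Let w be a weight such that limsup_{n→∞} w(n+1)/w(n) < 1. Then lim_{n→∞} (1/w(n)) ∑_{m=n}^∞ w(m)/m = 0; in particular, by the compactness criterion, the Cesàro operator is a compact operator on ℓ¹(w). -/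
/- STATEMENT 4: If w is a weight with limsup w(n+1)/w(n) < 1 then
(1/w(n)) ∑_{m=n}^∞ w(m)/m → 0 as n → ∞ (hence the Cesàro operator is compact on ℓ¹(w)).
The limsup is taken in ℝ≥0∞ (the ratios are positive) so that it is always well defined.
Index `n : ℕ` corresponds to the paper's `n+1`. -/

open Filter Topology

noncomputable section

theorem cesaro_compact_of_limsup_ratio_lt_one (w : ℕ → ℝ)
    (hw : ∀ n, 0 < w n) (hwb : ∃ C, ∀ n, w n ≤ C)
    (hratio : Filter.limsup (fun n : ℕ => ENNReal.ofReal (w (n + 1) / w n)) atTop < 1) :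
    Tendsto (fun n : ℕ =>
        ENNReal.ofReal (1 / w n) * ∑' k : ℕ, ENNReal.ofReal (w (n + k) / (n + k + 1)))
      atTop (nhds 0) := by
  obtain ⟨c, hc1, hc2⟩ := exists_between hratio
  have hcT : c ≠ ⊤ := (hc2.trans_le le_top).ne
  set ρ : ℝ := c.toReal with hρdef
  have hρ0 : 0 ≤ ρ := ENNReal.toReal_nonneg
  have hρ1 : ρ < 1 := by
    have := (ENNReal.toReal_lt_toReal hcT (by norm_num)).2 hc2
    simpa using this
  have hcρ : c = ENNReal.ofReal ρ := (ENNReal.ofReal_toReal hcT).symm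
  -- eventual ratio bound
  have hev : ∀ᶠ n in atTop, w (n + 1) ≤ ρ * w n := by
    filter_upwards [Filter.eventually_lt_of_limsup_lt hc1] with n hn
    rw [hcρ] at hn
    have h1 : w (n + 1) / w n < ρ := by
      by_contra h
      push_neg at h
      exact absurd (ENNReal.ofReal_le_ofReal h) hn.not_ge
    have := (div_lt_iff₀ (hw n)).1 h1
    linarith
  obtain ⟨N, hN⟩ := eventually_atTop.1 hev
  -- geometric decay
  have key : ∀ n ≥ N, ∀ k : ℕ, w (n + k) ≤ ρ ^ k * w n := by
    intro n hn k
    induction k with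
    | zero => simp
    | succ k ih =>
      have h1 : w (n + k + 1) ≤ ρ * w (n + k) := hN (n + k) (le_trans hn (Nat.le_add_right n k))
      calc w (n + (k + 1)) = w (n + k + 1) := by ring_nf
        _ ≤ ρ * w (n + k) := h1
        _ ≤ ρ * (ρ ^ k * w n) := by
            exact mul_le_mul_of_nonneg_left ih hρ0
        _ = ρ ^ (k + 1) * w n := by ring
  set r : ENNReal := ENNReal.ofReal ρ with hr
  have hr1 : r < 1 := by
    rw [hr, ← ENNReal.ofReal_one]
    exact ENNReal.ofReal_lt_ofReal_iff_of_nonneg hρ0 |>.2 hρ1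
  have hrT : (1 - r)⁻¹ ≠ ⊤ := by
    simp [ENNReal.inv_ne_top, tsub_eq_zero_iff_le, hr1.not_ge]
  -- upper bound function
  have hub : ∀ n ≥ N,
      ENNReal.ofReal (1 / w n) * ∑' k : ℕ, ENNReal.ofReal (w (n + k) / (n + k + 1))
        ≤ (1 - r)⁻¹ * ENNReal.ofReal (1 / (n + 1)) := by
    intro n hn
    have hsum : ∑' k : ℕ, ENNReal.ofReal (w (n + k) / (n + k + 1))
        ≤ (1 - r)⁻¹ * ENNReal.ofReal (w n / (n + 1)) := by
      rw [← ENNReal.tsum_geometric r, ← ENNReal.tsum_mul_right]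
      refine ENNReal.tsum_le_tsum fun k => ?_
      have hk1 : (0:ℝ) < n + 1 := by positivity
      have hk2 : (n:ℝ) + 1 ≤ (n:ℝ) + k + 1 := by
        have : (0:ℝ) ≤ k := Nat.cast_nonneg k
        linarith
      have h1 : w (n + k) / ((n:ℝ) + k + 1) ≤ w (n + k) / ((n:ℝ) + 1) :=
        div_le_div_of_nonneg_left (hw _).le hk1 hk2
      have h2 : w (n + k) / ((n:ℝ) + 1) ≤ ρ ^ k * (w n / ((n:ℝ) + 1)) := by
        rw [mul_div_assoc']
        exact div_le_div_of_nonneg_right (key n hn k) hk1.le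
      calc ENNReal.ofReal (w (n + k) / ((n:ℝ) + k + 1))
          ≤ ENNReal.ofReal (ρ ^ k * (w n / ((n:ℝ) + 1))) :=
            ENNReal.ofReal_le_ofReal (h1.trans h2)
        _ = r ^ k * ENNReal.ofReal (w n / ((n:ℝ) + 1)) := by
            rw [ENNReal.ofReal_mul (by positivity), hr, ENNReal.ofReal_pow hρ0]
    calc ENNReal.ofReal (1 / w n) * ∑' k : ℕ, ENNReal.ofReal (w (n + k) / (n + k + 1))
        ≤ ENNReal.ofReal (1 / w n) * ((1 - r)⁻¹ * ENNReal.ofReal (w n / (n + 1))) :=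
          mul_le_mul_right hsum _
      _ = (1 - r)⁻¹ * (ENNReal.ofReal (1 / w n) * ENNReal.ofReal (w n / (n + 1))) := by ring
      _ = (1 - r)⁻¹ * ENNReal.ofReal (1 / (n + 1)) := by
          rw [← ENNReal.ofReal_mul (one_div_nonneg.2 (hw n).le)]
          congr 1
          have hwn : w n ≠ 0 := (hw n).ne'
          field_simp
  -- the upper bound tends to 0
  have hg : Tendsto (fun n : ℕ => (1 - r)⁻¹ * ENNReal.ofReal (1 / (n + 1))) atTop (nhds 0) := by
    have h0 : Tendsto (fun n : ℕ => ENNReal.ofReal (1 / (n + 1))) atTop (nhds 0) := by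
      rw [← ENNReal.ofReal_zero]
      exact (ENNReal.tendsto_ofReal (tendsto_one_div_add_atTop_nhds_zero_nat))
    have := ENNReal.Tendsto.const_mul h0 (Or.inr hrT)
    simpa using this
  refine tendsto_of_tendsto_of_tendsto_of_le_of_le' tendsto_const_nhds hg
    (Eventually.of_forall fun n => zero_le) (eventually_atTop.2 ⟨N, hub⟩)
end
end

section
/- Let v and w be weights such that the sequence (v(n)/w(n))_{n≥n₀} is decreasing for some n₀ ∈ ℕ. Then: (i) if sup_{n≥1} (1/w(n)) ∑_{m=n}^∞ w(m)/m < ∞, then sup_{n≥1} (1/v(n)) ∑_{m=n}^∞ v(m)/m < ∞ (continuity of the Cesàro operator on ℓ¹(w) transfers to ℓ¹(v)); (ii) if (1/w(n)) ∑_{m=n}^∞ w(m)/m → 0 as n → ∞, then (1/v(n)) ∑_{m=n}^∞ v(m)/m → 0 as n → ∞ (compactness transfers as well). -/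
/- STATEMENT 5: Comparison result: if (v(n)/w(n)) is eventually decreasing then continuity
(resp. compactness) of the Cesàro operator on ℓ¹(w) transfers to ℓ¹(v), expressed through
the criteria M_w < ∞ resp. tail quantities → 0.  Index `n : ℕ` is the paper's `n+1`. -/

open Filter Topology

noncomputable section

theorem cesaro_comparison (v w : ℕ → ℝ)
    (hv : ∀ n, 0 < v n) (hvb : ∃ C, ∀ n, v n ≤ C)
    (hw : ∀ n, 0 < w n) (hwb : ∃ C, ∀ n, w n ≤ C)
    (hmono : ∃ n₀ : ℕ, AntitoneOn (fun n => v n / w n) (Set.Ici n₀)) :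
    (Mvw w w ≠ ⊤ → Mvw v v ≠ ⊤) ∧
      ((Tendsto (fun n : ℕ =>
            ENNReal.ofReal (1 / w n) * ∑' k : ℕ, ENNReal.ofReal (w (n + k) / (n + k + 1)))
          atTop (nhds 0)) →
        Tendsto (fun n : ℕ =>
            ENNReal.ofReal (1 / v n) * ∑' k : ℕ, ENNReal.ofReal (v (n + k) / (n + k + 1)))
          atTop (nhds 0)) := by
  obtain ⟨n₀, hA⟩ := hmono
  set Tv : ℕ → ENNReal := fun n => ∑' k : ℕ, ENNReal.ofReal (v (n + k) / (n + k + 1)) with hTv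
  set Tw : ℕ → ENNReal := fun n => ∑' k : ℕ, ENNReal.ofReal (w (n + k) / (n + k + 1)) with hTw
  set fv : ℕ → ENNReal := fun n => ENNReal.ofReal (1 / v n) * Tv n with hfv
  set fw : ℕ → ENNReal := fun n => ENNReal.ofReal (1 / w n) * Tw n with hfw
  -- key: for n ≥ n₀, Tv n ≤ ofReal (v n / w n) * Tw n
  have key : ∀ n, n₀ ≤ n → Tv n ≤ ENNReal.ofReal (v n / w n) * Tw n := by
    intro n hn
    rw [hTv, hTw, ← ENNReal.tsum_mul_left]
    refine ENNReal.tsum_le_tsum fun k => ?_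
    have hd : (0 : ℝ) < (n : ℝ) + k + 1 := by positivity
    have hratio : v (n + k) / w (n + k) ≤ v n / w n :=
      hA hn (by simp [Set.mem_Ici]; omega) (Nat.le_add_right n k)
    have h1 : v (n + k) / ((n : ℝ) + k + 1)
        ≤ (v n / w n) * (w (n + k) / ((n : ℝ) + k + 1)) := by
      have heq : v (n + k) / ((n : ℝ) + k + 1)
          = (v (n + k) / w (n + k)) * (w (n + k) / ((n : ℝ) + k + 1)) := by
        rw [div_mul_div_comm, mul_comm (v (n + k)),
          mul_div_mul_left _ _ (hw (n + k)).ne']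
      rw [heq]
      exact mul_le_mul_of_nonneg_right hratio (div_nonneg (hw (n + k)).le hd.le)
    calc ENNReal.ofReal (v (n + k) / ((n : ℝ) + k + 1))
        ≤ ENNReal.ofReal ((v n / w n) * (w (n + k) / ((n : ℝ) + k + 1))) :=
          ENNReal.ofReal_le_ofReal h1
      _ = ENNReal.ofReal (v n / w n) * ENNReal.ofReal (w (n + k) / ((n : ℝ) + k + 1)) :=
          ENNReal.ofReal_mul (div_nonneg (hv n).le (hw n).le)
  have keyf : ∀ n, n₀ ≤ n → fv n ≤ fw n := by
    intro n hn
    calc fv n ≤ ENNReal.ofReal (1 / v n) * (ENNReal.ofReal (v n / w n) * Tw n) :=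
          mul_le_mul_right (key n hn) _
      _ = (ENNReal.ofReal (1 / v n) * ENNReal.ofReal (v n / w n)) * Tw n := by ring
      _ = ENNReal.ofReal (1 / w n) * Tw n := by
          rw [← ENNReal.ofReal_mul (one_div_nonneg.mpr (hv n).le)]
          congr 1
          rw [one_div, inv_mul_eq_div, div_right_comm, div_self (hv n).ne']
      _ = fw n := rfl
  constructor
  · intro hMw
    have hfw_lt : ∀ n, fw n ≠ ⊤ := fun n =>
      ne_top_of_le_ne_top hMw (le_iSup (fun n => fw n) n)
    have hTw_lt : ∀ n, Tw n ≠ ⊤ := by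
      intro n h
      apply hfw_lt n
      rw [hfw]
      simp only
      rw [h, ENNReal.mul_top
        (ENNReal.ofReal_pos.mpr (one_div_pos.mpr (hw n))).ne']
    have hn₀ : Tv n₀ ≠ ⊤ :=
      ne_top_of_le_ne_top (ENNReal.mul_ne_top ENNReal.ofReal_ne_top (hTw_lt n₀))
        (key n₀ le_rfl)
    have hTv_lt : ∀ n, Tv n ≠ ⊤ := by
      intro n
      rcases le_or_gt n₀ n with hn | hn
      · exact ne_top_of_le_ne_top
          (ENNReal.mul_ne_top ENNReal.ofReal_ne_top (hTw_lt n)) (key n hn)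
      · have hsplit := Summable.sum_add_tsum_nat_add' (f := fun k =>
          ENNReal.ofReal (v (n + k) / ((n : ℝ) + k + 1))) (k := n₀ - n)
          ENNReal.summable
        have htail : (∑' k : ℕ,
            ENNReal.ofReal (v (n + (k + (n₀ - n))) / ((n : ℝ) + (k + (n₀ - n) : ℕ) + 1)))
            = Tv n₀ := by
          rw [hTv]
          apply tsum_congr
          intro k
          have h1 : n + (k + (n₀ - n)) = n₀ + k := by omega
          have h2 : (n : ℝ) + (k + (n₀ - n) : ℕ) + 1 = (n₀ : ℝ) + k + 1 := by
            push_cast [Nat.cast_sub hn.le]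
            ring
          rw [h1, h2]
        intro hcontra
        have hcontra' : (∑' k : ℕ, ENNReal.ofReal (v (n + k) / ((n : ℝ) + k + 1))) = ⊤ :=
          hcontra
        rw [← hsplit, htail] at hcontra'
        rcases ENNReal.add_eq_top.mp hcontra' with h | h
        · exact absurd h (ENNReal.sum_lt_top.mpr fun i _ => ENNReal.ofReal_lt_top).ne
        · exact hn₀ h
    have hMvv : Mvw v v ≤ Mvw w w ⊔ (Finset.range n₀).sup fv := by
      refine iSup_le fun n => ?_
      rcases le_or_gt n₀ n with hn | hn
      · exact le_sup_of_le_left ((keyf n hn).trans (le_iSup (fun n => fw n) n))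
      · exact le_sup_of_le_right (Finset.le_sup (f := fv) (Finset.mem_range.mpr hn))
    have hB : Mvw w w ⊔ (Finset.range n₀).sup fv < ⊤ := by
      rw [sup_lt_iff]
      constructor
      · exact lt_top_iff_ne_top.mpr hMw
      · refine Finset.sup_lt_iff (by simp) |>.mpr fun n _ => ?_
        rw [hfv, lt_top_iff_ne_top]
        exact ENNReal.mul_ne_top ENNReal.ofReal_ne_top (hTv_lt n)
    exact ne_top_of_le_ne_top hB.ne hMvv
  · intro hW
    refine tendsto_of_tendsto_of_tendsto_of_le_of_le' tendsto_const_nhds hW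
      (Eventually.of_forall fun n => zero_le) ?_
    filter_upwards [eventually_ge_atTop n₀] with n hn
    exact keyf n hn
end
end

section
/- Let w be a weight. The following are equivalent: (a) ∑_{n≥1} n^k w(n) < ∞ for every k ∈ ℕ (w is rapidly decreasing); (b) ∑_{n≥1} n^t w(n) < ∞ for every t ∈ ℝ (i.e., R_w = ℝ). If moreover M_w < ∞ and T : ℓ¹ → ℓ¹ is the continuous linear operator satisfying (T x)(n) = (w(n)/n) ∑_{k=1}^n x(k)/w(k) for all x ∈ ℓ¹ and n ≥ 1, then (a)–(b) are also equivalent to: (c) for every integer m ≥ 1 the number 1/m is an eigenvalue of T, i.e., T x = (1/m)·x for some nonzero x ∈ ℓ¹. -/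
/- STATEMENT 6: For a weight w: (a) ∑ n^k w(n) < ∞ for all k : ℕ  ⇔  (b) ∑ n^t w(n) < ∞ for
all t : ℝ (i.e. R_w = ℝ); and if M_w < ∞ and T is the transferred Cesàro operator on ℓ¹,
these are also equivalent to (c) every 1/m (m ≥ 1) being an eigenvalue of T.
Index `n : ℕ` corresponds to the paper's `n+1`. -/

open Filter Topology

noncomputable section

lemma sum_range_choose_eq (r N : ℕ) :
    ∑ k ∈ Finset.range N, Nat.choose k r = N.choose (r + 1) := by
  induction N with
  | zero => simp
  | succ n ih =>
    rw [Finset.sum_range_succ, ih, Nat.choose_succ_succ, Nat.add_comm]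

lemma summable_of_choose_summable (w : ℕ → ℝ) (hw : ∀ n, 0 < w n) (k : ℕ)
    (h : Summable fun n : ℕ => w n * (n.choose k : ℝ)) :
    Summable fun n : ℕ => ((n : ℝ) + 1) ^ k * w n := by
  rw [← summable_nat_add_iff k]
  have h' : Summable fun n : ℕ => w (n + k) * ((n + k).choose k : ℝ) :=
    (summable_nat_add_iff k).2 h
  apply Summable.of_nonneg_of_le _ _ (h'.mul_left ((((k:ℝ)+1)^k * k.factorial)))
  · intro n
    have := (hw (n + k)).le
    positivity
  · intro n
    have h1 : ((n:ℝ)+1)^k ≤ k.factorial * ((n + k).choose k : ℝ) := by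
      have h2 := Nat.pow_le_choose (α := ℝ) k (n + k)
      rw [div_le_iff₀ (by exact_mod_cast k.factorial_pos)] at h2
      have h3 : n + k + 1 - k = n + 1 := by omega
      rw [h3] at h2
      push_cast at h2
      linarith [h2]
    have h4 : ((n:ℝ) + (k:ℝ) + 1) ≤ ((k:ℝ)+1) * ((n:ℝ)+1) := by
      nlinarith [Nat.cast_nonneg (α := ℝ) n, Nat.cast_nonneg (α := ℝ) k]
    have h5 : (0:ℝ) < w (n+k) := hw _
    have hch : (0:ℝ) ≤ ((n + k).choose k : ℝ) := Nat.cast_nonneg _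
    calc (((n + k : ℕ) : ℝ) + 1)^k * w (n + k)
        ≤ (((k:ℝ)+1) * ((n:ℝ)+1))^k * w (n+k) := by
          apply mul_le_mul_of_nonneg_right _ h5.le
          apply pow_le_pow_left₀ (by positivity)
          push_cast; linarith
      _ = ((k:ℝ)+1)^k * (((n:ℝ)+1)^k) * w (n+k) := by rw [mul_pow]
      _ ≤ ((k:ℝ)+1)^k * (k.factorial * ((n + k).choose k : ℝ)) * w (n+k) := by
          apply mul_le_mul_of_nonneg_right _ h5.le
          exact mul_le_mul_of_nonneg_left h1 (by positivity)
      _ = ((k:ℝ)+1)^k * k.factorial * (w (n+k) * ((n + k).choose k : ℝ)) := by ring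

def yfun (w : ℕ → ℝ) (x : ellOne) (n : ℕ) : ℂ := (x : ∀ _ : ℕ, ℂ) n / ((w n : ℝ) : ℂ)

lemma exists_eigen (w : ℕ → ℝ) (hw : ∀ n, 0 < w n)
    (ha : ∀ k : ℕ, Summable fun n : ℕ => ((n : ℝ) + 1) ^ k * w n)
    (T : ellOne →L[ℂ] ellOne) (hT : IsCesaroOp w w T) (m : ℕ) (hm : 1 ≤ m) :
    ∃ x : ellOne, x ≠ 0 ∧ T x = ((m : ℂ))⁻¹ • x := by
  obtain ⟨r, rfl⟩ : ∃ r, m = r + 1 := ⟨m - 1, by omega⟩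
  set f : ℕ → ℂ := fun n => ((w n * (n.choose r : ℝ) : ℝ) : ℂ) with hf
  have hwne : ∀ n, ((w n : ℝ) : ℂ) ≠ 0 := fun n => by
    exact_mod_cast (hw n).ne'
  have hsum : Summable fun n : ℕ => ‖f n‖ := by
    apply Summable.of_nonneg_of_le (fun n => norm_nonneg _) _ (ha r)
    intro n
    have h1 : ‖f n‖ = w n * (n.choose r : ℝ) := by
      rw [hf]
      rw [Complex.norm_real, Real.norm_of_nonneg (mul_nonneg (hw n).le (Nat.cast_nonneg _))]
    rw [h1, mul_comm]
    apply mul_le_mul_of_nonneg_right _ (hw n).le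
    calc ((n.choose r : ℕ) : ℝ) ≤ ((n ^ r : ℕ) : ℝ) := by
          exact_mod_cast Nat.choose_le_pow n r
      _ ≤ ((n:ℝ)+1)^r := by
          push_cast
          exact pow_le_pow_left₀ (Nat.cast_nonneg _) (by linarith) r
  have hmem : Memℓp f 1 := memℓp_gen (by simpa using hsum)
  refine ⟨⟨f, hmem⟩, ?_, ?_⟩
  · intro h0
    have : f r = 0 := by
      have := congrArg (fun z : ellOne => (z : ∀ _ : ℕ, ℂ) r) h0
      simpa using this
    rw [hf] at this
    simp [Nat.choose_self] at this
    exact (hw r).ne' this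
  · apply lp.ext
    funext n
    rw [hT ⟨f, hmem⟩ n]
    have hco : (((((r:ℕ)+1 : ℕ) : ℂ))⁻¹ • (⟨f, hmem⟩ : ellOne) : ellOne) = _ := rfl
    rw [lp.coeFn_smul]
    simp only [Pi.smul_apply, smul_eq_mul]
    have hsumeq : ∑ k ∈ Finset.range (n + 1), f k / ((w k : ℝ) : ℂ)
        = (((n+1).choose (r+1) : ℕ) : ℂ) := by
      rw [← sum_range_choose_eq r (n+1)]
      push_cast
      apply Finset.sum_congr rfl
      intro k _
      rw [hf]
      push_cast
      rw [mul_comm]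
      exact mul_div_cancel_right₀ _ (hwne k)
    rw [hsumeq, hf]
    have hid : ((n:ℂ) + 1) * (n.choose r : ℂ) = ((n+1).choose (r+1) : ℂ) * ((r:ℂ) + 1) := by
      have := Nat.add_one_mul_choose_eq n r
      exact_mod_cast congrArg (Nat.cast : ℕ → ℂ) this
    have hn1 : ((n:ℂ) + 1) ≠ 0 := Nat.cast_add_one_ne_zero n
    have hr1 : ((r:ℂ) + 1) ≠ 0 := Nat.cast_add_one_ne_zero r
    push_cast
    field_simp
    linear_combination (-((w n : ℝ) : ℂ)) * hid

lemma choose_summable_of_eigen (w : ℕ → ℝ) (hw : ∀ n, 0 < w n)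
    (T : ellOne →L[ℂ] ellOne) (hT : IsCesaroOp w w T) (k : ℕ)
    (x : ellOne) (hx0 : x ≠ 0) (hxe : T x = (((k + 1 : ℕ) : ℂ))⁻¹ • x) :
    Summable fun n : ℕ => w n * (n.choose k : ℝ) := by
  have hwne : ∀ n, ((w n : ℝ) : ℂ) ≠ 0 := fun n => by exact_mod_cast (hw n).ne'
  have hk1 : ((k : ℂ) + 1) ≠ 0 := Nat.cast_add_one_ne_zero k
  have hx : ∀ n, (x : ∀ _ : ℕ, ℂ) n = yfun w x n * ((w n : ℝ) : ℂ) := fun n =>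
    (div_mul_cancel₀ _ (hwne n)).symm
  have yd : ∀ n, (x : ∀ _ : ℕ, ℂ) n / ((w n : ℝ) : ℂ) = yfun w x n := fun _ => rfl
  -- the scaling relation for partial sums
  have hS : ∀ n : ℕ, ∑ j ∈ Finset.range (n + 1), yfun w x j
      = (((n : ℂ) + 1) / ((k : ℂ) + 1)) * yfun w x n := by
    intro n
    have h1 := hT x n
    have h2 : (T x : ∀ _ : ℕ, ℂ) n = (((k + 1 : ℕ) : ℂ))⁻¹ * (x : ∀ _ : ℕ, ℂ) n := by
      rw [hxe, lp.coeFn_smul]; simp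
    rw [h2] at h1
    simp only [yd] at h1
    have hn1 : ((n : ℂ) + 1) ≠ 0 := Nat.cast_add_one_ne_zero n
    have h3 : ((w n / (n + 1) : ℝ) : ℂ) = ((w n : ℝ) : ℂ) / ((n : ℂ) + 1) := by push_cast; ring
    rw [h3] at h1
    have hone : (((n : ℂ) + 1) / ((w n : ℝ) : ℂ)) * (((w n : ℝ) : ℂ) / ((n : ℂ) + 1)) = 1 := by
      rw [div_mul_div_comm, mul_comm ((n : ℂ) + 1), div_self (mul_ne_zero (hwne n) hn1)]
    calc ∑ j ∈ Finset.range (n + 1), yfun w x j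
        = (((n : ℂ) + 1) / ((w n : ℝ) : ℂ)) *
            ((((w n : ℝ) : ℂ) / ((n : ℂ) + 1)) * ∑ j ∈ Finset.range (n + 1), yfun w x j) := by
          rw [← mul_assoc, hone, one_mul]
      _ = (((n : ℂ) + 1) / ((w n : ℝ) : ℂ)) * ((((k + 1 : ℕ) : ℂ))⁻¹ * (x : ∀ _ : ℕ, ℂ) n) := by
          rw [← h1]
      _ = (((n : ℂ) + 1) / ((k : ℂ) + 1)) * yfun w x n := by
          rw [hx n]
          push_cast
          field_simp
          rw [div_eq_iff (hwne n)]
          ring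
  -- the two-term recurrence
  have hrec : ∀ n : ℕ, ((n : ℂ) + 1) * yfun w x n
      = (((n : ℂ) + 1) - (k : ℂ)) * yfun w x (n + 1) := by
    intro n
    have ha := hS n
    have hb := hS (n + 1)
    rw [Finset.sum_range_succ, ha] at hb
    push_cast at hb
    field_simp at hb
    linear_combination hb
  -- vanishing below k
  have hzero : ∀ n, n < k → yfun w x n = 0 := by
    intro n
    induction n with
    | zero =>
      intro h0
      have h := hS 0
      rw [Finset.sum_range_one] at h
      have hk0 : (k : ℂ) ≠ 0 := Nat.cast_ne_zero.mpr (by omega)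
      have h' : (k : ℂ) * yfun w x 0 = 0 := by
        field_simp at h
        linear_combination h
      exact (mul_eq_zero.mp h').resolve_left hk0
    | succ n ih =>
      intro hlt
      have hy0 : yfun w x n = 0 := ih (by omega)
      have h := hrec n
      rw [hy0, mul_zero] at h
      have hc : (((n : ℂ) + 1) - (k : ℂ)) ≠ 0 := by
        apply sub_ne_zero_of_ne
        exact_mod_cast (show (n + 1 : ℕ) ≠ k by omega)
      exact (mul_eq_zero.mp h.symm).resolve_left hc
  -- values above k
  have htail : ∀ d : ℕ, yfun w x (k + d) = yfun w x k * (((k + d).choose k : ℕ) : ℂ) := by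
    intro d
    induction d with
    | zero => simp
    | succ d ih =>
      have h := hrec (k + d)
      rw [ih] at h
      have hd1 : ((d : ℂ) + 1) ≠ 0 := Nat.cast_add_one_ne_zero d
      have hcid : (((k + d).choose k : ℕ) : ℂ) * (((k : ℂ) + (d : ℂ)) + 1)
          = (((k + d + 1).choose k : ℕ) : ℂ) * ((d : ℂ) + 1) := by
        have h0 := Nat.choose_mul_succ_eq (k + d) k
        have h1 : k + d + 1 - k = d + 1 := by omega
        rw [h1] at h0
        exact_mod_cast congrArg (Nat.cast : ℕ → ℂ) h0
      apply mul_left_cancel₀ hd1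
      have e : k + (d + 1) = k + d + 1 := by omega
      rw [e]
      have hco : (((k : ℂ) + (d : ℂ) + 1) - (k : ℂ)) = ((d : ℂ) + 1) := by ring
      push_cast at h
      rw [hco] at h
      rw [← h]
      push_cast
      linear_combination yfun w x k * hcid
  -- the full formula
  have hyform : ∀ n : ℕ, yfun w x n = yfun w x k * ((n.choose k : ℕ) : ℂ) := by
    intro n
    rcases lt_or_ge n k with h | h
    · rw [hzero n h, Nat.choose_eq_zero_of_lt h]
      simp
    · obtain ⟨d, rfl⟩ : ∃ d, n = k + d := ⟨n - k, by omega⟩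
      exact htail d
  -- y k ≠ 0
  have hykne : yfun w x k ≠ 0 := by
    intro h0
    apply hx0
    apply lp.ext
    funext n
    have := hx n
    rw [hyform n, h0, zero_mul, zero_mul] at this
    simpa using this
  -- summability
  have hmem : Memℓp (x : ∀ _ : ℕ, ℂ) 1 := lp.memℓp x
  have hs : Summable fun n : ℕ => ‖(x : ∀ _ : ℕ, ℂ) n‖ := by
    have := (memℓp_gen_iff (p := 1) (by norm_num)).mp hmem
    simpa using this
  have hs2 : Summable fun n : ℕ => ‖yfun w x k‖ * (w n * (n.choose k : ℝ)) := by
    apply hs.congr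
    intro n
    rw [hx n, hyform n]
    rw [norm_mul, norm_mul]
    have h1 : ‖(((n.choose k : ℕ) : ℂ))‖ = ((n.choose k : ℕ) : ℝ) := by
      simp
    have h2 : ‖((w n : ℝ) : ℂ)‖ = w n := by
      rw [Complex.norm_real, Real.norm_of_nonneg (hw n).le]
    rw [h1, h2]
    ring
  have hne : ‖yfun w x k‖ ≠ 0 := norm_ne_zero_iff.mpr hykne
  have := hs2.mul_left ‖yfun w x k‖⁻¹
  apply this.congr
  intro n
  rw [← mul_assoc, inv_mul_cancel₀ hne, one_mul]

theorem rapidly_decreasing_iff (w : ℕ → ℝ)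
    (hw : ∀ n, 0 < w n) (hwb : ∃ C, ∀ n, w n ≤ C) :
    ((∀ k : ℕ, Summable fun n : ℕ => ((n : ℝ) + 1) ^ k * w n) ↔
        (∀ t : ℝ, Summable fun n : ℕ => ((n : ℝ) + 1) ^ t * w n)) ∧
      (Mvw w w ≠ ⊤ → ∀ T : ellOne →L[ℂ] ellOne, IsCesaroOp w w T →
        ((∀ k : ℕ, Summable fun n : ℕ => ((n : ℝ) + 1) ^ k * w n) ↔
          (∀ m : ℕ, 1 ≤ m → ∃ x : ellOne, x ≠ 0 ∧ T x = ((m : ℂ))⁻¹ • x))) := by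
  constructor
  · constructor
    · intro h t
      apply Summable.of_nonneg_of_le _ _ (h ⌈t⌉₊)
      · intro n
        have := (hw n).le
        positivity
      · intro n
        apply mul_le_mul_of_nonneg_right _ (hw n).le
        rw [← Real.rpow_natCast ((n : ℝ) + 1) ⌈t⌉₊]
        exact Real.rpow_le_rpow_of_exponent_le
          (by linarith [Nat.cast_nonneg (α := ℝ) n]) (Nat.le_ceil t)
    · intro h k
      refine (h (k : ℝ)).congr fun n => ?_
      rw [Real.rpow_natCast]
  · intro _ T hT
    constructor
    · intro ha m hm
      exact exists_eigen w hw ha T hT m hm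
    · intro hc k
      obtain ⟨x, hx0, hxe⟩ := hc (k + 1) (by omega)
      exact summable_of_choose_summable w hw k
        (choose_summable_of_eigen w hw T hT k x hx0 hxe)
end
end

section
/- Let w be a weight with M_w < ∞ and let T : ℓ¹ → ℓ¹ be the continuous linear operator satisfying (T x)(n) = (w(n)/n) ∑_{k=1}^n x(k)/w(k) for all x ∈ ℓ¹ and n ≥ 1 (the Cesàro operator 𝒞^{(1,w)} on ℓ¹(w) in the coordinates of Φ_w). Then Σ₀ := {0} ∪ {1/m : m ∈ ℕ, m ≥ 1} is contained in σ(T), the spectrum of T over ℂ. -/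
/- STATEMENT 8: If M_w < ∞ and T is the transferred Cesàro operator on ℓ¹, then
Σ₀ = {0} ∪ {1/m : m ≥ 1} ⊆ σ(T).  Index `n : ℕ` corresponds to the paper's `n+1`. -/

open Filter Topology

noncomputable section

lemma inv_mem_spectrum_aux (w : ℕ → ℝ) (hw : ∀ n, 0 < w n)
    (T : ellOne →L[ℂ] ellOne) (hT : IsCesaroOp w w T) (m : ℕ) (hm : 1 ≤ m) :
    ((m : ℂ))⁻¹ ∈ spectrum ℂ T := by
  rw [spectrum.mem_iff]
  intro hU
  obtain ⟨u, hu⟩ := hU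
  set e : ellOne := lp.single 1 (m - 1) (1 : ℂ) with he
  set x : ellOne := (↑u⁻¹ : ellOne →L[ℂ] ellOne) e with hx
  have hax : (algebraMap ℂ (ellOne →L[ℂ] ellOne) ((m : ℂ))⁻¹ - T) x = e := by
    have h1 : (↑u * ↑u⁻¹ : ellOne →L[ℂ] ellOne) e = (1 : ellOne →L[ℂ] ellOne) e := by
      rw [u.mul_inv]
    rw [hu] at h1
    simpa [ContinuousLinearMap.mul_apply] using h1
  set xc : ∀ _ : ℕ, ℂ := (x : ∀ _ : ℕ, ℂ) with hxc
  have hco : ∀ n : ℕ,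
      ((m : ℂ))⁻¹ * xc n
        - ((w n / (n + 1) : ℝ) : ℂ) * ∑ k ∈ Finset.range (n + 1), xc k / ((w k : ℝ) : ℂ)
        = (if n = m - 1 then 1 else 0) := by
    intro n
    have := congrArg (fun f : ellOne => (f : ∀ _ : ℕ, ℂ) n) hax
    simp only [ContinuousLinearMap.sub_apply, lp.coeFn_sub, Pi.sub_apply,
      Algebra.algebraMap_eq_smul_one, ContinuousLinearMap.smul_apply,
      ContinuousLinearMap.one_apply, lp.coeFn_smul, Pi.smul_apply, smul_eq_mul,
      hT x n] at this
    rw [this, he, lp.single_apply]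
    split <;> simp_all
  have hzero : ∀ n, n < m - 1 → xc n = 0 := by
    intro n
    induction n using Nat.strong_induction_on with
    | _ n ih =>
      intro hn
      have hsum : ∑ k ∈ Finset.range (n + 1), xc k / ((w k : ℝ) : ℂ) = xc n / ((w n : ℝ) : ℂ) := by
        rw [Finset.sum_range_succ]
        have h0 : ∑ k ∈ Finset.range n, xc k / ((w k : ℝ) : ℂ) = 0 :=
          Finset.sum_eq_zero fun k hk => by
            rw [ih k (Finset.mem_range.mp hk) (lt_trans (Finset.mem_range.mp hk) hn), zero_div]
        rw [h0, zero_add]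
      have heq := hco n
      rw [if_neg (Nat.ne_of_lt hn), hsum] at heq
      have hwn : ((w n : ℝ) : ℂ) ≠ 0 := by exact_mod_cast (hw n).ne'
      have hn1 : ((n : ℂ) + 1) ≠ 0 := by exact_mod_cast Nat.cast_add_one_ne_zero (R := ℂ) n
      have hm0 : ((m : ℂ)) ≠ 0 := Nat.cast_ne_zero.mpr (by omega)
      have hne : (m : ℂ) ≠ (n : ℂ) + 1 := by
        intro h
        have : (m : ℂ) = ((n + 1 : ℕ) : ℂ) := by push_cast; exact h
        have := Nat.cast_injective (R := ℂ) this
        omega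
      push_cast at heq
      have hfac : ((m : ℂ))⁻¹ - ((n : ℂ) + 1)⁻¹ ≠ 0 := by
        rw [sub_ne_zero]
        intro h
        exact hne (by rw [inv_inj] at h; exact h)
      have : (((m : ℂ))⁻¹ - ((n : ℂ) + 1)⁻¹) * xc n = 0 := by
        rw [sub_mul, ← heq]
        field_simp
      exact (mul_eq_zero.mp this).resolve_left hfac
  have heq := hco (m - 1)
  rw [if_pos rfl] at heq
  have hsum : ∑ k ∈ Finset.range (m - 1 + 1), xc k / ((w k : ℝ) : ℂ)
      = xc (m - 1) / ((w (m - 1) : ℝ) : ℂ) := by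
    rw [Finset.sum_range_succ]
    have h0 : ∑ k ∈ Finset.range (m - 1), xc k / ((w k : ℝ) : ℂ) = 0 :=
      Finset.sum_eq_zero fun k hk => by rw [hzero k (Finset.mem_range.mp hk), zero_div]
    rw [h0, zero_add]
  rw [hsum] at heq
  have hwn : ((w (m - 1) : ℝ) : ℂ) ≠ 0 := by exact_mod_cast (hw (m - 1)).ne'
  have hmc : ((m - 1 : ℕ) : ℂ) + 1 = (m : ℂ) := by
    have : (m - 1 : ℕ) + 1 = m := by omega
    exact_mod_cast congrArg (Nat.cast (R := ℂ)) this
  have hm0 : ((m : ℂ)) ≠ 0 := Nat.cast_ne_zero.mpr (by omega)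
  push_cast at heq
  rw [hmc] at heq
  have : (0 : ℂ) = 1 := by
    rw [← heq]
    field_simp
    ring
  exact one_ne_zero this.symm

theorem sigma_zero_subset_spectrum (w : ℕ → ℝ)
    (hw : ∀ n, 0 < w n) (hwb : ∃ C, ∀ n, w n ≤ C)
    (hM : Mvw w w ≠ ⊤)
    (T : ellOne →L[ℂ] ellOne) (hT : IsCesaroOp w w T) :
    ({0} ∪ {z : ℂ | ∃ m : ℕ, 1 ≤ m ∧ z = ((m : ℂ))⁻¹}) ⊆ spectrum ℂ T := by
  rintro z (hz | ⟨m, hm, rfl⟩)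
  · -- z = 0 : limit of the 1/m, and the spectrum is closed
    rw [Set.mem_singleton_iff] at hz
    subst hz
    have hcl : IsClosed (spectrum ℂ T) := spectrum.isClosed T
    have hmem : ∀ m : ℕ, (((m + 1 : ℕ) : ℂ))⁻¹ ∈ spectrum ℂ T := fun m =>
      inv_mem_spectrum_aux w hw T hT (m + 1) (Nat.le_add_left 1 m)
    have htend : Filter.Tendsto (fun m : ℕ => (((m + 1 : ℕ) : ℂ))⁻¹) Filter.atTop (nhds 0) := by
      have h1 : Filter.Tendsto (fun m : ℕ => ((1 / (m + 1 : ℕ) : ℝ) : ℂ))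
          Filter.atTop (nhds ((0 : ℝ) : ℂ)) := by
        apply Filter.Tendsto.comp (Complex.continuous_ofReal.tendsto _)
        simpa using tendsto_one_div_add_atTop_nhds_zero_nat (𝕜 := ℝ)
      simpa [one_div] using h1
    exact hcl.mem_of_tendsto htend (Filter.Eventually.of_forall hmem)
  · exact inv_mem_spectrum_aux w hw T hT m hm
end
end

section
/- Let w be a weight with M_w < ∞ and let T : ℓ¹ → ℓ¹ be the continuous linear operator satisfying (T x)(n) = (w(n)/n) ∑_{k=1}^n x(k)/w(k) for all x ∈ ℓ¹ and n ≥ 1. Then a number λ ∈ ℂ is an eigenvalue of T (i.e., T x = λx for some nonzero x ∈ ℓ¹) if and only if λ = 1/m for some integer m ≥ 1 with ∑_{n≥1} n^{m−1} w(n) < ∞. In particular, the point spectrum of 𝒞^{(1,w)} equals {1/m : m ≥ 1 and (m−1) ∈ R_w}; it equals all of {1/m : m ≥ 1} when R_w = ℝ and is a finite (possibly empty) set when R_w ≠ ℝ. -/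
/- STATEMENT 10: λ is an eigenvalue of T iff λ = 1/m for some integer m ≥ 1 with
∑ n^{m−1} w(n) < ∞ (here m = m'+1 with m' : ℕ, so the exponent m−1 becomes m').
Index `n : ℕ` corresponds to the paper's `n+1`. -/

open Filter Topology

noncomputable section

lemma hockey (n m : ℕ) : ∑ k ∈ Finset.range (n+1), k.choose m = (n+1).choose (m+1) := by
  induction n with
  | zero => cases m <;> simp [Nat.choose_eq_zero_of_lt]
  | succ n ih =>
    rw [Finset.sum_range_succ, ih, Nat.choose_succ_succ' (n+1) m, add_comm]

lemma natBound (m j : ℕ) : (m+j+1)^m ≤ (m+1)^m * (Nat.factorial m * (m+j).choose m) := by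
  calc (m+j+1)^m ≤ ((m+1)*(j+1))^m := Nat.pow_le_pow_left (by nlinarith) m
    _ = (m+1)^m * (j+1)^m := mul_pow _ _ _
    _ ≤ (m+1)^m * (Nat.factorial m * (m+j).choose m) := by
        apply Nat.mul_le_mul_left
        have h := Nat.pow_sub_le_descFactorial (m+j) m
        rwa [Nat.descFactorial_eq_factorial_mul_choose, show m+j+1-m = j+1 by omega] at h

theorem eigenvalue_characterization (w : ℕ → ℝ)
    (hw : ∀ n, 0 < w n) (hwb : ∃ C, ∀ n, w n ≤ C)
    (hM : Mvw w w ≠ ⊤)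
    (T : ellOne →L[ℂ] ellOne) (hT : IsCesaroOp w w T) (lam : ℂ) :
    (∃ x : ellOne, x ≠ 0 ∧ T x = lam • x) ↔
      ∃ m : ℕ, lam = ((m : ℂ) + 1)⁻¹ ∧
        Summable fun n : ℕ => ((n : ℝ) + 1) ^ m * w n := by
  have hw0 : ∀ n, ((w n : ℝ) : ℂ) ≠ 0 := fun n => by
    exact_mod_cast Complex.ofReal_ne_zero.2 (hw n).ne'
  constructor
  · rintro ⟨x, hx0, hx⟩
    set y : ℕ → ℂ := fun n => (x : ∀ _ : ℕ, ℂ) n / ((w n : ℝ) : ℂ) with hy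
    have hxy : ∀ n, (x : ∀ _ : ℕ, ℂ) n = ((w n : ℝ) : ℂ) * y n := fun n => by
      simp only [hy]
      rw [mul_comm, div_mul_cancel₀ _ (hw0 n)]
    have key : ∀ n : ℕ, lam * ((n : ℂ) + 1) * y n = ∑ k ∈ Finset.range (n+1), y k := by
      intro n
      have h1 := hT x n
      have h2 : (T x : ∀ _ : ℕ, ℂ) n = lam * (x : ∀ _ : ℕ, ℂ) n := by
        rw [hx, lp.coeFn_smul]; rfl
      rw [h2, hxy n] at h1
      have hn1 : ((n : ℂ) + 1) ≠ 0 := Nat.cast_add_one_ne_zero n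
      push_cast at h1
      field_simp at h1
      apply mul_left_cancel₀ (hw0 n)
      linear_combination h1
    have hrec : ∀ n : ℕ, (lam * ((n : ℂ) + 2) - 1) * y (n+1) = lam * ((n : ℂ) + 1) * y n := by
      intro n
      have k1 := key n
      have k2 := key (n+1)
      rw [Finset.sum_range_succ, ← k1] at k2
      push_cast at k2
      linear_combination k2
    have y0 : (lam - 1) * y 0 = 0 := by
      have h := key 0
      simp only [Nat.cast_zero, zero_add, mul_one, Finset.sum_range_one] at h
      linear_combination h
    obtain ⟨n₀, hn₀⟩ : ∃ n, y n ≠ 0 := by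
      by_contra h
      push_neg at h
      apply hx0
      apply lp.ext
      funext n
      rw [hxy n, h n, mul_zero]
      rfl
    have hmex : ∃ m : ℕ, lam * ((m : ℂ) + 1) = 1 := by
      by_contra h
      push_neg at h
      have h0 : lam ≠ 1 := by simpa using h 0
      have hy0 : y 0 = 0 := by
        rcases mul_eq_zero.1 y0 with h' | h'
        · exact absurd (by linear_combination h') h0
        · exact h'
      have hall : ∀ n, y n = 0 := by
        intro n
        induction n with
        | zero => exact hy0
        | succ n ih =>
          have hr := hrec n
          rw [ih, mul_zero] at hr
          have hne : lam * ((n : ℂ) + 2) - 1 ≠ 0 := by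
            intro h0'
            have hh := h (n+1)
            push_cast at hh
            exact hh (by linear_combination h0')
          exact (mul_eq_zero.1 hr).resolve_left hne
      exact hn₀ (hall n₀)
    obtain ⟨m, hm⟩ := hmex
    have hm1 : ((m : ℂ) + 1) ≠ 0 := Nat.cast_add_one_ne_zero m
    have hlamne : lam ≠ 0 := by
      intro h; rw [h, zero_mul] at hm; exact zero_ne_one hm
    have hlam : lam = ((m : ℂ) + 1)⁻¹ := by
      field_simp
      linear_combination hm
    refine ⟨m, hlam, ?_⟩
    have hne : ∀ n : ℕ, n ≠ m → lam * ((n : ℂ) + 1) - 1 ≠ 0 := by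
      intro n hnm h0
      apply hnm
      have h1 : lam * ((n : ℂ) + 1) = lam * ((m : ℂ) + 1) := by
        rw [hm]; linear_combination h0
      have h2 : ((n : ℂ) + 1) = ((m : ℂ) + 1) := mul_left_cancel₀ hlamne h1
      have : (n : ℂ) = (m : ℂ) := by linear_combination h2
      exact_mod_cast this
    have hlow : ∀ n, n < m → y n = 0 := by
      intro n
      induction n with
      | zero =>
        intro h0
        have hne0 : lam - 1 ≠ 0 := by
          have := hne 0 (by omega)
          simpa using this
        exact (mul_eq_zero.1 y0).resolve_left hne0
      | succ n ih =>
        intro h0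
        have hr := hrec n
        rw [ih (by omega), mul_zero] at hr
        have hne' : lam * ((n : ℂ) + 2) - 1 ≠ 0 := by
          have hh := hne (n+1) (by omega)
          push_cast at hh
          intro h0'
          exact hh (by linear_combination h0')
        exact (mul_eq_zero.1 hr).resolve_left hne'
    have hup : ∀ j : ℕ, y (m + j) = (((m+j).choose m : ℕ) : ℂ) * y m := by
      intro j
      induction j with
      | zero => simp
      | succ j ih =>
        have hr := hrec (m + j)
        rw [ih, hlam] at hr
        have hj1 : ((j : ℂ) + 1) ≠ 0 := Nat.cast_add_one_ne_zero j
        have hnat : (((m+j).choose m : ℕ) : ℂ) * ((m:ℂ) + (j:ℂ) + 1)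
            = (((m+j+1).choose m : ℕ) : ℂ) * ((j:ℂ) + 1) := by
          have h := Nat.choose_mul_succ_eq (m+j) m
          rw [show m+j+1-m = j+1 by omega] at h
          exact_mod_cast congrArg (Nat.cast : ℕ → ℂ) h
        have hgoal : ((j:ℂ)+1) * y (m+j+1)
            = ((j:ℂ)+1) * ((((m+j+1).choose m : ℕ) : ℂ) * y m) := by
          push_cast at hr ⊢
          field_simp at hr
          linear_combination hr + y m * hnat
        have := mul_left_cancel₀ hj1 hgoal
        rw [show m + (j+1) = m + j + 1 from rfl]
        exact this
    have hym : y m ≠ 0 := by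
      intro h
      apply hn₀
      by_cases hc : n₀ < m
      · exact hlow n₀ hc
      · have he : n₀ = m + (n₀ - m) := by omega
        rw [he, hup (n₀ - m), h, mul_zero]
    have hxs : Summable fun n => ‖(x : ∀ _ : ℕ, ℂ) n‖ := by
      have h := (lp.memℓp x).summable (p := (1 : ENNReal)) (by norm_num)
      simpa using h
    have hxs' : Summable fun j => ‖(x : ∀ _ : ℕ, ℂ) (j + m)‖ :=
      (summable_nat_add_iff m).2 hxs
    have hnorm : ∀ j, ‖(x : ∀ _ : ℕ, ℂ) (j + m)‖
        = w (m+j) * (((m+j).choose m : ℕ) : ℝ) * ‖y m‖ := by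
      intro j
      rw [show j + m = m + j by omega, hxy (m+j), hup j]
      rw [norm_mul, norm_mul, Complex.norm_real, Real.norm_eq_abs,
        abs_of_pos (hw (m+j)), Complex.norm_natCast]
      ring
    have hym' : 0 < ‖y m‖ := norm_pos_iff.2 hym
    clear_value y
    rw [← summable_nat_add_iff m]
    have hK : Summable fun j => ((((m+1)^m * Nat.factorial m : ℕ) : ℝ) / ‖y m‖)
        * ‖(x : ∀ _ : ℕ, ℂ) (j + m)‖ := hxs'.mul_left _
    refine Summable.of_nonneg_of_le (fun j => by have := hw (j+m); positivity) (fun j => ?_) hK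
    rw [hnorm j, show j + m = m + j by omega]
    have hnb' : (((m+j : ℕ) : ℝ) + 1)^m ≤ (((m+1)^m * Nat.factorial m : ℕ) : ℝ)
        * (((m+j).choose m : ℕ) : ℝ) := by
      have h := natBound m j
      calc (((m+j : ℕ) : ℝ) + 1)^m = (((m+j+1 : ℕ) : ℝ))^m := by push_cast; ring
        _ ≤ (((m+1)^m * (Nat.factorial m * (m+j).choose m) : ℕ) : ℝ) := by
            exact_mod_cast Nat.cast_le.2 h
        _ = (((m+1)^m * Nat.factorial m : ℕ) : ℝ) * (((m+j).choose m : ℕ) : ℝ) := by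
            push_cast; ring
    have e : ((((m+1)^m * Nat.factorial m : ℕ) : ℝ) / ‖y m‖)
        * (w (m+j) * (((m+j).choose m : ℕ) : ℝ) * ‖y m‖)
        = ((((m+1)^m * Nat.factorial m : ℕ) : ℝ) * (((m+j).choose m : ℕ) : ℝ)) * w (m+j) := by
      have habs : ‖y m‖ ≠ 0 := by simpa using hym'.ne'
      field_simp [habs]
    rw [e]
    exact mul_le_mul_of_nonneg_right hnb' (hw _).le
  · rintro ⟨m, hlam, hsum⟩
    have hm1 : ((m : ℂ) + 1) ≠ 0 := Nat.cast_add_one_ne_zero m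
    set f : ℕ → ℂ := fun n => ((w n * (n.choose m) : ℝ) : ℂ) with hf
    have hmem : Memℓp f (1 : ENNReal) := by
      apply memℓp_gen
      have hs' : Summable fun n : ℕ => w n * ((n:ℝ)+1)^m := by
        simpa [mul_comm] using hsum
      have hns : Summable fun n : ℕ => ‖f n‖ := by
        refine Summable.of_nonneg_of_le (fun n => norm_nonneg _) (fun n => ?_) hs'
        simp only [hf, Complex.norm_real, Real.norm_eq_abs]
        rw [abs_of_nonneg (by have := hw n; positivity)]
        have hb : ((n.choose m : ℕ) : ℝ) ≤ ((n:ℝ)+1)^m := by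
          calc ((n.choose m : ℕ) : ℝ) ≤ ((n^m : ℕ) : ℝ) := by
                exact_mod_cast Nat.choose_le_pow n m
            _ ≤ ((n:ℝ)+1)^m := by
                push_cast
                exact pow_le_pow_left₀ (by positivity) (by linarith) m
        exact mul_le_mul_of_nonneg_left hb (hw n).le
      simpa using hns
    refine ⟨⟨f, hmem⟩, ?_, ?_⟩
    · intro h
      have h0 : f m = 0 := by
        have := congr_fun (lp.eq_zero_iff_coeFn_eq_zero.1 h) m
        exact this
      simp only [hf] at h0
      rw [Nat.choose_self] at h0
      norm_num at h0
      exact (hw m).ne' (by exact_mod_cast h0)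
    · apply lp.ext
      funext n
      rw [hT, lp.coeFn_smul, Pi.smul_apply, smul_eq_mul]
      have hsum_eq : ∑ k ∈ Finset.range (n + 1), f k / ((w k : ℝ) : ℂ)
          = (((n+1).choose (m+1) : ℕ) : ℂ) := by
        rw [← hockey n m]
        push_cast
        refine Finset.sum_congr rfl fun k _ => ?_
        simp only [hf]
        push_cast
        exact mul_div_cancel_left₀ _ (hw0 k)
      rw [hsum_eq, hlam]
      have hn1 : ((n : ℂ) + 1) ≠ 0 := Nat.cast_add_one_ne_zero n
      have hcast : ((n:ℂ) + 1) * (n.choose m : ℂ) = ((n+1).choose (m+1) : ℂ) * ((m:ℂ) + 1) := by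
        exact_mod_cast congrArg (Nat.cast : ℕ → ℂ) (Nat.add_one_mul_choose_eq n m)
      simp only [hf]
      push_cast
      field_simp
      linear_combination -(w n : ℂ) * hcast
end
end

section
/- Let w be a weight with M_w < ∞, let T : ℓ¹ → ℓ¹ be the continuous linear operator satisfying (T x)(n) = (w(n)/n) ∑_{k=1}^n x(k)/w(k) for all x ∈ ℓ¹ and n ≥ 1, and suppose S_w(1) := {s ∈ ℝ : sup_{n≥1} 1/(n^s w(n)) < ∞} is nonempty; set s₁ := inf S_w(1). Then: (i) necessarily s₁ > 0; (ii) the closed disc {λ ∈ ℂ : |λ − 1/(2s₁)| ≤ 1/(2s₁)} together with {1/m : m ∈ ℕ, m ≥ 1} is contained in σ(T), the spectrum of T. -/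
/- STATEMENT 11: If S_w(1) ≠ ∅ and s₁ = inf S_w(1), then s₁ > 0 and the closed disc
{λ : |λ − 1/(2s₁)| ≤ 1/(2s₁)} together with {1/m : m ≥ 1} is contained in σ(T).
Index `n : ℕ` corresponds to the paper's `n+1`. -/

open Filter Topology

noncomputable section

def Sset (w : ℕ → ℝ) : Set ℝ :=
  {s : ℝ | BddAbove (Set.range fun n : ℕ => 1 / (((n : ℝ) + 1) ^ s * w n))}

namespace Aux11


lemma log_le_harmonic (k : ℕ) :
    Real.log ((k : ℝ) + 1) ≤ ∑ j ∈ Finset.range k, 1 / ((j : ℝ) + 1) := by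
  have hf : Real.log ((k : ℝ) + 1)
      = ∑ j ∈ Finset.range k,
          (Real.log (((j : ℕ) + 1 : ℕ) + 1 : ℝ) - Real.log ((j : ℝ) + 1)) := by
    rw [Finset.sum_range_sub (f := fun j : ℕ => Real.log ((j : ℝ) + 1)) k]
    simp
  rw [hf]
  apply Finset.sum_le_sum
  intro j _
  have hp1 : (0:ℝ) < (j : ℝ) + 1 := by positivity
  have hp2 : (0:ℝ) < (j : ℝ) + 2 := by positivity
  have hcast : (((j : ℕ) + 1 : ℕ) + 1 : ℝ) = (j : ℝ) + 2 := by push_cast; ring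
  rw [hcast, ← Real.log_div hp2.ne' hp1.ne']
  have h2 := Real.log_le_sub_one_of_pos (x := ((j : ℝ) + 2) / ((j : ℝ) + 1)) (by positivity)
  have h3 : ((j : ℝ) + 2) / ((j : ℝ) + 1) - 1 = 1 / ((j : ℝ) + 1) := by
    field_simp
    norm_num
  linarith

/-- Extraction of the real constant `M` from `Mvw w w ≠ ⊤`. -/
lemma extract (w : ℕ → ℝ) (hw : ∀ n, 0 < w n) (hM : Mvw w w ≠ ⊤) :
    ∃ M : ℝ, 0 < M ∧ (∀ n, Summable fun j : ℕ => w (n + j) / ((n : ℝ) + (j : ℝ) + 1)) ∧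
      ∀ n, (∑' j : ℕ, w (n + j) / ((n : ℝ) + (j : ℝ) + 1)) ≤ M * w n := by
  set M : ℝ := (Mvw w w).toReal with hMdef
  have hle : ∀ n : ℕ,
      ENNReal.ofReal (1 / w n) * ∑' k : ℕ, ENNReal.ofReal (w (n + k) / ((n : ℝ) + k + 1))
        ≤ Mvw w w := fun n => le_iSup (fun n : ℕ =>
          ENNReal.ofReal (1 / w n) * ∑' k : ℕ, ENNReal.ofReal (w (n + k) / (n + k + 1))) n
  have hnz : ∀ n : ℕ, ENNReal.ofReal (1 / w n) ≠ 0 := by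
    intro n
    simp only [ne_eq, ENNReal.ofReal_eq_zero, not_le]
    have := hw n
    positivity
  have hne : ∀ n : ℕ, (∑' k : ℕ, ENNReal.ofReal (w (n + k) / ((n : ℝ) + k + 1))) ≠ ⊤ := by
    intro n htop
    apply hM
    rw [eq_top_iff]
    refine le_trans ?_ (hle n)
    rw [htop, ENNReal.mul_top (hnz n)]
  have hnonneg : ∀ n k : ℕ, 0 ≤ w (n + k) / ((n : ℝ) + k + 1) := by
    intro n k
    have := (hw (n + k)).le
    positivity
  have hsum : ∀ n, Summable fun j : ℕ => w (n + j) / ((n : ℝ) + (j : ℝ) + 1) := by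
    intro n
    have h1 : Summable fun k : ℕ => (w (n + k) / ((n : ℝ) + k + 1)).toNNReal := by
      rw [← ENNReal.tsum_coe_ne_top_iff_summable]
      convert hne n using 2 with k
      rfl
    have h2 := NNReal.summable_coe.mpr h1
    refine h2.congr fun k => ?_
    exact Real.coe_toNNReal _ (hnonneg n k)
  have hbound : ∀ n, (∑' j : ℕ, w (n + j) / ((n : ℝ) + (j : ℝ) + 1)) ≤ M * w n := by
    intro n
    have hb : ENNReal.ofReal ((1 / w n) * ∑' j : ℕ, w (n + j) / ((n : ℝ) + j + 1))
        ≤ Mvw w w := by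
      rw [ENNReal.ofReal_mul (by have := hw n; positivity : (0:ℝ) ≤ 1 / w n),
        ENNReal.ofReal_tsum_of_nonneg (hnonneg n) (hsum n)]
      exact hle n
    have hb' : (1 / w n) * (∑' j : ℕ, w (n + j) / ((n : ℝ) + j + 1)) ≤ M :=
      (ENNReal.ofReal_le_iff_le_toReal hM).mp hb
    rw [one_div, inv_mul_eq_div, div_le_iff₀ (hw n)] at hb'
    exact hb'
  refine ⟨M, ?_, hsum, hbound⟩
  have h1 := Summable.le_tsum (hsum 0) 0 (fun j _ => hnonneg 0 j)
  have h4 : w (0 + 0) / (((0:ℕ) : ℝ) + ((0:ℕ) : ℝ) + 1) = w 0 := by norm_num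
  nlinarith [hbound 0, hw 0, h1, h4]

lemma s_lower (w : ℕ → ℝ) (hw : ∀ n, 0 < w n) {M : ℝ} (hMpos : 0 < M)
    (hsum : ∀ n, Summable fun j : ℕ => w (n + j) / ((n : ℝ) + (j : ℝ) + 1))
    (hM1 : ∀ n, (∑' j : ℕ, w (n + j) / ((n : ℝ) + (j : ℝ) + 1)) ≤ M * w n)
    {s : ℝ} (hs : s ∈ Sset w) : 1 / M ≤ s := by
  set t : ℕ → ℝ := fun n => ∑' j : ℕ, w (n + j) / ((n : ℝ) + (j : ℝ) + 1) with ht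
  have tpos : ∀ n, 0 < t n := by
    intro n
    have h1 := Summable.le_tsum (hsum n) 0 (fun j _ => by have := (hw (n + j)).le; positivity)
    have h2 : 0 < w (n + 0) / ((n : ℝ) + ((0:ℕ) : ℝ) + 1) := by
      have := hw (n + 0); positivity
    exact lt_of_lt_of_le h2 h1
  have tnonneg : ∀ n, 0 ≤ t n := fun n => (tpos n).le
  have trec : ∀ n, t n = w n / ((n : ℝ) + 1) + t (n + 1) := by
    intro n
    rw [ht]
    simp only
    rw [Summable.tsum_eq_zero_add (hsum n)]
    congr 1
    · norm_num
    · apply tsum_congr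
      intro j
      have h1 : n + (j + 1) = (n + 1) + j := by omega
      rw [h1]
      push_cast
      ring_nf
  have tupper : ∀ n, t n ≤ t 0 * Real.exp (-(1/M) * ∑ j ∈ Finset.range n, 1 / ((j : ℝ) + 1)) := by
    intro n
    induction n with
    | zero => simp
    | succ n ih =>
      have hx : (0:ℝ) < (n : ℝ) + 1 := by positivity
      set x : ℝ := 1 / (M * ((n : ℝ) + 1)) with hxdef
      have hxnn : 0 ≤ x := by positivity
      have hwn : t n / M ≤ w n := by
        rw [div_le_iff₀ hMpos]
        linarith [hM1 n, mul_comm M (w n)]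
      have h4 : t n / M / ((n : ℝ) + 1) ≤ w n / ((n : ℝ) + 1) := by
        have := mul_le_mul_of_nonneg_right hwn (by positivity : (0:ℝ) ≤ ((n:ℝ)+1)⁻¹)
        simpa [div_eq_mul_inv] using this
      have key : t n * (1 - x) = t n - t n / M / ((n : ℝ) + 1) := by
        rw [hxdef]; field_simp
      have step1 : t (n+1) ≤ t n * (1 - x) := by
        have e1 := trec n
        linarith
      have step2 : t n * (1 - x) ≤ t n * Real.exp (-x) := by
        have h5 := Real.add_one_le_exp (-x)
        have h6 := tnonneg n
        nlinarith
      have step3 : t n * Real.exp (-x)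
          ≤ (t 0 * Real.exp (-(1/M) * ∑ j ∈ Finset.range n, 1/((j:ℝ)+1))) * Real.exp (-x) :=
        mul_le_mul_of_nonneg_right ih (Real.exp_pos _).le
      have step4 : (t 0 * Real.exp (-(1/M) * ∑ j ∈ Finset.range n, 1/((j:ℝ)+1))) * Real.exp (-x)
          = t 0 * Real.exp (-(1/M) * ∑ j ∈ Finset.range (n+1), 1/((j:ℝ)+1)) := by
        rw [Finset.sum_range_succ, mul_assoc, ← Real.exp_add]
        congr 2
        rw [hxdef]
        field_simp
        ring
      calc t (n+1) ≤ t n * (1 - x) := step1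
        _ ≤ t n * Real.exp (-x) := step2
        _ ≤ _ := step3
        _ = _ := step4
  have tup2 : ∀ n : ℕ, t n ≤ t 0 * ((n:ℝ)+1) ^ (-(1/M)) := by
    intro n
    have h1 : ((n:ℝ)+1) ^ (-(1/M)) = Real.exp (-(1/M) * Real.log ((n:ℝ)+1)) := by
      rw [Real.rpow_def_of_pos (by positivity), mul_comm]
    have h2 : -(1/M) * ∑ j ∈ Finset.range n, 1/((j:ℝ)+1) ≤ -(1/M) * Real.log ((n:ℝ)+1) := by
      have h3 := log_le_harmonic n
      have h1M : (0:ℝ) ≤ 1/M := by positivity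
      nlinarith
    have h3 := Real.exp_le_exp.mpr h2
    rw [h1]
    calc t n ≤ t 0 * Real.exp (-(1/M) * ∑ j ∈ Finset.range n, 1/((j:ℝ)+1)) := tupper n
      _ ≤ t 0 * Real.exp (-(1/M) * Real.log ((n:ℝ)+1)) :=
          mul_le_mul_of_nonneg_left h3 (tnonneg 0)
  obtain ⟨B, hB⟩ := hs
  have hBn : ∀ n : ℕ, 1 / (((n:ℝ)+1) ^ s * w n) ≤ B := fun n => hB (Set.mem_range_self n)
  have hB0 : 0 < B := by
    refine lt_of_lt_of_le ?_ (hBn 0)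
    have := hw 0
    positivity
  set s' : ℝ := max s 0 with hs'def
  have hs'0 : (0:ℝ) ≤ s' := le_max_right _ _
  have hwlow : ∀ n : ℕ, 1 / (B * ((n:ℝ)+1) ^ s') ≤ w n := by
    intro n
    have h1 : (0:ℝ) < ((n:ℝ)+1) ^ s := by positivity
    have h2 : (0:ℝ) < ((n:ℝ)+1) ^ s' := by positivity
    have h3 : ((n:ℝ)+1) ^ s ≤ ((n:ℝ)+1) ^ s' :=
      Real.rpow_le_rpow_of_exponent_le
        (by have := Nat.cast_nonneg (α := ℝ) n; linarith) (le_max_left s 0)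
    have h4 := hBn n
    rw [div_le_iff₀ (by have := hw n; positivity)] at h4
    rw [div_le_iff₀ (by positivity)]
    nlinarith [hw n, mul_le_mul_of_nonneg_left h3 (mul_pos hB0 (hw n)).le]
  have tlow : ∀ n : ℕ, ((n:ℝ)+1) * (1 / (B * (2*((n:ℝ)+1)) ^ (s'+1))) ≤ t n := by
    intro n
    have hps : ∀ j ∈ Finset.range (n+1),
        (1 / (B * (2*((n:ℝ)+1)) ^ (s'+1))) ≤ w (n+j) / ((n:ℝ)+(j:ℝ)+1) := by
      intro j hj
      have hj' : (j:ℝ) ≤ (n:ℝ) := by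
        have := Finset.mem_range.mp hj
        exact_mod_cast Nat.lt_succ_iff.mp this
      have hd : (0:ℝ) < (n:ℝ)+(j:ℝ)+1 := by positivity
      have h5 := hwlow (n+j)
      have hcast : (((n+j:ℕ)):ℝ) + 1 = (n:ℝ)+(j:ℝ)+1 := by push_cast; ring
      rw [hcast] at h5
      have h6 : ((n:ℝ)+(j:ℝ)+1) ^ (s'+1) ≤ (2*((n:ℝ)+1)) ^ (s'+1) :=
        Real.rpow_le_rpow (by positivity) (by linarith) (by linarith)
      have h7 : ((n:ℝ)+(j:ℝ)+1) ^ s' * ((n:ℝ)+(j:ℝ)+1) = ((n:ℝ)+(j:ℝ)+1) ^ (s'+1) :=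
        (Real.rpow_add_one hd.ne' s').symm
      have h8 : 1 / (B * ((n:ℝ)+(j:ℝ)+1) ^ (s'+1))
          = (1 / (B * ((n:ℝ)+(j:ℝ)+1) ^ s')) / ((n:ℝ)+(j:ℝ)+1) := by
        rw [div_div, mul_assoc, h7]
      calc 1 / (B * (2*((n:ℝ)+1)) ^ (s'+1)) ≤ 1 / (B * ((n:ℝ)+(j:ℝ)+1) ^ (s'+1)) := by
            apply one_div_le_one_div_of_le (by positivity)
            nlinarith [hB0]
        _ = (1 / (B * ((n:ℝ)+(j:ℝ)+1) ^ s')) / ((n:ℝ)+(j:ℝ)+1) := h8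
        _ ≤ w (n+j) / ((n:ℝ)+(j:ℝ)+1) := by
            have := mul_le_mul_of_nonneg_right h5 (by positivity : (0:ℝ) ≤ ((n:ℝ)+(j:ℝ)+1)⁻¹)
            simpa [div_eq_mul_inv] using this
    have h9 := Summable.sum_le_tsum (Finset.range (n+1))
      (fun j _ => by have := (hw (n+j)).le; positivity) (hsum n)
    have h10 := Finset.sum_le_sum hps
    rw [Finset.sum_const, Finset.card_range, nsmul_eq_mul] at h10
    have hcast2 : ((n+1:ℕ):ℝ) = (n:ℝ)+1 := by push_cast; ring
    rw [hcast2] at h10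
    exact le_trans h10 h9
  have hK : ∀ n : ℕ, ((n:ℝ)+1) ^ (1/M - s') ≤ t 0 * B * 2 ^ (s'+1) := by
    intro n
    have hn1 : (0:ℝ) < (n:ℝ)+1 := by positivity
    set P : ℝ := ((n:ℝ)+1) ^ s' with hP
    set Q : ℝ := ((n:ℝ)+1) ^ (1/M) with hQ
    set c2 : ℝ := (2:ℝ) ^ (s'+1) with hc2
    have hPpos : 0 < P := by rw [hP]; positivity
    have hQpos : 0 < Q := by rw [hQ]; positivity
    have hc2pos : 0 < c2 := by rw [hc2]; positivity
    have e1 : (2*((n:ℝ)+1)) ^ (s'+1) = c2 * ((n:ℝ)+1) ^ (s'+1) :=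
      Real.mul_rpow (by norm_num) hn1.le
    have e2 : ((n:ℝ)+1) ^ (s'+1) = P * ((n:ℝ)+1) := Real.rpow_add_one hn1.ne' s'
    have e3 : ((n:ℝ)+1) ^ (-(1/M)) = Q⁻¹ := Real.rpow_neg hn1.le _
    have e4 : ((n:ℝ)+1) ^ (1/M - s') = Q / P := Real.rpow_sub hn1 _ _
    have h1 := tlow n
    have h2 := tup2 n
    rw [e1, e2] at h1
    rw [e3] at h2
    have e5 : ((n:ℝ)+1) * (1 / (B * (c2 * (P * ((n:ℝ)+1))))) = 1 / (B * c2 * P) := by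
      field_simp
    rw [e5] at h1
    have h3 : 1 / (B * c2 * P) ≤ t 0 * Q⁻¹ := le_trans h1 h2
    have h4 := mul_le_mul_of_nonneg_left h3 hQpos.le
    have h5 : Q * (t 0 * Q⁻¹) = t 0 := by field_simp
    have h6 : Q * (1 / (B * c2 * P)) = Q / (B * c2 * P) := by ring
    rw [h5, h6] at h4
    have h7 : Q ≤ t 0 * (B * c2 * P) := (div_le_iff₀ (by positivity)).mp h4
    rw [e4, div_le_iff₀ hPpos]
    nlinarith [h7]
  by_contra hcon
  rw [not_le] at hcon
  have hs'lt : s' < 1/M := max_lt hcon (by positivity)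
  have hTT : Tendsto (fun n : ℕ => ((n:ℝ)+1) ^ (1/M - s')) atTop atTop :=
    (tendsto_rpow_atTop (by linarith)).comp
      (tendsto_atTop_add_const_right atTop 1 tendsto_natCast_atTop_atTop)
  obtain ⟨n, hn⟩ := (hTT.eventually_gt_atTop (t 0 * B * 2 ^ (s'+1))).exists
  exact absurd (hK n) (not_le.mpr hn)

def psi (a : ℂ) (k : ℕ) : ℂ := ∏ j ∈ Finset.range k, (1 - a / ((j : ℂ) + 1))

lemma psi_zero (a : ℂ) : psi a 0 = 1 := by simp [psi]

lemma psi_succ (a : ℂ) (k : ℕ) : psi a (k+1) = psi a k * (1 - a / ((k : ℂ) + 1)) := by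
  rw [psi, Finset.prod_range_succ]; rfl

lemma psi_sub (a : ℂ) (k : ℕ) :
    psi a k - psi a (k+1) = a * (psi a k / ((k : ℂ) + 1)) := by
  rw [psi_succ]
  have h : ((k : ℂ) + 1) ≠ 0 := Nat.cast_add_one_ne_zero k
  field_simp
  ring

/-- the telescoping tail sum -/
lemma tsum_psi_tail {a : ℂ} (ha : a ≠ 0)
    (hlim : Tendsto (fun k => psi a k) atTop (𝓝 0)) (k : ℕ)
    (hsum : Summable fun j : ℕ => psi a (k + j) / (((k + j : ℕ) : ℂ) + 1)) :
    ∑' j : ℕ, psi a (k + j) / (((k + j : ℕ) : ℂ) + 1) = a⁻¹ * psi a k := by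
  have hterm : ∀ j : ℕ, psi a (k + j) / (((k + j : ℕ) : ℂ) + 1)
      = a⁻¹ * (psi a (k + j) - psi a (k + j + 1)) := by
    intro j
    rw [psi_sub a (k + j), inv_mul_cancel_left₀ ha]
  have hpart : Tendsto (fun N => ∑ j ∈ Finset.range N,
      a⁻¹ * (psi a (k + j) - psi a (k + j + 1))) atTop (𝓝 (a⁻¹ * psi a k)) := by
    have hN : ∀ N, ∑ j ∈ Finset.range N, a⁻¹ * (psi a (k + j) - psi a (k + j + 1))
        = a⁻¹ * (psi a k - psi a (k + N)) := by
      intro N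
      rw [← Finset.mul_sum]
      congr 1
      exact Finset.sum_range_sub' (f := fun j => psi a (k + j)) N
    simp only [hN]
    have h2 : Tendsto (fun N : ℕ => psi a (k + N)) atTop (𝓝 0) := by
      apply hlim.comp
      exact tendsto_atTop_mono (fun N => Nat.le_add_left N k) tendsto_id
    have h3 : Tendsto (fun N : ℕ => a⁻¹ * (psi a k - psi a (k + N))) atTop
        (𝓝 (a⁻¹ * (psi a k - 0))) := (tendsto_const_nhds.sub h2).const_mul _
    simpa using h3
  have hsum' : Summable fun j : ℕ => a⁻¹ * (psi a (k + j) - psi a (k + j + 1)) :=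
    hsum.congr fun j => (hterm j)
  have := hsum'.hasSum.tendsto_sum_nat
  have heq := tendsto_nhds_unique this hpart
  calc ∑' j : ℕ, psi a (k + j) / (((k + j : ℕ) : ℂ) + 1)
      = ∑' j : ℕ, a⁻¹ * (psi a (k + j) - psi a (k + j + 1)) := tsum_congr hterm
    _ = a⁻¹ * psi a k := heq

lemma psi_int_zero {m : ℕ} (hm : 1 ≤ m) {k : ℕ} (hk : m ≤ k) : psi (m : ℂ) k = 0 := by
  apply Finset.prod_eq_zero (i := m - 1)
  · exact Finset.mem_range.mpr (by omega)
  · have h : ((m - 1 : ℕ) : ℂ) + 1 = (m : ℂ) := by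
      have : ((m - 1 : ℕ) : ℂ) = (m : ℂ) - 1 := by
        push_cast [Nat.cast_sub hm]
        ring
      rw [this]; ring
    have hm0 : (m:ℂ) ≠ 0 := Nat.cast_ne_zero.mpr (by omega)
    rw [h, div_self hm0, sub_self]

def qfun (a : ℂ) (s : ℝ) (j : ℕ) : ℝ :=
  ‖1 - a / ((j : ℂ) + 1)‖ * Real.exp (s / ((j:ℝ)+1))

lemma qfun_nonneg (a : ℂ) (s : ℝ) (j : ℕ) : 0 ≤ qfun a s j := by
  rw [qfun]; positivity

lemma stepA {a : ℂ} {s : ℝ} (hs : 0 < s) (k : ℕ) :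
    ‖psi a k‖ * ((k:ℝ)+1) ^ s ≤ ∏ j ∈ Finset.range k, qfun a s j := by
  have h1 : ‖psi a k‖ = ∏ j ∈ Finset.range k, ‖1 - a / ((j : ℂ) + 1)‖ := by
    rw [psi, norm_prod]
  have h2 : ((k:ℝ)+1) ^ s ≤ ∏ j ∈ Finset.range k, Real.exp (s / ((j:ℝ)+1)) := by
    rw [← Real.exp_sum]
    rw [Real.rpow_def_of_pos (by positivity)]
    apply Real.exp_le_exp.mpr
    rw [mul_comm]
    have h3 := log_le_harmonic k
    have h4 : ∑ j ∈ Finset.range k, s / ((j:ℝ)+1)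
        = s * ∑ j ∈ Finset.range k, 1 / ((j:ℝ)+1) := by
      rw [Finset.mul_sum]
      exact Finset.sum_congr rfl fun j _ => by ring
    rw [h4]
    exact mul_le_mul_of_nonneg_left h3 hs.le
  calc ‖psi a k‖ * ((k:ℝ)+1) ^ s
      ≤ (∏ j ∈ Finset.range k, ‖1 - a / ((j : ℂ) + 1)‖)
          * ∏ j ∈ Finset.range k, Real.exp (s / ((j:ℝ)+1)) :=
        mul_le_mul (le_of_eq h1) h2 (by positivity)
          (Finset.prod_nonneg fun j _ => norm_nonneg _)
    _ = ∏ j ∈ Finset.range k, qfun a s j := by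
        rw [← Finset.prod_mul_distrib]
        exact Finset.prod_congr rfl fun j _ => rfl

lemma stepB {a : ℂ} {s : ℝ} (hs : 0 < s) (hsa : s < a.re) :
    ∃ N : ℕ, ∀ j : ℕ, N ≤ j → qfun a s j ≤ 1 := by
  set u₀ : ℝ := min (2*(a.re - s)/(Complex.normSq a + 1)) (1/(s+1)) with hu₀
  have hnsq : 0 ≤ Complex.normSq a := Complex.normSq_nonneg a
  have hu₀pos : 0 < u₀ := by
    apply lt_min
    · have : 0 < a.re - s := by linarith
      positivity
    · positivity
  obtain ⟨N, hN⟩ := exists_nat_ge (1/u₀)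
  refine ⟨N, fun j hj => ?_⟩
  set u : ℝ := 1/((j:ℝ)+1) with hu
  have hjN : (N:ℝ) ≤ (j:ℝ) := by exact_mod_cast hj
  have hupos : 0 < u := by positivity
  have huu₀ : u ≤ u₀ := by
    rw [hu, div_le_iff₀ (by positivity)]
    have h5 : 1/u₀ ≤ (j:ℝ) + 1 := by linarith
    calc (1:ℝ) = u₀ * (1/u₀) := by field_simp
      _ ≤ u₀ * ((j:ℝ)+1) := mul_le_mul_of_nonneg_left h5 hu₀pos.le
  have hsu : s * u < 1 := by
    have h6 : u ≤ 1/(s+1) := le_trans huu₀ (min_le_right _ _)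
    have h7 : s * u ≤ s * (1/(s+1)) := mul_le_mul_of_nonneg_left h6 hs.le
    have h8 : s * (1/(s+1)) < 1 := by
      rw [mul_one_div, div_lt_one (by linarith)]
      linarith
    linarith
  have key2 : u * (Complex.normSq a + 1) ≤ 2*(a.re - s) :=
    (le_div_iff₀ (by positivity)).mp (le_trans huu₀ (min_le_left _ _))
  have hcast : a / ((j : ℂ) + 1) = a * ((u : ℝ) : ℂ) := by
    rw [hu]
    push_cast
    ring
  have h1 : ‖1 - a * ((u:ℝ):ℂ)‖^2 = 1 - 2*a.re*u + Complex.normSq a * u^2 := by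
    rw [Complex.sq_norm]
    simp [Complex.normSq_apply, Complex.sub_re, Complex.sub_im, Complex.mul_re,
      Complex.mul_im, Complex.ofReal_re, Complex.ofReal_im]
    ring
  have h2 : 1 - 2*a.re*u + Complex.normSq a * u^2 ≤ (1 - s*u)^2 := by
    nlinarith [mul_le_mul_of_nonneg_left key2 hupos.le, sq_nonneg u, sq_nonneg (s*u)]
  have h3 : Real.exp (s*u) * (1 - s*u) ≤ 1 := by
    have h3a := Real.add_one_le_exp (-(s*u))
    have h3b : Real.exp (s*u) * Real.exp (-(s*u)) = 1 := by
      rw [← Real.exp_add]; simp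
    nlinarith [Real.exp_pos (s*u)]
  have hx : ‖1 - a * ((u:ℝ):ℂ)‖^2 ≤ (1 - s*u)^2 := by rw [h1]; exact h2
  have hz0 : 0 ≤ (1 - s*u) * Real.exp (s*u) := by
    have := Real.exp_pos (s*u)
    nlinarith
  have hy : ((1 - s*u) * Real.exp (s*u))^2 ≤ 1 := by nlinarith [h3]
  have hsq : (‖1 - a * ((u:ℝ):ℂ)‖ * Real.exp (s*u))^2 ≤ 1 := by
    calc (‖1 - a * ((u:ℝ):ℂ)‖ * Real.exp (s*u))^2
        = ‖1 - a * ((u:ℝ):ℂ)‖^2 * (Real.exp (s*u))^2 := mul_pow _ _ _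
      _ ≤ (1 - s*u)^2 * (Real.exp (s*u))^2 :=
          mul_le_mul_of_nonneg_right hx (sq_nonneg _)
      _ = ((1 - s*u) * Real.exp (s*u))^2 := (mul_pow _ _ _).symm
      _ ≤ 1 := hy
  have hfin : ‖1 - a * ((u:ℝ):ℂ)‖ * Real.exp (s*u) ≤ 1 := by
    have hnn : 0 ≤ ‖1 - a * ((u:ℝ):ℂ)‖ * Real.exp (s*u) := by positivity
    nlinarith [hsq, hnn]
  rw [qfun, hcast]
  have heq : s / ((j:ℝ)+1) = s * u := by rw [hu]; ring
  rw [heq]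
  exact hfin

lemma psi_bound {a : ℂ} {s : ℝ} (hs : 0 < s) (hsa : s < a.re) :
    ∃ C : ℝ, 0 < C ∧ ∀ k : ℕ, ‖psi a k‖ * ((k:ℝ)+1) ^ s ≤ C := by
  obtain ⟨N, hN⟩ := stepB hs hsa
  set C : ℝ := ∏ j ∈ Finset.range N, max (qfun a s j) 1 with hC
  have hC1 : (1:ℝ) ≤ C := by
    rw [hC]
    calc (1:ℝ) = ∏ _j ∈ Finset.range N, (1:ℝ) := by simp
      _ ≤ ∏ j ∈ Finset.range N, max (qfun a s j) 1 :=
        Finset.prod_le_prod (fun _ _ => zero_le_one) (fun j _ => le_max_right _ _)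
  have hR : ∀ m n : ℕ, m ≤ n → (∏ j ∈ Finset.range m, max (qfun a s j) 1)
      ≤ ∏ j ∈ Finset.range n, max (qfun a s j) 1 := by
    intro m n hmn
    induction n, hmn using Nat.le_induction with
    | base => exact le_refl _
    | succ n hmn ih =>
      rw [Finset.prod_range_succ]
      have hpos : 0 ≤ ∏ j ∈ Finset.range n, max (qfun a s j) 1 :=
        Finset.prod_nonneg fun j _ => le_trans zero_le_one (le_max_right _ _)
      exact le_trans ih (le_mul_of_one_le_right hpos (le_max_right _ _))
  have hprod : ∀ k, ∏ j ∈ Finset.range k, qfun a s j ≤ C := by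
    intro k
    induction k with
    | zero => simpa using hC1
    | succ k ih =>
      rcases le_or_gt N k with h | h
      · rw [Finset.prod_range_succ]
        have h1 : 0 ≤ ∏ j ∈ Finset.range k, qfun a s j :=
          Finset.prod_nonneg fun j _ => qfun_nonneg a s j
        calc (∏ j ∈ Finset.range k, qfun a s j) * qfun a s k
            ≤ (∏ j ∈ Finset.range k, qfun a s j) * 1 :=
              mul_le_mul_of_nonneg_left (hN k h) h1
          _ = ∏ j ∈ Finset.range k, qfun a s j := mul_one _
          _ ≤ C := ih
      · calc ∏ j ∈ Finset.range (k+1), qfun a s j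
            ≤ ∏ j ∈ Finset.range (k+1), max (qfun a s j) 1 :=
              Finset.prod_le_prod (fun j _ => qfun_nonneg a s j) (fun j _ => le_max_left _ _)
          _ ≤ C := hR (k+1) N h
  exact ⟨C, by linarith, fun k => le_trans (stepA hs k) (hprod k)⟩



lemma ell_summable (x : ellOne) : Summable fun n => ‖(x : ∀ _ : ℕ, ℂ) n‖ := by
  have h := (lp.memℓp x).summable (p := 1) (by norm_num)
  simpa using h

lemma summable_mul_lp (φ : ℕ → ℂ) {B : ℝ} (hb : ∀ n, ‖φ n‖ ≤ B) (x : ellOne) :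
    Summable fun n => φ n * (x : ∀ _ : ℕ, ℂ) n := by
  apply Summable.of_norm
  apply Summable.of_nonneg_of_le (fun n => norm_nonneg _) (fun n => ?_)
    ((ell_summable x).mul_left B)
  rw [norm_mul]
  exact mul_le_mul_of_nonneg_right (hb n) (norm_nonneg _)

lemma mem_spectrum_of_functional (T : ellOne →L[ℂ] ellOne) (lam : ℂ) (φ : ℕ → ℂ)
    {B : ℝ} (hb : ∀ n, ‖φ n‖ ≤ B) (h0 : φ 0 ≠ 0)
    (heig : ∀ x : ellOne,
      ∑' n, φ n * (T x : ∀ _ : ℕ, ℂ) n = lam * ∑' n, φ n * (x : ∀ _ : ℕ, ℂ) n) :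
    lam ∈ spectrum ℂ T := by
  rw [spectrum.mem_iff]
  intro hunit
  obtain ⟨u, hu⟩ := hunit
  set e₀ : ellOne := lp.single 1 0 (1 : ℂ) with he₀
  set x : ellOne := (↑u⁻¹ : ellOne →L[ℂ] ellOne) e₀ with hx
  have hA : (algebraMap ℂ (ellOne →L[ℂ] ellOne) lam - T) x = e₀ := by
    rw [← hu, hx]
    rw [← ContinuousLinearMap.mul_apply]
    rw [← Units.val_mul, mul_inv_cancel, Units.val_one, ContinuousLinearMap.one_apply]
  have hpt : ∀ n, (e₀ : ∀ _ : ℕ, ℂ) n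
      = lam * (x : ∀ _ : ℕ, ℂ) n - (T x : ∀ _ : ℕ, ℂ) n := by
    intro n
    rw [← hA]
    have h1 : (algebraMap ℂ (ellOne →L[ℂ] ellOne) lam - T) x = lam • x - T x := by
      simp [Algebra.algebraMap_eq_smul_one, ContinuousLinearMap.sub_apply]
    rw [h1, lp.coeFn_sub, Pi.sub_apply, lp.coeFn_smul, Pi.smul_apply, smul_eq_mul]
  have hs1 : Summable fun n => φ n * (x : ∀ _ : ℕ, ℂ) n := summable_mul_lp φ hb x
  have hs2 : Summable fun n => φ n * (T x : ∀ _ : ℕ, ℂ) n := summable_mul_lp φ hb (T x)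
  have key : ∑' n, φ n * (e₀ : ∀ _ : ℕ, ℂ) n = 0 := by
    calc ∑' n, φ n * (e₀ : ∀ _ : ℕ, ℂ) n
        = ∑' n, (lam * (φ n * (x : ∀ _ : ℕ, ℂ) n) - φ n * (T x : ∀ _ : ℕ, ℂ) n) := by
          apply tsum_congr
          intro n
          rw [hpt n]
          ring
      _ = lam * (∑' n, φ n * (x : ∀ _ : ℕ, ℂ) n) - ∑' n, φ n * (T x : ∀ _ : ℕ, ℂ) n := by
          rw [Summable.tsum_sub (hs1.mul_left lam) hs2, tsum_mul_left]
      _ = 0 := by rw [heig x]; ring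
  have hval : ∑' n, φ n * (e₀ : ∀ _ : ℕ, ℂ) n = φ 0 := by
    rw [tsum_eq_single 0]
    · rw [he₀]
      have h2 : (lp.single 1 0 (1:ℂ) : ∀ _ : ℕ, ℂ) 0 = 1 := lp.single_apply_self _ _ _
      rw [h2, mul_one]
    · intro n hn
      have h2 : (lp.single 1 0 (1:ℂ) : ∀ _ : ℕ, ℂ) n = 0 := lp.single_apply_ne _ _ _ hn
      rw [he₀, h2, mul_zero]
  rw [key] at hval
  exact h0 hval.symm

def Xfun (w : ℕ → ℝ) (x : ellOne) (k : ℕ) : ℂ := (x : ∀ _ : ℕ, ℂ) k / ((w k : ℝ) : ℂ)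

def cfun (a : ℂ) (n : ℕ) : ℂ := psi a n * (((((n:ℝ)+1))⁻¹ : ℝ) : ℂ)

lemma cfun_eq (a : ℂ) (n : ℕ) : cfun a n = psi a n / ((n : ℂ) + 1) := by
  rw [cfun]
  push_cast
  ring

lemma eigen_tsum (w : ℕ → ℝ) (hw : ∀ n, 0 < w n) {M : ℝ}
    (hsum : ∀ n, Summable fun j : ℕ => w (n + j) / ((n : ℝ) + (j : ℝ) + 1))
    (hM1 : ∀ n, (∑' j : ℕ, w (n + j) / ((n : ℝ) + (j : ℝ) + 1)) ≤ M * w n)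
    (T : ellOne →L[ℂ] ellOne) (hT : IsCesaroOp w w T)
    {a : ℂ} (ha : a ≠ 0) {B : ℝ} (hB0 : 0 ≤ B)
    (hψb : ∀ k, ‖psi a k‖ ≤ B * w k)
    (hlim : Tendsto (fun k => psi a k) atTop (𝓝 0))
    (x : ellOne) :
    ∑' n, (psi a n / ((w n : ℝ) : ℂ)) * (T x : ∀ _ : ℕ, ℂ) n
      = a⁻¹ * ∑' n, (psi a n / ((w n : ℝ) : ℂ)) * (x : ∀ _ : ℕ, ℂ) n := by
  have hXnorm : ∀ k, ‖Xfun w x k‖ = ‖(x : ∀ _ : ℕ, ℂ) k‖ / w k := by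
    intro k
    rw [Xfun, norm_div, Complex.norm_real, Real.norm_eq_abs, abs_of_pos (hw k)]
  have hcnorm : ∀ n, ‖cfun a n‖ = ‖psi a n‖ / ((n:ℝ)+1) := by
    intro n
    rw [cfun, norm_mul, Complex.norm_real, Real.norm_eq_abs, abs_inv,
      abs_of_pos (by positivity : (0:ℝ) < (n:ℝ)+1), div_eq_mul_inv]
  have hcle : ∀ k j : ℕ, ‖cfun a (k+j)‖ ≤ B * (w (k+j) / ((k:ℝ)+(j:ℝ)+1)) := by
    intro k j
    have hD : (0:ℝ) < (k:ℝ)+(j:ℝ)+1 := by positivity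
    have hc2 : (((k+j:ℕ)):ℝ) + 1 = (k:ℝ)+(j:ℝ)+1 := by push_cast; ring
    rw [hcnorm (k+j), hc2]
    calc ‖psi a (k+j)‖ / ((k:ℝ)+(j:ℝ)+1) ≤ (B * w (k+j)) / ((k:ℝ)+(j:ℝ)+1) := by
          have h3 := mul_le_mul_of_nonneg_right (hψb (k+j))
            (by positivity : (0:ℝ) ≤ ((k:ℝ)+(j:ℝ)+1)⁻¹)
          simpa [div_eq_mul_inv] using h3
      _ = B * (w (k+j) / ((k:ℝ)+(j:ℝ)+1)) := by ring
  have hrow : ∀ k, Summable fun j => ‖cfun a (k+j)‖ := by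
    intro k
    apply Summable.of_nonneg_of_le (fun j => norm_nonneg _) (fun j => hcle k j)
      ((hsum k).mul_left B)
  have hrowsum : ∀ k, (∑' j, ‖cfun a (k+j)‖) ≤ B * (M * w k) := by
    intro k
    calc (∑' j, ‖cfun a (k+j)‖)
        ≤ ∑' j, B * (w (k+j) / ((k:ℝ)+(j:ℝ)+1)) :=
          Summable.tsum_le_tsum (fun j => hcle k j) (hrow k) ((hsum k).mul_left B)
      _ = B * ∑' j, w (k+j) / ((k:ℝ)+(j:ℝ)+1) := tsum_mul_left
      _ ≤ B * (M * w k) := mul_le_mul_of_nonneg_left (hM1 k) hB0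
  have hFnorm : Summable fun p : ℕ × ℕ => ‖Xfun w x p.1 * cfun a (p.1+p.2)‖ := by
    rw [summable_prod_of_nonneg (fun p => norm_nonneg _)]
    constructor
    · intro k
      apply Summable.of_nonneg_of_le (fun j => norm_nonneg _)
        (fun j => le_of_eq (norm_mul _ _)) ?_
      exact ((hrow k).mul_left ‖Xfun w x k‖).congr fun j => rfl
    · apply Summable.of_nonneg_of_le (fun k => tsum_nonneg fun j => norm_nonneg _)
        (fun k => ?_) ((ell_summable x).mul_left (B*M))
      have h1 : ∑' j, ‖Xfun w x k * cfun a (k+j)‖ = ‖Xfun w x k‖ * ∑' j, ‖cfun a (k+j)‖ := by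
        rw [← tsum_mul_left]
        exact tsum_congr fun j => norm_mul _ _
      rw [h1]
      calc ‖Xfun w x k‖ * ∑' j, ‖cfun a (k+j)‖
          ≤ ‖Xfun w x k‖ * (B * (M * w k)) :=
            mul_le_mul_of_nonneg_left (hrowsum k) (norm_nonneg _)
        _ = B * M * ‖(x : ∀ _ : ℕ, ℂ) k‖ := by
            rw [hXnorm k]
            field_simp [(hw k).ne']
  have hF : Summable fun p : ℕ × ℕ => Xfun w x p.1 * cfun a (p.1+p.2) :=
    Summable.of_norm hFnorm
  -- evaluate the double sum one way (RHS)
  have htel : ∀ k, ∑' j, cfun a (k+j) = a⁻¹ * psi a k := by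
    intro k
    have hs2 : Summable fun j => psi a (k + j) / (((k + j : ℕ) : ℂ) + 1) :=
      (Summable.of_norm (hrow k)).congr fun j => cfun_eq a (k+j)
    calc ∑' j, cfun a (k+j) = ∑' j, psi a (k + j) / (((k + j : ℕ) : ℂ) + 1) :=
          tsum_congr fun j => cfun_eq a (k+j)
      _ = a⁻¹ * psi a k := tsum_psi_tail ha hlim k hs2
  have hRHS : ∑' p : ℕ × ℕ, Xfun w x p.1 * cfun a (p.1+p.2)
      = a⁻¹ * ∑' n, (psi a n / ((w n : ℝ) : ℂ)) * (x : ∀ _ : ℕ, ℂ) n := by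
    rw [Summable.tsum_prod hF]
    have h2 : ∀ k, ∑' j, Xfun w x k * cfun a (k+j) = Xfun w x k * (a⁻¹ * psi a k) := by
      intro k
      rw [tsum_mul_left, htel k]
    calc ∑' k, ∑' j, Xfun w x k * cfun a (k+j)
        = ∑' k, Xfun w x k * (a⁻¹ * psi a k) := tsum_congr h2
      _ = ∑' k, a⁻¹ * ((psi a k / ((w k : ℝ) : ℂ)) * (x : ∀ _ : ℕ, ℂ) k) := by
          apply tsum_congr
          intro k
          rw [Xfun]
          ring
      _ = a⁻¹ * ∑' n, (psi a n / ((w n : ℝ) : ℂ)) * (x : ∀ _ : ℕ, ℂ) n := tsum_mul_left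
  -- evaluate the double sum the other way (LHS)
  set G : ℕ × ℕ → ℂ := fun q => if q.2 ≤ q.1 then Xfun w x q.2 * cfun a q.1 else 0 with hG
  set i : ℕ × ℕ → ℕ × ℕ := fun p => (p.1 + p.2, p.1) with hi_def
  have hi : Function.Injective i := by
    intro p q h
    rw [hi_def] at h
    simp only [Prod.mk.injEq] at h
    obtain ⟨h1, h2⟩ := h
    have : p.2 = q.2 := by omega
    exact Prod.ext h2 this
  have hGi : ∀ p : ℕ × ℕ, G (i p) = Xfun w x p.1 * cfun a (p.1+p.2) := by
    intro p
    rw [hG, hi_def]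
    exact if_pos (Nat.le_add_right _ _)
  have hGsupp : ∀ q : ℕ × ℕ, q ∉ Set.range i → G q = 0 := by
    intro q hq
    rw [hG]
    apply if_neg
    intro hle
    apply hq
    refine ⟨(q.2, q.1 - q.2), ?_⟩
    rw [hi_def]
    have : q.2 + (q.1 - q.2) = q.1 := by omega
    simp [this]
  have hGcomp : Summable (G ∘ i) := hF.congr fun p => (hGi p).symm
  have hGsum : Summable G := (hi.summable_iff hGsupp).mp hGcomp
  have hsupp : Function.support G ⊆ Set.range i := by
    intro q hq
    by_contra h
    exact hq (hGsupp q h)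
  have hGtsum : ∑' q : ℕ × ℕ, G q = ∑' p : ℕ × ℕ, Xfun w x p.1 * cfun a (p.1+p.2) := by
    calc ∑' q : ℕ × ℕ, G q = ∑' p : ℕ × ℕ, G (i p) := (hi.tsum_eq hsupp).symm
      _ = ∑' p : ℕ × ℕ, Xfun w x p.1 * cfun a (p.1+p.2) := tsum_congr hGi
  have hinner : ∀ n, ∑' k, G (n, k) = cfun a n * ∑ k ∈ Finset.range (n+1), Xfun w x k := by
    intro n
    rw [tsum_eq_sum (s := Finset.range (n+1)) ?_]
    · rw [Finset.mul_sum]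
      apply Finset.sum_congr rfl
      intro k hk
      rw [hG]
      simp only
      rw [if_pos (Nat.lt_succ_iff.mp (Finset.mem_range.mp hk))]
      ring
    · intro k hk
      rw [hG]
      apply if_neg
      intro hle
      exact hk (Finset.mem_range.mpr (Nat.lt_succ_of_le hle))
  have hTn : ∀ n, (psi a n / ((w n : ℝ) : ℂ)) * (T x : ∀ _ : ℕ, ℂ) n
      = cfun a n * ∑ k ∈ Finset.range (n+1), Xfun w x k := by
    intro n
    rw [hT x n]
    have hwn : ((w n : ℝ) : ℂ) ≠ 0 := Complex.ofReal_ne_zero.mpr (hw n).ne'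
    have hn1 : ((n:ℂ)+1) ≠ 0 := Nat.cast_add_one_ne_zero n
    have hsumeq : ∑ k ∈ Finset.range (n + 1), (x : ∀ _ : ℕ, ℂ) k / ((w k : ℝ) : ℂ)
        = ∑ k ∈ Finset.range (n+1), Xfun w x k := rfl
    rw [hsumeq, cfun_eq]
    have hcast : ((w n / ((n:ℝ) + 1) : ℝ) : ℂ) = ((w n : ℝ) : ℂ) / ((n:ℂ)+1) := by
      push_cast
      ring
    rw [hcast]
    field_simp
  calc ∑' n, (psi a n / ((w n : ℝ) : ℂ)) * (T x : ∀ _ : ℕ, ℂ) n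
      = ∑' n, cfun a n * ∑ k ∈ Finset.range (n+1), Xfun w x k := tsum_congr hTn
    _ = ∑' n, ∑' k, G (n, k) := (tsum_congr hinner).symm
    _ = ∑' q : ℕ × ℕ, G q := (Summable.tsum_prod hGsum).symm
    _ = ∑' p : ℕ × ℕ, Xfun w x p.1 * cfun a (p.1+p.2) := hGtsum
    _ = a⁻¹ * ∑' n, (psi a n / ((w n : ℝ) : ℂ)) * (x : ∀ _ : ℕ, ℂ) n := hRHS

end Aux11

namespace Aux11

/-- Master lemma: each `a⁻¹` with a good eigen-product is in the spectrum. -/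
lemma point_in_spectrum (w : ℕ → ℝ) (hw : ∀ n, 0 < w n) {M : ℝ}
    (hsum : ∀ n, Summable fun j : ℕ => w (n + j) / ((n : ℝ) + (j : ℝ) + 1))
    (hM1 : ∀ n, (∑' j : ℕ, w (n + j) / ((n : ℝ) + (j : ℝ) + 1)) ≤ M * w n)
    (T : ellOne →L[ℂ] ellOne) (hT : IsCesaroOp w w T)
    {a : ℂ} (ha : a ≠ 0) {B : ℝ} (hB0 : 0 ≤ B)
    (hψb : ∀ k, ‖psi a k‖ ≤ B * w k)
    (hlim : Tendsto (fun k => psi a k) atTop (𝓝 0)) :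
    a⁻¹ ∈ spectrum ℂ T := by
  set φ : ℕ → ℂ := fun k => psi a k / ((w k : ℝ) : ℂ) with hφ
  have hb : ∀ n, ‖φ n‖ ≤ B := by
    intro n
    rw [hφ]
    simp only
    rw [norm_div, Complex.norm_real, Real.norm_eq_abs, abs_of_pos (hw n),
      div_le_iff₀ (hw n)]
    exact hψb n
  have h0 : φ 0 ≠ 0 := by
    rw [hφ]
    simp only [psi_zero]
    exact one_div_ne_zero (Complex.ofReal_ne_zero.mpr (hw 0).ne')
  exact mem_spectrum_of_functional T a⁻¹ φ hb h0
    (fun x => eigen_tsum w hw hsum hM1 T hT ha hB0 hψb hlim x)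

end Aux11

theorem disc_subset_spectrum (w : ℕ → ℝ)
    (hw : ∀ n, 0 < w n) (hwb : ∃ C, ∀ n, w n ≤ C)
    (hM : Mvw w w ≠ ⊤)
    (T : ellOne →L[ℂ] ellOne) (hT : IsCesaroOp w w T)
    (hS : (Sset w).Nonempty) :
    0 < sInf (Sset w) ∧
      ({lam : ℂ | ‖lam - ((1 / (2 * sInf (Sset w)) : ℝ) : ℂ)‖ ≤ 1 / (2 * sInf (Sset w))}
          ∪ {z : ℂ | ∃ m : ℕ, 1 ≤ m ∧ z = ((m : ℂ))⁻¹}) ⊆ spectrum ℂ T := by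
  obtain ⟨M, hMpos, hsum, hM1⟩ := Aux11.extract w hw hM
  have hlow : ∀ s ∈ Sset w, 1 / M ≤ s := fun s hs => Aux11.s_lower w hw hMpos hsum hM1 hs
  have hbdd : BddBelow (Sset w) := ⟨1 / M, fun s hs => hlow s hs⟩
  have hsinf : 1 / M ≤ sInf (Sset w) := le_csInf hS hlow
  have hs₁pos : 0 < sInf (Sset w) := lt_of_lt_of_le (by positivity) hsinf
  refine ⟨hs₁pos, ?_⟩
  set s₁ : ℝ := sInf (Sset w) with hs₁
  set r : ℝ := 1 / (2 * s₁) with hr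
  have hrpos : 0 < r := by rw [hr]; positivity
  -- the open ball is made of eigenvalue-reciprocals for the dual functional
  have hball : Metric.ball ((r : ℝ) : ℂ) r ⊆ spectrum ℂ T := by
    intro μ hμ
    rw [Metric.mem_ball, dist_eq_norm] at hμ
    have hμ0 : μ ≠ 0 := by
      intro h0
      rw [h0] at hμ
      rw [zero_sub, norm_neg, Complex.norm_real, Real.norm_eq_abs, abs_of_pos hrpos] at hμ
      exact lt_irrefl r hμ
    have hre : s₁ < (μ⁻¹).re := by
      have h2 : ‖μ - ((r:ℝ):ℂ)‖^2 < r^2 := by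
        have := norm_nonneg (μ - ((r:ℝ):ℂ))
        nlinarith
      have h3 : ‖μ - ((r:ℝ):ℂ)‖^2 = Complex.normSq μ - 2*r*μ.re + r^2 := by
        rw [Complex.sq_norm]
        simp [Complex.normSq_apply, Complex.sub_re, Complex.sub_im, Complex.ofReal_re,
          Complex.ofReal_im]
        ring
      have h4 : Complex.normSq μ < 2*r*μ.re := by nlinarith
      have h5 : 0 < Complex.normSq μ := Complex.normSq_pos.mpr hμ0
      rw [Complex.inv_re, lt_div_iff₀ h5]
      have h7 : s₁ * (2*r*μ.re) = μ.re := by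
        rw [hr]
        field_simp
      nlinarith [hs₁pos]
    obtain ⟨s, hsS, hslt⟩ := (csInf_lt_iff hbdd hS).mp hre
    have hspos : 0 < s := lt_of_lt_of_le (by positivity) (hlow s hsS)
    set a : ℂ := μ⁻¹ with hadef
    have ha : a ≠ 0 := inv_ne_zero hμ0
    obtain ⟨C, hCpos, hC⟩ := Aux11.psi_bound hspos hslt
    obtain ⟨B', hB'⟩ := hsS
    have hB'n : ∀ n : ℕ, 1 / (((n:ℝ)+1) ^ s * w n) ≤ B' := fun n => hB' ⟨n, rfl⟩
    have hB'0 : 0 < B' := by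
      refine lt_of_lt_of_le ?_ (hB'n 0)
      have := hw 0
      positivity
    have hψb : ∀ k, ‖Aux11.psi a k‖ ≤ (C * B') * w k := by
      intro k
      have hP : (0:ℝ) < ((k:ℝ)+1) ^ s := by positivity
      have h1 : 1 ≤ B' * (((k:ℝ)+1) ^ s * w k) := by
        rw [← div_le_iff₀ (by have := hw k; positivity)]
        exact hB'n k
      have h9 : C ≤ C * (B' * (((k:ℝ)+1) ^ s * w k)) :=
        le_mul_of_one_le_right hCpos.le h1
      have h10 : ‖Aux11.psi a k‖ * ((k:ℝ)+1) ^ s ≤ ((C * B') * w k) * ((k:ℝ)+1) ^ s := by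
        nlinarith [hC k]
      exact le_of_mul_le_mul_right h10 hP
    have hlim : Tendsto (fun k => Aux11.psi a k) atTop (𝓝 0) := by
      rw [tendsto_zero_iff_norm_tendsto_zero]
      have hnb : ∀ k : ℕ, ‖Aux11.psi a k‖ ≤ C / ((k:ℝ)+1) ^ s := by
        intro k
        rw [le_div_iff₀ (by positivity)]
        exact hC k
      have hz : Tendsto (fun k : ℕ => C / ((k:ℝ)+1) ^ s) atTop (𝓝 0) := by
        apply Tendsto.div_atTop tendsto_const_nhds
        exact (tendsto_rpow_atTop hspos).comp
          (tendsto_atTop_add_const_right atTop 1 tendsto_natCast_atTop_atTop)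
      exact squeeze_zero (fun k => norm_nonneg _) hnb hz
    have hmem := Aux11.point_in_spectrum w hw hsum hM1 T hT ha
      (by positivity : (0:ℝ) ≤ C * B') hψb hlim
    rwa [hadef, inv_inv] at hmem
  intro z hz
  rcases hz with hdisc | ⟨m, hm, rfl⟩
  · -- closed disc: closure of the open ball
    have hsub : Metric.closedBall ((r : ℝ) : ℂ) r ⊆ spectrum ℂ T := by
      rw [← closure_ball _ hrpos.ne']
      exact closure_minimal hball (spectrum.isClosed T)
    apply hsub
    rw [Metric.mem_closedBall, dist_eq_norm]
    exact hdisc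
  · -- the points 1/m
    have ham : ((m:ℂ)) ≠ 0 := Nat.cast_ne_zero.mpr (by omega)
    set B : ℝ := ∑ i ∈ Finset.range m, ‖Aux11.psi (m:ℂ) i‖ / w i with hB
    have hB0 : 0 ≤ B := by
      rw [hB]
      apply Finset.sum_nonneg
      intro i _
      have := (hw i).le
      positivity
    have hψb : ∀ k, ‖Aux11.psi (m:ℂ) k‖ ≤ B * w k := by
      intro k
      rcases lt_or_ge k m with h | h
      · have h1 : ‖Aux11.psi (m:ℂ) k‖ / w k ≤ B := by
          rw [hB]
          apply Finset.single_le_sum (f := fun i => ‖Aux11.psi (m:ℂ) i‖ / w i)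
            (fun i _ => by have := (hw i).le; positivity) (Finset.mem_range.mpr h)
        calc ‖Aux11.psi (m:ℂ) k‖ = (‖Aux11.psi (m:ℂ) k‖ / w k) * w k := by
              rw [div_mul_cancel₀ _ (hw k).ne']
          _ ≤ B * w k := mul_le_mul_of_nonneg_right h1 (hw k).le
      · rw [Aux11.psi_int_zero hm h, norm_zero]
        exact mul_nonneg hB0 (hw k).le
    have hlim : Tendsto (fun k => Aux11.psi (m:ℂ) k) atTop (𝓝 0) := by
      apply Tendsto.congr' ?_ (tendsto_const_nhds (x := (0:ℂ)))
      filter_upwards [eventually_ge_atTop m] with k hk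
      exact (Aux11.psi_int_zero hm hk).symm
    exact Aux11.point_in_spectrum w hw hsum hM1 T hT ham hB0 hψb hlim
end
end

section
/- Let w be a weight with M_w < ∞ and let T : ℓ¹ → ℓ¹ be the continuous linear operator satisfying (T x)(n) = (w(n)/n) ∑_{k=1}^n x(k)/w(k) for all x ∈ ℓ¹ and n ≥ 1; let e_r denote the r-th canonical unit vector of ℓ¹. Then: (i) for every r ≥ 2, e_r lies in the range of I − T; (ii) the closure of the range of I − T equals {x ∈ ℓ¹ : x(1) = 0}; (iii) ker(I − T) ≠ {0} if and only if ∑_{n≥1} w(n) < ∞, and in that case ker(I − T) is the one-dimensional span of the vector (w(n))_{n≥1} ∈ ℓ¹ (the image under Φ_w of the constant sequence 𝟏). -/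
/- STATEMENT 13: For the transferred Cesàro operator T on ℓ¹:
(i) every canonical basis vector e_r with r ≥ 2 (0-indexed: r ≥ 1) lies in the range of I − T;
(ii) the closure of the range of I − T is {x ∈ ℓ¹ : x(1) = 0} (0-indexed: x 0 = 0);
(iii) ker(I − T) ≠ {0} iff ∑ w(n) < ∞, in which case ker(I − T) = span of the vector (w(n))ₙ.
Index `n : ℕ` corresponds to the paper's `n+1`. -/

open Filter Topology

noncomputable section

/-- Coordinates of `lp.single` in the constant family case. -/
private lemma single_coord (i : ℕ) (c : ℂ) (j : ℕ) :
    (lp.single 1 i c : ∀ _ : ℕ, ℂ) j = if j = i then c else 0 := by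
  rw [lp.single_apply]
  by_cases h : j = i
  · subst h; simp
  · simp [h]

/-- Characterization of fixed points of the transferred Cesàro operator. -/
private lemma cesaro_fixed_iff (w : ℕ → ℝ) (hw : ∀ n, 0 < w n)
    (T : ellOne →L[ℂ] ellOne) (hT : IsCesaroOp w w T) (x : ellOne) :
    T x = x ↔ ∃ c : ℂ, ∀ n : ℕ, (x : ∀ _ : ℕ, ℂ) n = c * (w n : ℂ) := by
  have hW : ∀ n, ((w n : ℝ) : ℂ) ≠ 0 := fun n => by
    exact_mod_cast (hw n).ne'
  constructor
  · intro h
    obtain ⟨c, hc⟩ : ∃ c : ℂ, c = (x : ∀ _ : ℕ, ℂ) 0 / (w 0 : ℂ) := ⟨_, rfl⟩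
    have hx : ∀ n, (x : ∀ _ : ℕ, ℂ) n
        = ((w n / (n + 1) : ℝ) : ℂ)
          * ∑ k ∈ Finset.range (n + 1), (x : ∀ _ : ℕ, ℂ) k / ((w k : ℝ) : ℂ) := by
      intro n
      conv_lhs => rw [← h]
      exact hT x n
    have hS : ∀ n, ∑ k ∈ Finset.range (n + 1), (x : ∀ _ : ℕ, ℂ) k / ((w k : ℝ) : ℂ)
        = ((n : ℂ) + 1) * c := by
      intro n
      induction n with
      | zero =>
        rw [Finset.sum_range_one, hc]
        push_cast
        ring
      | succ n ih =>
        have h2 : ((n : ℂ) + 1 + 1) ≠ 0 := by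
          have := Nat.cast_add_one_ne_zero (R := ℂ) (n + 1)
          push_cast at this
          exact this
        have h3 : ((n : ℂ) + 1) ≠ 0 := Nat.cast_add_one_ne_zero n
        have h4 := hW (n + 1)
        have h1 : ∑ k ∈ Finset.range (n + 1 + 1), (x : ∀ _ : ℕ, ℂ) k / ((w k : ℝ) : ℂ)
            = ((n : ℂ) + 1) * c + (x : ∀ _ : ℕ, ℂ) (n + 1) / ((w (n + 1) : ℝ) : ℂ) := by
          rw [Finset.sum_range_succ, ih]
        rw [hx (n + 1)] at h1
        push_cast at h1 ⊢
        field_simp [h2, h3, h4] at h1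
        apply mul_right_cancel₀ (mul_ne_zero h3 h4)
        linear_combination ((w (n + 1) : ℝ) : ℂ) * h1
    refine ⟨c, fun n => ?_⟩
    rw [hx n, hS n]
    have h3 : ((n : ℂ) + 1) ≠ 0 := Nat.cast_add_one_ne_zero n
    push_cast
    field_simp
  · rintro ⟨c, hc⟩
    apply lp.ext
    funext n
    rw [hT x n]
    have hconst : ∀ k ∈ Finset.range (n + 1),
        (x : ∀ _ : ℕ, ℂ) k / ((w k : ℝ) : ℂ) = c := by
      intro k _
      rw [hc k, mul_div_assoc, div_self (hW k), mul_one]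
    rw [Finset.sum_congr rfl hconst, Finset.sum_const, Finset.card_range, hc n]
    have h3 : ((n : ℂ) + 1) ≠ 0 := Nat.cast_add_one_ne_zero n
    push_cast
    field_simp
    ring

/-- Every `e_r` with `r ≥ 1` lies in the range of `I - T`, with explicit preimage. -/
private lemma single_mem_range (w : ℕ → ℝ) (hw : ∀ n, 0 < w n)
    (T : ellOne →L[ℂ] ellOne) (hT : IsCesaroOp w w T) (r : ℕ) (hr : 1 ≤ r) :
    lp.single 1 r (1 : ℂ) ∈ Set.range (fun x : ellOne => x - T x) := by
  have hW : ∀ n, ((w n : ℝ) : ℂ) ≠ 0 := fun n => by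
    exact_mod_cast (hw n).ne'
  set a : ℂ := ((((r : ℝ) * w r)⁻¹ : ℝ) : ℂ) with ha
  set u : ellOne := lp.single 1 r (1 : ℂ)
      - a • ∑ n ∈ Finset.range r, lp.single 1 n ((w n : ℝ) : ℂ) with hu
  have key : ∀ j, ((∑ n ∈ Finset.range r, lp.single 1 n ((w n : ℝ) : ℂ) : ellOne)
      : ∀ _ : ℕ, ℂ) j = if j < r then ((w j : ℝ) : ℂ) else 0 := by
    intro j
    rw [lp.coeFn_sum, Finset.sum_apply]
    by_cases hj : j < r
    · have hone : ∑ n ∈ Finset.range r, (lp.single 1 n ((w n : ℝ) : ℂ) : ∀ _ : ℕ, ℂ) j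
          = (lp.single 1 j ((w j : ℝ) : ℂ) : ∀ _ : ℕ, ℂ) j :=
        Finset.sum_eq_single_of_mem j (Finset.mem_range.2 hj)
          (fun b _ hb => lp.single_apply_ne 1 b _ (Ne.symm hb))
      rw [hone, lp.single_apply_self, if_pos hj]
    · have hzero : ∑ n ∈ Finset.range r, (lp.single 1 n ((w n : ℝ) : ℂ) : ∀ _ : ℕ, ℂ) j
          = 0 :=
        Finset.sum_eq_zero (fun n hn => lp.single_apply_ne 1 n _
          (by have := Finset.mem_range.1 hn; omega))
      rw [hzero, if_neg hj]
  have hucoe : ∀ j, (u : ∀ _ : ℕ, ℂ) j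
      = (if j = r then 1 else 0) - a * (if j < r then ((w j : ℝ) : ℂ) else 0) := by
    intro j
    rw [hu, lp.coeFn_sub, Pi.sub_apply, lp.coeFn_smul, Pi.smul_apply, key j,
      single_coord, smul_eq_mul]
  have hA : ∀ n, ∑ k ∈ Finset.range (n + 1), (u : ∀ _ : ℕ, ℂ) k / ((w k : ℝ) : ℂ)
      = if n < r then -(((n : ℂ) + 1) * a) else 0 := by
    intro n
    induction n with
    | zero =>
      rw [Finset.sum_range_one, hucoe 0]
      have h0r : 0 < r := hr
      rw [if_pos h0r, if_neg (by omega : (0 : ℕ) ≠ r), if_pos h0r]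
      field_simp [hW 0]
      push_cast
      ring
    | succ n ih =>
      rw [Finset.sum_range_succ, ih, hucoe (n + 1)]
      rcases lt_trichotomy (n + 1) r with h1 | h1 | h1
      · rw [if_pos (by omega : n < r), if_pos h1, if_neg (by omega : n + 1 ≠ r), if_pos h1]
        have := hW (n + 1)
        field_simp
        push_cast
        ring
      · rw [if_pos (by omega : n < r), if_pos (by omega : n + 1 = r),
          if_neg (by omega : ¬ n + 1 < r), if_neg (by omega : ¬ n + 1 < r)]
        have hWr := hW (n + 1)
        have hrC : ((n : ℂ) + 1) ≠ 0 := Nat.cast_add_one_ne_zero n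
        rw [ha, ← h1]
        push_cast
        field_simp
        ring
      · rw [if_neg (by omega : ¬ n < r), if_neg (by omega : n + 1 ≠ r),
          if_neg (by omega : ¬ n + 1 < r), if_neg (by omega : ¬ n + 1 < r)]
        simp
  refine ⟨u, ?_⟩
  show u - T u = lp.single 1 r (1 : ℂ)
  apply lp.ext
  funext n
  rw [lp.coeFn_sub, Pi.sub_apply, hT u n, hA n, hucoe n, single_coord]
  rcases lt_trichotomy n r with h1 | h1 | h1
  · rw [if_neg (by omega : n ≠ r), if_pos h1, if_pos h1]
    have h3 : ((n : ℂ) + 1) ≠ 0 := Nat.cast_add_one_ne_zero n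
    push_cast
    field_simp
    ring
  · rw [if_pos h1, if_neg (by omega : ¬ n < r), if_neg (by omega : ¬ n < r)]
    ring
  · rw [if_neg (by omega : n ≠ r), if_neg (by omega : ¬ n < r),
      if_neg (by omega : ¬ n < r)]
    ring

theorem range_and_kernel_of_id_sub_cesaro (w : ℕ → ℝ)
    (hw : ∀ n, 0 < w n) (hwb : ∃ C, ∀ n, w n ≤ C)
    (hM : Mvw w w ≠ ⊤)
    (T : ellOne →L[ℂ] ellOne) (hT : IsCesaroOp w w T) :
    (∀ r : ℕ, 1 ≤ r → lp.single 1 r (1 : ℂ) ∈ Set.range (fun x : ellOne => x - T x)) ∧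
      (closure (Set.range (fun x : ellOne => x - T x))
        = {x : ellOne | (x : ∀ _ : ℕ, ℂ) 0 = 0}) ∧
      ((∃ x : ellOne, x ≠ 0 ∧ T x = x) ↔ Summable w) ∧
      (Summable w → ∀ x : ellOne,
        (T x = x ↔ ∃ c : ℂ, ∀ n : ℕ, (x : ∀ _ : ℕ, ℂ) n = c * (w n : ℂ))) := by
  have hW : ∀ n, ((w n : ℝ) : ℂ) ≠ 0 := fun n => by
    exact_mod_cast (hw n).ne'
  have hrange : ∀ r : ℕ, 1 ≤ r →
      lp.single 1 r (1 : ℂ) ∈ Set.range (fun x : ellOne => x - T x) :=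
    fun r hr => single_mem_range w hw T hT r hr
  refine ⟨hrange, ?_, ?_, fun _ x => cesaro_fixed_iff w hw T hT x⟩
  · -- closure of range = {x | x 0 = 0}
    set R := Set.range (fun x : ellOne => x - T x) with hR
    have hzeroR : (0 : ellOne) ∈ R := ⟨0, by show (0 : ellOne) - T 0 = 0; rw [map_zero, sub_zero]⟩
    have haddR : ∀ p q : ellOne, p ∈ R → q ∈ R → p + q ∈ R := by
      rintro p q ⟨p', rfl⟩ ⟨q', rfl⟩
      refine ⟨p' + q', ?_⟩
      show p' + q' - T (p' + q') = p' - T p' + (q' - T q')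
      rw [map_add]
      abel
    have hsmulR : ∀ (c : ℂ) (p : ellOne), p ∈ R → c • p ∈ R := by
      rintro c p ⟨p', rfl⟩
      refine ⟨c • p', ?_⟩
      show c • p' - T (c • p') = c • (p' - T p')
      rw [map_smul, smul_sub]
    apply le_antisymm
    · -- closure ⊆ {x | x 0 = 0}
      have hclosed : IsClosed {x : ellOne | (x : ∀ _ : ℕ, ℂ) 0 = 0} := by
        have hcont : Continuous fun x : ellOne => (x : ∀ _ : ℕ, ℂ) 0 := by
          apply LipschitzWith.continuous (K := 1)
          apply LipschitzWith.of_dist_le_mul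
          intro x y
          rw [NNReal.coe_one, one_mul, dist_eq_norm, dist_eq_norm]
          have : (x : ∀ _ : ℕ, ℂ) 0 - (y : ∀ _ : ℕ, ℂ) 0 = ((x - y : ellOne) : ∀ _ : ℕ, ℂ) 0 := by
            rw [lp.coeFn_sub, Pi.sub_apply]
          rw [this]
          exact lp.norm_apply_le_norm one_ne_zero (x - y) 0
        exact isClosed_eq hcont continuous_const
      apply closure_minimal _ hclosed
      rintro _ ⟨x, rfl⟩
      show ((x - T x : ellOne) : ∀ _ : ℕ, ℂ) 0 = 0
      rw [lp.coeFn_sub, Pi.sub_apply, hT x 0, Finset.sum_range_one]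
      have := hW 0
      push_cast
      field_simp
      simp
    · -- {x | x 0 = 0} ⊆ closure R
      intro x hx
      have hx0 : (x : ∀ _ : ℕ, ℂ) 0 = 0 := hx
      haveI : Fact ((1 : ENNReal) ≤ 1) := ⟨le_rfl⟩
      have hsum : HasSum (fun i : ℕ => lp.single 1 i ((x : ∀ _ : ℕ, ℂ) i)) x :=
        lp.hasSum_single (by norm_num) x
      have hmem_single : ∀ i : ℕ, lp.single 1 i ((x : ∀ _ : ℕ, ℂ) i) ∈ R := by
        intro i
        rcases Nat.eq_zero_or_pos i with rfl | hi
        · rw [hx0]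
          have : lp.single 1 0 (0 : ℂ) = (0 : ellOne) := by
            apply lp.ext; funext j; rw [single_coord]; simp [lp.coeFn_zero]
          rw [this]; exact hzeroR
        · have : lp.single 1 i ((x : ∀ _ : ℕ, ℂ) i)
              = ((x : ∀ _ : ℕ, ℂ) i) • (lp.single 1 i (1 : ℂ) : ellOne) := by
            apply lp.ext; funext j
            rw [lp.coeFn_smul, Pi.smul_apply, single_coord, single_coord, smul_eq_mul]
            by_cases h : j = i <;> simp [h]
          rw [this]
          exact hsmulR _ _ (hrange i hi)
      apply mem_closure_of_tendsto hsum
      filter_upwards with s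
      exact Finset.sum_induction _ (· ∈ R) haddR hzeroR (fun i _ => hmem_single i)
  · -- kernel nontrivial iff Summable w
    constructor
    · rintro ⟨x, hx0, hTx⟩
      obtain ⟨c, hc⟩ := (cesaro_fixed_iff w hw T hT x).1 hTx
      have hcne : c ≠ 0 := by
        rintro rfl
        apply hx0
        apply lp.ext; funext n
        rw [hc n, lp.coeFn_zero]; simp
      have hsum : Summable fun n => ‖(x : ∀ _ : ℕ, ℂ) n‖ := by
        have := (lp.memℓp x).summable (by norm_num)
        simpa using this
      have hsum2 : Summable fun n => ‖c‖ * w n := by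
        apply hsum.congr
        intro n
        rw [hc n, norm_mul, Complex.norm_real, Real.norm_eq_abs, abs_of_pos (hw n)]
      exact (summable_mul_left_iff (norm_ne_zero_iff.2 hcne)).1 hsum2
    · intro hs
      have hmem : Memℓp (fun n : ℕ => ((w n : ℝ) : ℂ)) 1 := by
        apply memℓp_gen
        have : Summable fun n : ℕ => ‖((w n : ℝ) : ℂ)‖ := by
          apply hs.congr
          intro n
          rw [Complex.norm_real, Real.norm_eq_abs, abs_of_pos (hw n)]
        simpa using this
      refine ⟨⟨fun n => ((w n : ℝ) : ℂ), hmem⟩, ?_, ?_⟩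
      · intro h
        have h0 : ((⟨fun n => ((w n : ℝ) : ℂ), hmem⟩ : ellOne) : ∀ _ : ℕ, ℂ) 0 = 0 := by
          rw [h, lp.coeFn_zero]; simp
        exact hW 0 h0
      · rw [cesaro_fixed_iff w hw T hT]
        refine ⟨1, fun n => ?_⟩
        rw [one_mul]
end
end

section
/- Let w be a weight with M_w < ∞ and let T : ℓ¹ → ℓ¹ be the continuous linear operator satisfying (T x)(n) = (w(n)/n) ∑_{k=1}^n x(k)/w(k) for all x ∈ ℓ¹ and n ≥ 1. If T is Cesàro bounded, i.e., sup_{n≥1} ‖(1/n) ∑_{m=1}^n T^m‖ < ∞ in operator norm, then ∑_{n≥1} w(n) < ∞. In particular, ∑_{n≥1} w(n) < ∞ whenever T is power bounded (sup_{m≥1} ‖T^m‖ < ∞) or mean ergodic. -/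
/- STATEMENT 14: If the transferred Cesàro operator T on ℓ¹ is Cesàro bounded then
∑ w(n) < ∞; in particular this holds if T is power bounded or mean ergodic.
Index `n : ℕ` corresponds to the paper's `n+1`. -/

open Filter Topology

noncomputable section

/-- Cesàro boundedness: the averages `(1/n) ∑_{m=1}^n T^m` are uniformly bounded in norm. -/
def CesaroBounded (T : ellOne →L[ℂ] ellOne) : Prop :=
  ∃ C : ℝ, ∀ n : ℕ, 1 ≤ n → ‖((n : ℂ))⁻¹ • ∑ m ∈ Finset.Icc 1 n, T ^ m‖ ≤ C

/-- Power boundedness: `sup_m ‖T^m‖ < ∞`. -/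
def PowerBounded (T : ellOne →L[ℂ] ellOne) : Prop :=
  ∃ C : ℝ, ∀ m : ℕ, 1 ≤ m → ‖T ^ m‖ ≤ C

/-- Mean ergodicity: the Cesàro averages converge in the strong operator topology. -/
def MeanErgodic (T : ellOne →L[ℂ] ellOne) : Prop :=
  ∀ x : ellOne, ∃ y : ellOne,
    Tendsto (fun n : ℕ => ((n : ℂ))⁻¹ • ∑ m ∈ Finset.Icc 1 n, (T ^ m) x) atTop (nhds y)

/-! ### Auxiliary development -/

def myU (w : ℕ → ℝ) : ℕ → ℕ → ℝ
  | 0 => fun n => if n = 0 then 1 / w 0 else 0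
  | (m+1) => fun n => (∑ k ∈ Finset.range (n+1), myU w m k) / (n+1)

def eVec : ellOne := lp.single 1 0 (1:ℂ)

theorem eVec_norm : ‖eVec‖ = 1 := by
  rw [eVec, show (1:ℂ) = (fun _ : ℕ => (1:ℂ)) 0 from rfl,
    lp.norm_single (E := fun _ : ℕ => ℂ) (p := 1) (by norm_num) 0 ((fun _ : ℕ => (1:ℂ)) 0)]
  norm_num

variable {w : ℕ → ℝ}

theorem myU_nonneg (hw : ∀ n, 0 < w n) : ∀ m n, 0 ≤ myU w m n := by
  intro m
  induction m with
  | zero =>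
      intro n; have h0 := hw 0; simp only [myU]; split
      · positivity
      · exact le_refl _
  | succ m ih =>
      intro n; simp only [myU]
      apply div_nonneg (Finset.sum_nonneg fun k _ => ih k) (by positivity)

theorem myU_zero (m : ℕ) : myU w m 0 = 1 / w 0 := by
  induction m with
  | zero => simp [myU]
  | succ m ih => simp [myU, ih]

theorem myU_le (hw : ∀ n, 0 < w n) : ∀ m n, myU w m n ≤ 1 / w 0 := by
  intro m
  induction m with
  | zero => intro n; have h0 := hw 0; simp only [myU]; split
            · exact le_refl _
            · positivity
  | succ m ih =>
      intro n
      simp only [myU]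
      rw [div_le_iff₀ (by positivity)]
      calc ∑ k ∈ Finset.range (n+1), myU w m k ≤ ∑ _k ∈ Finset.range (n+1), 1 / w 0 :=
            Finset.sum_le_sum fun k _ => ih k
        _ = 1 / w 0 * (n+1) := by simp [mul_comm]

theorem myU_succ_le (hw : ∀ n, 0 < w n) : ∀ m n, myU w m n ≤ myU w (m+1) n := by
  intro m
  induction m with
  | zero =>
      intro n
      by_cases h : n = 0
      · subst h; rw [myU_zero, myU_zero]
      · simp only [myU, h, if_false]
        apply div_nonneg (Finset.sum_nonneg fun k _ => myU_nonneg hw 0 k) (by positivity)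
  | succ m ih =>
      intro n
      simp only [myU]
      gcongr
      exact ih _

theorem myU_mono (hw : ∀ n, 0 < w n) (n : ℕ) : Monotone fun m => myU w m n :=
  monotone_nat_of_le_succ fun m => myU_succ_le hw m n

theorem myU_tendsto (hw : ∀ n, 0 < w n) (n : ℕ) :
    Tendsto (fun m => myU w m n) atTop (𝓝 (1 / w 0)) := by
  -- limit exists
  have hbdd : ∀ n, BddAbove (Set.range fun m => myU w m n) := fun n =>
    ⟨1 / w 0, by rintro x ⟨m, rfl⟩; exact myU_le hw m n⟩
  set L : ℕ → ℝ := fun n => ⨆ m, myU w m n with hL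
  have htend : ∀ n, Tendsto (fun m => myU w m n) atTop (𝓝 (L n)) := fun n =>
    tendsto_atTop_ciSup (myU_mono hw n) (hbdd n)
  have hrec : ∀ n, L n = (∑ k ∈ Finset.range (n+1), L k) / (n+1) := by
    intro n
    have h1 : Tendsto (fun m => myU w (m+1) n) atTop (𝓝 (L n)) :=
      (htend n).comp (tendsto_add_atTop_nat 1)
    have h2 : Tendsto (fun m => myU w (m+1) n) atTop
        (𝓝 ((∑ k ∈ Finset.range (n+1), L k) / (n+1))) := by
      simp only [myU]
      exact (tendsto_finset_sum _ fun k _ => htend k).div_const _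
    exact tendsto_nhds_unique h1 h2
  have hL0 : L 0 = 1 / w 0 := by
    refine tendsto_nhds_unique (htend 0) ?_
    simp only [myU_zero]
    exact tendsto_const_nhds
  have hLn : ∀ n, L n = 1 / w 0 := by
    intro n
    induction n using Nat.strong_induction_on with
    | _ n ih =>
      rcases Nat.eq_zero_or_pos n with h | h
      · subst h; exact hL0
      · have h1 := hrec n
        rw [Finset.sum_range_succ] at h1
        have hsum : ∑ k ∈ Finset.range n, L k = n * (1 / w 0) := by
          rw [Finset.sum_congr rfl fun k hk => ih k (Finset.mem_range.mp hk)]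
          simp [mul_comm]
        rw [hsum] at h1
        have hn : (0:ℝ) < n := by exact_mod_cast h
        rw [eq_div_iff (by positivity : ((n:ℝ)+1) ≠ 0)] at h1
        have h2 : L n * (n:ℝ) = (1 / w 0) * (n:ℝ) := by linear_combination h1
        exact mul_right_cancel₀ (ne_of_gt hn) h2
  rw [← hLn n]
  exact htend n

theorem cesaro_pow_apply (hw : ∀ n, 0 < w n) (T : ellOne →L[ℂ] ellOne) (hT : IsCesaroOp w w T) :
    ∀ m n, ((T^m) eVec : ∀ _ : ℕ, ℂ) n = ((w n * myU w m n : ℝ) : ℂ) := by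
  intro m
  induction m with
  | zero =>
      intro n
      simp only [pow_zero, ContinuousLinearMap.one_apply]
      by_cases h : n = 0
      · subst h
        rw [show (eVec : ∀ _ : ℕ, ℂ) 0 = 1 from lp.single_apply_self _ _ _]
        simp only [myU, if_pos rfl]
        push_cast
        rw [mul_one_div, div_self (by exact_mod_cast (hw 0).ne' : ((w 0:ℝ):ℂ) ≠ 0)]
      · rw [show (eVec : ∀ _ : ℕ, ℂ) n = 0 from lp.single_apply_ne _ _ _ h]
        simp [myU, h]
  | succ m ih =>
      intro n
      rw [pow_succ', ContinuousLinearMap.mul_apply, hT]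
      have hsum : ∀ k ∈ Finset.range (n+1),
          ((T^m) eVec : ∀ _ : ℕ, ℂ) k / ((w k : ℝ) : ℂ) = ((myU w m k : ℝ) : ℂ) := by
        intro k _
        rw [ih k, ← Complex.ofReal_div]
        rw [Complex.ofReal_inj, mul_comm, mul_div_cancel_right₀ _ (hw k).ne']
      rw [Finset.sum_congr rfl hsum]
      simp only [myU]
      push_cast
      ring
theorem key_bound (hw : ∀ n, 0 < w n) (T : ellOne →L[ℂ] ellOne) (hT : IsCesaroOp w w T)
    {C : ℝ} (hC : ∀ N : ℕ, 1 ≤ N → ‖((N : ℂ))⁻¹ • ∑ m ∈ Finset.Icc 1 N, T ^ m‖ ≤ C)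
    (F : Finset ℕ) : ∑ n ∈ F, w n ≤ C * w 0 := by
  -- Step 1
  have hA : ∀ N : ℕ, 1 ≤ N →
      ∑ n ∈ F, ∑ m ∈ Finset.Icc 1 N, w n * myU w m n ≤ C * N := by
    intro N hN
    set A : ellOne →L[ℂ] ellOne := ((N : ℂ))⁻¹ • ∑ m ∈ Finset.Icc 1 N, T ^ m with hAdef
    have hval : ∀ n, (A eVec : ∀ _ : ℕ, ℂ) n
        = (((N : ℝ)⁻¹ * ∑ m ∈ Finset.Icc 1 N, w n * myU w m n : ℝ) : ℂ) := by
      intro n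
      have h1 : A eVec = ((N : ℂ))⁻¹ • ((∑ m ∈ Finset.Icc 1 N, T ^ m) eVec) := rfl
      rw [h1, lp.coeFn_smul, Pi.smul_apply, ContinuousLinearMap.sum_apply,
        lp.coeFn_sum, Finset.sum_apply,
        Finset.sum_congr rfl (fun m _ => cesaro_pow_apply hw T hT m n)]
      push_cast
      simp [smul_eq_mul]
    have hnorm : ∀ n, ‖(A eVec : ∀ _ : ℕ, ℂ) n‖
        = (N : ℝ)⁻¹ * ∑ m ∈ Finset.Icc 1 N, w n * myU w m n := by
      intro n
      rw [hval n, Complex.norm_real, Real.norm_eq_abs, abs_of_nonneg]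
      exact mul_nonneg (by positivity)
        (Finset.sum_nonneg fun m _ => mul_nonneg (hw n).le (myU_nonneg hw m n))
    have h2 : ∑ n ∈ F, ‖(A eVec : ∀ _ : ℕ, ℂ) n‖ ≤ ‖A eVec‖ := by
      have := lp.sum_rpow_le_norm_rpow (p := (1 : ENNReal)) (by norm_num) (A eVec) F
      simpa using this
    have h3 : ‖A eVec‖ ≤ C := by
      calc ‖A eVec‖ ≤ ‖A‖ * ‖eVec‖ := A.le_opNorm eVec
        _ = ‖A‖ := by rw [eVec_norm, mul_one]
        _ ≤ C := hC N hN
    have h4 : (N : ℝ)⁻¹ * ∑ n ∈ F, ∑ m ∈ Finset.Icc 1 N, w n * myU w m n ≤ C := by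
      rw [Finset.mul_sum]
      calc ∑ n ∈ F, (N:ℝ)⁻¹ * ∑ m ∈ Finset.Icc 1 N, w n * myU w m n
          = ∑ n ∈ F, ‖(A eVec : ∀ _ : ℕ, ℂ) n‖ := by
            exact (Finset.sum_congr rfl fun n _ => (hnorm n).symm)
        _ ≤ ‖A eVec‖ := h2
        _ ≤ C := h3
    have hNpos : (0:ℝ) < N := by exact_mod_cast hN
    rw [inv_mul_le_iff₀ hNpos] at h4
    linarith [h4]
  -- Step 2
  have hB : ∀ M : ℕ, 1 ≤ M → ∑ n ∈ F, w n * myU w M n ≤ C := by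
    intro M hM
    set S : ℝ := ∑ n ∈ F, w n * myU w M n with hSdef
    have hS0 : 0 ≤ S :=
      Finset.sum_nonneg fun n _ => mul_nonneg (hw n).le (myU_nonneg hw M n)
    have hNb : ∀ N : ℕ, M ≤ N → S * ((N:ℝ) + 1 - M) ≤ C * N := by
      intro N hMN
      have hN1 : 1 ≤ N := le_trans hM hMN
      have hlow : ∀ n ∈ F, (N + 1 - M : ℕ) • (w n * myU w M n)
          ≤ ∑ m ∈ Finset.Icc 1 N, w n * myU w m n := by
        intro n _
        calc (N + 1 - M : ℕ) • (w n * myU w M n)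
            = (Finset.Icc M N).card • (w n * myU w M n) := by rw [Nat.card_Icc]
          _ ≤ ∑ m ∈ Finset.Icc M N, w n * myU w m n :=
              Finset.card_nsmul_le_sum _ _ _ (fun m hm =>
                mul_le_mul_of_nonneg_left (myU_mono hw n (Finset.mem_Icc.mp hm).1) (hw n).le)
          _ ≤ ∑ m ∈ Finset.Icc 1 N, w n * myU w m n :=
              Finset.sum_le_sum_of_subset_of_nonneg
                (Finset.Icc_subset_Icc hM le_rfl)
                (fun m _ _ => mul_nonneg (hw n).le (myU_nonneg hw m n))
      have hsum := Finset.sum_le_sum hlow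
      have hcast : ∑ n ∈ F, (N + 1 - M : ℕ) • (w n * myU w M n) = ((N:ℝ) + 1 - M) * S := by
        rw [hSdef, Finset.mul_sum]
        refine Finset.sum_congr rfl fun n _ => ?_
        rw [nsmul_eq_mul]
        congr 1
        have : M ≤ N + 1 := le_trans hMN (Nat.le_succ N)
        push_cast [Nat.cast_sub this]
        ring
      rw [hcast] at hsum
      calc S * ((N:ℝ) + 1 - M) = ((N:ℝ) + 1 - M) * S := mul_comm _ _
        _ ≤ ∑ n ∈ F, ∑ m ∈ Finset.Icc 1 N, w n * myU w m n := hsum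
        _ ≤ C * N := hA N hN1
    have hev : ∀ᶠ N : ℕ in atTop, S ≤ C + S * ((M:ℝ) - 1) * (N:ℝ)⁻¹ := by
      filter_upwards [eventually_ge_atTop M, eventually_ge_atTop 1] with N hMN hN1
      have hNpos : (0:ℝ) < N := by exact_mod_cast hN1
      have h := hNb N hMN
      rw [← sub_nonneg]
      have h5 : S * (N:ℝ) ≤ C * N + S * ((M:ℝ) - 1) := by nlinarith [h]
      have h6 := mul_le_mul_of_nonneg_right h5 (inv_nonneg.mpr hNpos.le)
      rw [mul_assoc, mul_inv_cancel₀ hNpos.ne', mul_one] at h6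
      have h7 : (C * (N:ℝ) + S * ((M:ℝ) - 1)) * (N:ℝ)⁻¹
          = C + S * ((M:ℝ) - 1) * (N:ℝ)⁻¹ := by
        rw [add_mul, mul_assoc C, mul_inv_cancel₀ hNpos.ne', mul_one]
      rw [h7] at h6
      linarith
    have htend : Tendsto (fun N : ℕ => C + S * ((M:ℝ) - 1) * (N:ℝ)⁻¹) atTop (𝓝 C) := by
      have h0 : Tendsto (fun N : ℕ => ((N:ℝ))⁻¹) atTop (𝓝 0) :=
        tendsto_inv_atTop_zero.comp tendsto_natCast_atTop_atTop
      have := (h0.const_mul (S * ((M:ℝ) - 1))).const_add C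
      simpa using this
    exact ge_of_tendsto htend hev
  -- Step 3
  have htendF : Tendsto (fun M : ℕ => ∑ n ∈ F, w n * myU w M n) atTop
      (𝓝 (∑ n ∈ F, w n * (1 / w 0))) :=
    tendsto_finset_sum _ fun n _ => (myU_tendsto hw n).const_mul (w n)
  have hle : ∑ n ∈ F, w n * (1 / w 0) ≤ C :=
    le_of_tendsto htendF (eventually_atTop.mpr ⟨1, fun M hM => hB M hM⟩)
  have hdiv : ∑ n ∈ F, w n * (1 / w 0) = (∑ n ∈ F, w n) / w 0 := by
    rw [Finset.sum_div]
    exact Finset.sum_congr rfl fun n _ => (mul_one_div _ _)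
  rw [hdiv, div_le_iff₀ (hw 0)] at hle
  linarith


theorem powerBounded_cesaroBounded {T : ellOne →L[ℂ] ellOne}
    (h : PowerBounded T) : CesaroBounded T := by
  obtain ⟨C, hC⟩ := h
  have hC0 : 0 ≤ C := le_trans (norm_nonneg _) (hC 1 le_rfl)
  refine ⟨C, fun N hN => ?_⟩
  have hNpos : (0:ℝ) < N := by exact_mod_cast hN
  refine ContinuousLinearMap.opNorm_le_bound _ hC0 (fun x => ?_)
  rw [ContinuousLinearMap.smul_apply, ContinuousLinearMap.sum_apply]
  calc ‖((N : ℂ))⁻¹ • ∑ m ∈ Finset.Icc 1 N, (T ^ m) x‖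
      ≤ ‖((N : ℂ))⁻¹‖ * ‖∑ m ∈ Finset.Icc 1 N, (T ^ m) x‖ := norm_smul_le _ _
    _ ≤ (N:ℝ)⁻¹ * ∑ m ∈ Finset.Icc 1 N, ‖(T ^ m) x‖ := by
        rw [norm_inv, Complex.norm_natCast]
        exact mul_le_mul_of_nonneg_left (norm_sum_le _ _) (by positivity)
    _ ≤ (N:ℝ)⁻¹ * ((N:ℝ) * (C * ‖x‖)) := by
        refine mul_le_mul_of_nonneg_left ?_ (by positivity)
        calc ∑ m ∈ Finset.Icc 1 N, ‖(T ^ m) x‖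
            ≤ ∑ _m ∈ Finset.Icc 1 N, C * ‖x‖ :=
              Finset.sum_le_sum fun m hm =>
                le_trans ((T ^ m).le_opNorm x)
                  (mul_le_mul_of_nonneg_right (hC m (Finset.mem_Icc.mp hm).1) (norm_nonneg x))
          _ = (N:ℝ) * (C * ‖x‖) := by
              rw [Finset.sum_const, Nat.card_Icc]
              simp [nsmul_eq_mul]
    _ = C * ‖x‖ := by field_simp

theorem meanErgodic_cesaroBounded {T : ellOne →L[ℂ] ellOne}
    (h : MeanErgodic T) : CesaroBounded T := by
  set g : ℕ → (ellOne →L[ℂ] ellOne) :=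
    fun N => ((N : ℂ))⁻¹ • ∑ m ∈ Finset.Icc 1 N, T ^ m with hg
  have hpt : ∀ x : ellOne, ∃ C : ℝ, ∀ N, ‖g N x‖ ≤ C := by
    intro x
    obtain ⟨y, hy⟩ := h x
    have hgx : ∀ N, g N x = ((N : ℂ))⁻¹ • ∑ m ∈ Finset.Icc 1 N, (T ^ m) x := by
      intro N
      simp [hg, ContinuousLinearMap.sum_apply]
    have hy' : Tendsto (fun N => ‖g N x‖) atTop (𝓝 ‖y‖) := by
      simp only [hgx]
      exact hy.norm
    obtain ⟨C, hC⟩ := hy'.bddAbove_range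
    exact ⟨C, fun N => hC ⟨N, rfl⟩⟩
  obtain ⟨C', hC'⟩ := banach_steinhaus hpt
  exact ⟨C', fun N _ => hC' N⟩

theorem summable_of_cesaroBounded (w : ℕ → ℝ)
    (hw : ∀ n, 0 < w n) (hwb : ∃ C, ∀ n, w n ≤ C)
    (hM : Mvw w w ≠ ⊤)
    (T : ellOne →L[ℂ] ellOne) (hT : IsCesaroOp w w T) :
    (CesaroBounded T → Summable w) ∧
      (PowerBounded T → Summable w) ∧ (MeanErgodic T → Summable w) := by
  have main : CesaroBounded T → Summable w := by
    rintro ⟨C, hC⟩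
    exact summable_of_sum_range_le (fun n => (hw n).le)
      (fun N => key_bound hw T hT hC (Finset.range N))
  exact ⟨main, fun h => main (powerBounded_cesaroBounded h),
    fun h => main (meanErgodic_cesaroBounded h)⟩
end
end

section
/- Let w be a weight with ∑_{n≥1} w(n) < ∞ and M_w < ∞, and let T : ℓ¹ → ℓ¹ be the continuous linear operator satisfying (T x)(n) = (w(n)/n) ∑_{k=1}^n x(k)/w(k) for all x ∈ ℓ¹ and n ≥ 1. Then for every integer r ≥ 2 the iterates T^m e_r converge to 0 in the norm of ℓ¹ as m → ∞, where e_r is the r-th canonical unit vector of ℓ¹. -/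
/- STATEMENT 15: If ∑ w(n) < ∞ and M_w < ∞, then for every r ≥ 2 (0-indexed: r ≥ 1) the
iterates T^m e_r of the transferred Cesàro operator converge to 0 in ℓ¹.
Index `n : ℕ` corresponds to the paper's `n+1`. -/

open Filter Topology

noncomputable section

/-- Plain Cesàro iterates of the `r`-th unit vector. -/
def cesA (r : ℕ) : ℕ → ℕ → ℝ
  | 0 => fun n => if n = r then 1 else 0
  | (m+1) => fun n => (∑ k ∈ Finset.range (n+1), cesA r m k) / (n+1)

lemma cesA_nonneg (r : ℕ) : ∀ m n, 0 ≤ cesA r m n := by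
  intro m
  induction m with
  | zero => intro n; simp [cesA]; split <;> norm_num
  | succ m ih =>
      intro n
      have : (0:ℝ) ≤ ∑ k ∈ Finset.range (n+1), cesA r m k :=
        Finset.sum_nonneg fun k _ => ih k
      exact div_nonneg this (by positivity)

lemma cesA_le_one (r : ℕ) : ∀ m n, cesA r m n ≤ 1 := by
  intro m
  induction m with
  | zero => intro n; simp [cesA]; split <;> norm_num
  | succ m ih =>
      intro n
      have h : (∑ k ∈ Finset.range (n+1), cesA r m k) ≤ (n+1 : ℝ) := by
        calc (∑ k ∈ Finset.range (n+1), cesA r m k) ≤ ∑ k ∈ Finset.range (n+1), 1 :=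
              Finset.sum_le_sum fun k _ => ih k
          _ = (n+1 : ℝ) := by simp
      rw [cesA, div_le_one (by positivity)]
      exact h

lemma sum_cube_le (n : ℕ) :
    ∑ k ∈ Finset.range (n+1), (k:ℝ)^3 ≤ (n:ℝ)^3 * (n+1) / 2 := by
  induction n with
  | zero => simp
  | succ n ih =>
      rw [Finset.sum_range_succ]
      push_cast
      push_cast at ih
      nlinarith [ih, sq_nonneg ((n:ℝ)), sq_nonneg ((n:ℝ)+1), Nat.cast_nonneg (α := ℝ) n]

lemma cesA_le_pow (r : ℕ) (hr : 1 ≤ r) :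
    ∀ m n, cesA r m n ≤ (1/2:ℝ)^m * (n:ℝ)^3 / (r:ℝ)^3 := by
  have hr' : (1:ℝ) ≤ (r:ℝ) := by exact_mod_cast hr
  have hr3 : (0:ℝ) < (r:ℝ)^3 := by positivity
  intro m
  induction m with
  | zero =>
      intro n
      simp only [cesA, pow_zero, one_mul]
      split
      · rename_i h; subst h; rw [div_self hr3.ne']
      · positivity
  | succ m ih =>
      intro n
      rw [cesA]
      rcases Nat.eq_zero_or_pos n with hn | hn
      · subst hn
        simp only [Finset.range_one, Finset.sum_singleton]
        have h0 : cesA r m 0 ≤ 0 := by simpa using ih 0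
        have h2 : cesA r m 0 = 0 := le_antisymm h0 (cesA_nonneg r m 0)
        simp [Finset.sum_range_one, h2]
      · have hsumle : ∑ k ∈ Finset.range (n+1), cesA r m k
            ≤ (1/2:ℝ)^m / (r:ℝ)^3 * ((n:ℝ)^3 * (n+1) / 2) := by
          calc ∑ k ∈ Finset.range (n+1), cesA r m k
              ≤ ∑ k ∈ Finset.range (n+1), (1/2:ℝ)^m * (k:ℝ)^3 / (r:ℝ)^3 :=
                Finset.sum_le_sum fun k _ => ih k
            _ = (1/2:ℝ)^m / (r:ℝ)^3 * ∑ k ∈ Finset.range (n+1), (k:ℝ)^3 := by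
                rw [Finset.mul_sum]; congr 1; ext k; ring
            _ ≤ (1/2:ℝ)^m / (r:ℝ)^3 * ((n:ℝ)^3 * (n+1) / 2) := by
                apply mul_le_mul_of_nonneg_left (sum_cube_le n) (by positivity)
        have hn1 : (0:ℝ) < (n:ℝ)+1 := by positivity
        rw [div_le_iff₀ hn1]
        calc ∑ k ∈ Finset.range (n+1), cesA r m k
            ≤ (1/2:ℝ)^m / (r:ℝ)^3 * ((n:ℝ)^3 * (n+1) / 2) := hsumle
          _ = (1/2:ℝ)^(m+1) * (n:ℝ)^3 / (r:ℝ)^3 * ((n:ℝ)+1) := by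
              push_cast; ring

theorem iterates_on_basis_tend_to_zero (w : ℕ → ℝ)
    (hw : ∀ n, 0 < w n) (hwb : ∃ C, ∀ n, w n ≤ C)
    (hsum : Summable w) (hM : Mvw w w ≠ ⊤)
    (T : ellOne →L[ℂ] ellOne) (hT : IsCesaroOp w w T) :
    ∀ r : ℕ, 1 ≤ r →
      Tendsto (fun m : ℕ => (T ^ m) (lp.single 1 r (1 : ℂ))) atTop (nhds 0) := by
  intro r hr
  set e : ellOne := lp.single 1 r (1 : ℂ) with he
  -- entry formula
  have hEntry : ∀ m n, ((T ^ m) e : ∀ _ : ℕ, ℂ) n = ((w n / w r * cesA r m n : ℝ) : ℂ) := by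
    intro m
    induction m with
    | zero =>
        intro n
        rw [pow_zero, ContinuousLinearMap.one_apply]
        rw [he]
        by_cases h : n = r
        · rw [h, lp.single_apply_self]
          rw [div_self (hw r).ne']
          norm_num [cesA]
        · rw [lp.single_apply_ne _ _ _ h]
          simp [cesA, h]
    | succ m ih =>
        intro n
        have hTm : (T ^ (m+1)) e = T ((T ^ m) e) := by
          rw [pow_succ']; rfl
        rw [hTm, hT ((T ^ m) e) n]
        have hsum_eq : ∑ k ∈ Finset.range (n + 1), ((T ^ m) e : ∀ _ : ℕ, ℂ) k / ((w k : ℝ) : ℂ)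
            = (((∑ k ∈ Finset.range (n+1), cesA r m k) / w r : ℝ) : ℂ) := by
          rw [Complex.ofReal_div, Complex.ofReal_sum, Finset.sum_div]
          apply Finset.sum_congr rfl
          intro k _
          rw [ih k, ← Complex.ofReal_div, ← Complex.ofReal_div]
          congr 1
          have hk := (hw k).ne'
          have hrne := (hw r).ne'
          field_simp
        rw [hsum_eq]
        rw [← Complex.ofReal_mul]
        congr 1
        rw [cesA]
        field_simp
  -- norm formula
  have hNorm : ∀ m, ‖(T ^ m) e‖ = ∑' n, (w n / w r * cesA r m n) := by
    intro m
    rw [lp.norm_eq_tsum_rpow (by norm_num) ((T ^ m) e)]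
    simp only [ENNReal.toReal_one, Real.rpow_one, one_div_one]
    congr 1
    ext n
    rw [hEntry m n, Complex.norm_real]
    exact Real.norm_of_nonneg
      (mul_nonneg (le_of_lt (div_pos (hw n) (hw r))) (cesA_nonneg r m n))
  -- summability of entries
  have hS : ∀ m, Summable (fun n => w n / w r * cesA r m n) := by
    intro m
    apply Summable.of_nonneg_of_le
    · intro n; exact mul_nonneg (le_of_lt (div_pos (hw n) (hw r))) (cesA_nonneg r m n)
    · intro n
      calc w n / w r * cesA r m n ≤ w n / w r * 1 := by
            apply mul_le_mul_of_nonneg_left (cesA_le_one r m n)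
              (le_of_lt (div_pos (hw n) (hw r)))
        _ = w n / w r := mul_one _
    · exact hsum.div_const (w r)
  -- conclude
  rw [tendsto_zero_iff_norm_tendsto_zero]
  rw [Metric.tendsto_atTop]
  intro eps heps
  -- choose N with small tail
  have htail : Tendsto (fun N => ∑' k, w (k + N)) atTop (𝓝 0) := tendsto_sum_nat_add w
  have hδ : (0:ℝ) < eps * w r / 2 := div_pos (mul_pos heps (hw r)) two_pos
  obtain ⟨N, hN⟩ := (htail.eventually (gt_mem_nhds hδ)).exists
  -- the head constant
  set C : ℝ := ∑ i ∈ Finset.range N, w i / w r * ((i:ℝ)^3 / (r:ℝ)^3) with hC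
  have hCpos : 0 ≤ C := by
    apply Finset.sum_nonneg
    intro i _
    exact mul_nonneg (le_of_lt (div_pos (hw i) (hw r))) (by positivity)
  -- head tends to 0
  have hhead : Tendsto (fun m : ℕ => (1/2:ℝ)^m * C) atTop (𝓝 0) := by
    have := tendsto_pow_atTop_nhds_zero_of_lt_one (by norm_num : (0:ℝ) ≤ 1/2)
      (by norm_num : (1/2:ℝ) < 1)
    simpa using this.mul_const C
  obtain ⟨M, hM2⟩ := (Metric.tendsto_atTop.mp hhead) (eps/2) (by positivity)
  refine ⟨M, fun m hm => ?_⟩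
  rw [Real.dist_eq, sub_zero, abs_of_nonneg (norm_nonneg _), hNorm m]
  -- split the sum
  have hsplit := Summable.sum_add_tsum_nat_add N (hS m)
  rw [← hsplit]
  have hheadle : ∑ i ∈ Finset.range N, (w i / w r * cesA r m i) ≤ (1/2:ℝ)^m * C := by
    rw [hC, Finset.mul_sum]
    apply Finset.sum_le_sum
    intro i _
    have h1 : cesA r m i ≤ (1/2:ℝ)^m * (i:ℝ)^3 / (r:ℝ)^3 := cesA_le_pow r hr m i
    have h2 : (0:ℝ) ≤ w i / w r := le_of_lt (div_pos (hw i) (hw r))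
    calc w i / w r * cesA r m i ≤ w i / w r * ((1/2:ℝ)^m * (i:ℝ)^3 / (r:ℝ)^3) :=
          mul_le_mul_of_nonneg_left h1 h2
      _ = (1/2:ℝ)^m * (w i / w r * ((i:ℝ)^3 / (r:ℝ)^3)) := by ring
  have htailS : Summable (fun k => w (k + N) / w r * cesA r m (k + N)) :=
    (summable_nat_add_iff N).mpr (hS m)
  have htailS' : Summable (fun k => w (k + N) / w r) :=
    ((summable_nat_add_iff N).mpr hsum).div_const (w r)
  have htaille : (∑' k, w (k + N) / w r * cesA r m (k + N)) ≤ (∑' k, w (k + N)) / w r := by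
    calc (∑' k, w (k + N) / w r * cesA r m (k + N)) ≤ ∑' k, w (k + N) / w r := by
          apply Summable.tsum_le_tsum _ htailS htailS'
          intro k
          calc w (k + N) / w r * cesA r m (k + N) ≤ w (k + N) / w r * 1 :=
                mul_le_mul_of_nonneg_left (cesA_le_one r m (k + N))
                  (le_of_lt (div_pos (hw (k + N)) (hw r)))
            _ = w (k + N) / w r := mul_one _
      _ = (∑' k, w (k + N)) / w r := by rw [tsum_div_const]
  have htail2 : (∑' k, w (k + N)) / w r < eps / 2 := by
    rw [div_lt_iff₀ (hw r)]
    calc (∑' k, w (k + N)) < eps * w r / 2 := hN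
      _ = eps / 2 * w r := by ring
  have hhead2 : (1/2:ℝ)^m * C < eps / 2 := by
    have := hM2 m hm
    rw [Real.dist_eq, sub_zero] at this
    calc (1/2:ℝ)^m * C ≤ |(1/2:ℝ)^m * C| := le_abs_self _
      _ < eps / 2 := this
  calc (∑ i ∈ Finset.range N, (w i / w r * cesA r m i))
        + ∑' k, w (k + N) / w r * cesA r m (k + N)
      ≤ (1/2:ℝ)^m * C + (∑' k, w (k + N)) / w r := add_le_add hheadle htaille
    _ < eps / 2 + eps / 2 := add_lt_add_of_le_of_lt (le_of_lt hhead2) htail2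
    _ = eps := by ring

end
end
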